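/- arXiv:2601.05592 — 6 statements merged into one kernel-verified Lean document; each statement's English description precedes it below -/
import Mathlib

section
/- For all integers n > 4, b_{2,2}(n) ≥ b_{2,1}(n), where b_{2,k}(n) is the number of hooks of length k in all 2-regular partitions (partitions into odd parts) of n. -/
open Finset PowerSeries

/-- The list of hook lengths of the Young diagram of a partition whose row
lengths (in nonincreasing order) are given by the list `l`.  The box in row `i`,
column `j` (both 0-indexed) has hook length `(l_i - j) + #{i' > i : j < l_{i'}}`. -/
def hookCount (l : List ℕ) (k : ℕ) : ℕ :=
  ((Finset.range l.length ×ˢ Finset.range (l.getD 0 0)).filter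
    (fun p => p.2 < l.getD p.1 0 ∧
      (l.getD p.1 0 - p.2) +
        ((List.range l.length).filter (fun i' => p.1 < i' ∧ p.2 < l.getD i' 0)).length = k)).card

/-- `b t k n` : the total number of boxes with hook length `k` among the Young
diagrams of all `t`-regular partitions of `n`. -/
def b (t k n : ℕ) : ℕ :=
  ∑ p ∈ Finset.univ.filter (fun p : n.Partition => ∀ i ∈ p.parts, ¬ t ∣ i),
    hookCount ((p.parts.sort (· ≤ ·)).reverse) k

lemma length_filter_range_succ (N : ℕ) (p : ℕ → Bool) :
    ((List.range (N+1)).filter p).length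
      = (if p 0 then 1 else 0) + ((List.range N).filter (fun i => p (i+1))).length := by
  rw [List.range_succ_eq_map, List.filter_cons]
  have : (p ∘ Nat.succ) = fun i => p (i+1) := rfl
  rcases h : p 0 with _ | _ <;>
    simp [h, List.filter_map, this, Nat.add_comm]

lemma index_countP (t : List ℕ) (p : ℕ → Bool) :
    ((List.range t.length).filter (fun i => p (t.getD i 0))).length = t.countP p := by
  induction t with
  | nil => simp
  | cons a s ih =>
      rw [List.length_cons, length_filter_range_succ, List.countP_cons]
      simp only [List.getD_cons_zero, List.getD_cons_succ]
      rw [ih]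
      omega

lemma getD_le_of_forall {t : List ℕ} {a : ℕ} (ht : ∀ x ∈ t, x ≤ a) (i : ℕ) :
    t.getD i 0 ≤ a := by
  rcases Nat.lt_or_ge i t.length with h | h
  · rw [List.getD_eq_getElem _ _ h]; exact ht _ (List.getElem_mem h)
  · rw [List.getD_eq_default _ _ h]; exact Nat.zero_le _

lemma hookCount_cons (a : ℕ) (t : List ℕ) (k : ℕ)
    (ht : ∀ x ∈ t, x ≤ a) (hsort : t.Pairwise (· ≥ ·)) :
    hookCount (a :: t) k
      = ((Finset.range a).filter
          (fun j => a - j + t.countP (fun b => decide (j < b)) = k)).card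
        + hookCount t k := by
  have ht0 : ∀ x ∈ t, x ≤ t.getD 0 0 := by
    cases t with
    | nil => intro x hx; cases hx
    | cons b s =>
        intro x hx
        rw [List.getD_cons_zero]
        rcases List.mem_cons.1 hx with rfl | hx
        · exact le_refl _
        · exact List.rel_of_pairwise_cons hsort hx
  unfold hookCount
  rw [Finset.card_filter, Finset.card_filter, Finset.card_filter]
  rw [Finset.sum_product, Finset.sum_product]
  simp only [List.length_cons, List.getD_cons_zero]
  rw [Finset.sum_range_succ']
  have legs0 : ∀ j : ℕ,
      ((List.range (t.length+1)).filter (fun i' => decide (0 < i' ∧ j < (a :: t).getD i' 0))).length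
        = t.countP (fun b => decide (j < b)) := by
    intro j
    rw [length_filter_range_succ]
    have h1 : (fun i => decide (0 < i+1 ∧ j < (a :: t).getD (i+1) 0))
        = fun i => decide (j < t.getD i 0) := by
      funext i; simp [List.getD_cons_succ]
    have h2 : decide (0 < 0 ∧ j < (a :: t).getD 0 0) = false := by simp
    rw [h2, h1]
    simpa using index_countP t (fun b => decide (j < b))
  have legsS : ∀ (i j : ℕ),
      ((List.range (t.length+1)).filter (fun i' => decide (i+1 < i' ∧ j < (a :: t).getD i' 0))).length
        = ((List.range t.length).filter (fun i' => decide (i < i' ∧ j < t.getD i' 0))).length := by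
    intro i j
    rw [length_filter_range_succ]
    have h1 : (fun i' => decide (i+1 < i'+1 ∧ j < (a :: t).getD (i'+1) 0))
        = fun i' => decide (i < i' ∧ j < t.getD i' 0) := by
      funext i'; simp [List.getD_cons_succ, Nat.succ_lt_succ_iff]
    have h2 : decide (i+1 < 0 ∧ j < (a :: t).getD 0 0) = false := by simp
    rw [h2, h1]
    simp
  have row0 : (∑ j ∈ Finset.range a,
      if j < a ∧ (a - j) + ((List.range (t.length+1)).filter
        (fun i' => decide (0 < i' ∧ j < (a :: t).getD i' 0))).length = k then 1 else 0)
      = ∑ j ∈ Finset.range a,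
        if a - j + t.countP (fun b => decide (j < b)) = k then 1 else 0 := by
    apply Finset.sum_congr rfl
    intro j hj
    rw [legs0 j]
    have hja : j < a := Finset.mem_range.1 hj
    congr 1
    simp [hja]
  have hsub : Finset.range (t.getD 0 0) ⊆ Finset.range a := by
    apply Finset.range_subset_range.2
    exact getD_le_of_forall ht 0
  have eS : (∑ i ∈ Finset.range t.length, ∑ j ∈ Finset.range a,
        if j < (a :: t).getD (i + 1) 0 ∧
            (a :: t).getD (i + 1) 0 - j +
              ((List.range (t.length + 1)).filter
                (fun i' => decide (i + 1 < i' ∧ j < (a :: t).getD i' 0))).length = k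
          then 1 else 0)
      = ∑ i ∈ Finset.range t.length, ∑ j ∈ Finset.range (t.getD 0 0),
          if j < t.getD i 0 ∧
              t.getD i 0 - j +
                ((List.range t.length).filter
                  (fun i' => decide (i < i' ∧ j < t.getD i' 0))).length = k
            then 1 else 0 := by
    apply Finset.sum_congr rfl
    intro i _
    have step1 : (∑ j ∈ Finset.range a,
        if j < (a :: t).getD (i + 1) 0 ∧
            (a :: t).getD (i + 1) 0 - j +
              ((List.range (t.length + 1)).filter
                (fun i' => decide (i + 1 < i' ∧ j < (a :: t).getD i' 0))).length = k
          then 1 else 0)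
        = ∑ j ∈ Finset.range a,
          if j < t.getD i 0 ∧
              t.getD i 0 - j +
                ((List.range t.length).filter
                  (fun i' => decide (i < i' ∧ j < t.getD i' 0))).length = k
            then 1 else 0 := by
      apply Finset.sum_congr rfl
      intro j _
      rw [List.getD_cons_succ, legsS i j]
    rw [step1]
    symm
    apply Finset.sum_subset hsub
    intro j _ hj
    rw [if_neg]
    rintro ⟨hlt, -⟩
    have : t.getD i 0 ≤ t.getD 0 0 := getD_le_of_forall ht0 i
    have : j < t.getD 0 0 := lt_of_lt_of_le hlt this
    exact hj (Finset.mem_range.2 this)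
  rw [eS]
  have e0 : (∑ j ∈ Finset.range a,
      if j < (a :: t).getD 0 0 ∧
          (a :: t).getD 0 0 - j +
            ((List.range (t.length + 1)).filter
              (fun i' => decide (0 < i' ∧ j < (a :: t).getD i' 0))).length = k
        then 1 else 0)
      = ∑ j ∈ Finset.range a, if a - j + List.countP (fun b => decide (j < b)) t = k then 1 else 0 := by
    rw [← row0]
    simp only [List.getD_cons_zero]
  rw [e0]
  exact Nat.add_comm _ _
lemma countP_gt_eq_count (a : ℕ) (t : List ℕ) (ha : ¬ 2 ∣ a)
    (ht : ∀ x ∈ t, x ≤ a) (htodd : ∀ x ∈ t, ¬ 2 ∣ x) :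
    (t.countP (fun b => decide (a - 2 < b)) = t.count a)
    ∧ (t.countP (fun b => decide (a - 1 < b)) = t.count a) := by
  constructor
  · rw [show t.count a = t.countP (fun b => b == a) from rfl]
    apply List.countP_congr
    intro b hb
    have h1 := ht b hb
    have h2 := htodd b hb
    simp only [decide_eq_true_eq, beq_iff_eq]
    constructor <;> intro h <;> omega
  · rw [show t.count a = t.countP (fun b => b == a) from rfl]
    apply List.countP_congr
    intro b hb
    have h1 := ht b hb
    simp only [decide_eq_true_eq, beq_iff_eq]
    constructor <;> intro h <;> omega

lemma row1_card (a : ℕ) (t : List ℕ) (ha : ¬ 2 ∣ a)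
    (ht : ∀ x ∈ t, x ≤ a) (htodd : ∀ x ∈ t, ¬ 2 ∣ x) :
    ((Finset.range a).filter
        (fun j => a - j + t.countP (fun b => decide (j < b)) = 1)).card
      = if a ∈ t then 0 else 1 := by
  have cA := (countP_gt_eq_count a t ha ht htodd).2
  have ha1 : 1 ≤ a := by omega
  by_cases hmem : a ∈ t
  · rw [if_pos hmem]
    rw [Finset.card_eq_zero]
    apply Finset.filter_eq_empty_iff.2
    intro j hj
    have hja : j < a := Finset.mem_range.1 hj
    intro hcond
    have h1 : a - j = 1 ∧ t.countP (fun b => decide (j < b)) = 0 := by omega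
    have hj1 : j = a - 1 := by omega
    rw [hj1, cA] at h1
    have : t.count a ≠ 0 := by
      simp [List.count_eq_zero, hmem]
    omega
  · rw [if_neg hmem]
    have : (Finset.range a).filter
        (fun j => a - j + t.countP (fun b => decide (j < b)) = 1) = {a - 1} := by
      apply Finset.ext
      intro j
      simp only [Finset.mem_filter, Finset.mem_range, Finset.mem_singleton]
      constructor
      · rintro ⟨hja, hcond⟩
        omega
      · rintro rfl
        refine ⟨by omega, ?_⟩
        rw [cA, List.count_eq_zero.2 hmem]
        omega
    rw [this, Finset.card_singleton]

lemma row2_card (a : ℕ) (t : List ℕ) (ha : ¬ 2 ∣ a)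
    (ht : ∀ x ∈ t, x ≤ a) (htodd : ∀ x ∈ t, ¬ 2 ∣ x) :
    ((Finset.range a).filter
        (fun j => a - j + t.countP (fun b => decide (j < b)) = 2)).card
      = (if 3 ≤ a ∧ t.count a = 0 then 1 else 0) + (if t.count a = 1 then 1 else 0) := by
  have cA := (countP_gt_eq_count a t ha ht htodd).2
  have cB := (countP_gt_eq_count a t ha ht htodd).1
  have ha1 : 1 ≤ a := by omega
  have key : ∀ j < a, (a - j + t.countP (fun b => decide (j < b)) = 2
      ↔ ((j = a - 1 ∧ t.count a = 1) ∨ (j = a - 2 ∧ 2 ≤ a ∧ t.count a = 0))) := by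
    intro j hja
    constructor
    · intro hcond
      have h2 : a - j = 1 ∨ a - j = 2 := by omega
      rcases h2 with h2 | h2
      · left
        have hj1 : j = a - 1 := by omega
        subst hj1
        rw [cA] at hcond
        exact ⟨rfl, by omega⟩
      · right
        have hj2 : j = a - 2 := by omega
        subst hj2
        rw [cB] at hcond
        exact ⟨rfl, by omega, by omega⟩
    · rintro (⟨rfl, hc⟩ | ⟨rfl, h2a, hc⟩)
      · rw [cA, hc]; omega
      · rw [cB, hc]; omega
  by_cases hc1 : t.count a = 1
  · have : (Finset.range a).filter
        (fun j => a - j + t.countP (fun b => decide (j < b)) = 2) = {a - 1} := by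
      apply Finset.ext
      intro j
      simp only [Finset.mem_filter, Finset.mem_range, Finset.mem_singleton]
      constructor
      · rintro ⟨hja, hcond⟩
        rcases (key j hja).1 hcond with ⟨rfl, -⟩ | ⟨rfl, -, hc0⟩
        · rfl
        · omega
      · rintro rfl
        refine ⟨by omega, (key (a-1) (by omega)).2 (Or.inl ⟨rfl, hc1⟩)⟩
    rw [this]
    simp [hc1]
  · by_cases hc0 : t.count a = 0
    · by_cases h3a : 3 ≤ a
      · have : (Finset.range a).filter
            (fun j => a - j + t.countP (fun b => decide (j < b)) = 2) = {a - 2} := by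
          apply Finset.ext
          intro j
          simp only [Finset.mem_filter, Finset.mem_range, Finset.mem_singleton]
          constructor
          · rintro ⟨hja, hcond⟩
            rcases (key j hja).1 hcond with ⟨rfl, hc⟩ | ⟨rfl, -, -⟩
            · omega
            · rfl
          · rintro rfl
            refine ⟨by omega, (key (a-2) (by omega)).2 (Or.inr ⟨rfl, by omega, hc0⟩)⟩
        rw [this]
        simp [hc1, hc0, h3a]
      · have hA1 : a = 1 := by omega
        have : (Finset.range a).filter
            (fun j => a - j + t.countP (fun b => decide (j < b)) = 2) = ∅ := by
          apply Finset.filter_eq_empty_iff.2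
          intro j hj
          have hja : j < a := Finset.mem_range.1 hj
          intro hcond
          rcases (key j hja).1 hcond with ⟨-, hc⟩ | ⟨-, h2a, -⟩
          · omega
          · omega
        rw [this]
        subst hA1
        simp [hc1, hc0]
    · have : (Finset.range a).filter
          (fun j => a - j + t.countP (fun b => decide (j < b)) = 2) = ∅ := by
        apply Finset.filter_eq_empty_iff.2
        intro j hj
        have hja : j < a := Finset.mem_range.1 hj
        intro hcond
        rcases (key j hja).1 hcond with ⟨-, hc⟩ | ⟨-, -, hc⟩
        · omega
        · omega
      rw [this]
      simp [hc1, hc0]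
lemma hookCount_nil (k : ℕ) : hookCount [] k = 0 := by
  simp [hookCount]

-- multiplicity filter cons lemma
lemma memcount_cons_card (a : ℕ) (t : List ℕ) :
    ((a :: t).toFinset.filter (fun x => 2 ≤ (a :: t).count x)).card
      = (t.toFinset.filter (fun x => 2 ≤ t.count x)).card + (if t.count a = 1 then 1 else 0) := by
  have hchar : ((a :: t).toFinset.filter (fun x => 2 ≤ (a :: t).count x) : Finset ℕ)
      = (if 1 ≤ t.count a then insert a (t.toFinset.filter (fun x => 2 ≤ t.count x))
          else t.toFinset.filter (fun x => 2 ≤ t.count x)) := by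
    apply Finset.ext
    intro x
    rw [List.toFinset_cons]
    by_cases hx : x = a
    · subst hx
      have hcnt : (x :: t).count x = t.count x + 1 := by simp [List.count_cons]
      by_cases hc : 1 ≤ t.count x
      · rw [if_pos hc]
        have h2 : 2 ≤ t.count x + 1 := by omega
        simp [Finset.mem_filter, hcnt, h2]
      · rw [if_neg hc]
        have hc0 : t.count x = 0 := by omega
        have hnm : x ∉ t := by rw [← List.count_eq_zero]; omega
        simp [Finset.mem_filter, hcnt, hc0, hnm]
    · have hcnt : (a :: t).count x = t.count x := by
        rw [List.count_cons]
        have hax : ¬ a = x := fun h => hx h.symm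
        simp [hax]
      split_ifs with h
      · simp [Finset.mem_filter, Finset.mem_insert, hx, hcnt]
      · simp [Finset.mem_filter, Finset.mem_insert, hx, hcnt]
  rw [hchar]
  by_cases hc0 : t.count a = 0
  · rw [if_neg (by omega)]
    simp [hc0]
  · by_cases hc1 : t.count a = 1
    · rw [if_pos (by omega)]
      rw [Finset.card_insert_of_notMem]
      · simp [hc1]
      · intro hmem
        rw [Finset.mem_filter] at hmem
        omega
    · rw [if_pos (by omega)]
      rw [Finset.insert_eq_self.2]
      · simp [hc1]
      · rw [Finset.mem_filter, List.mem_toFinset]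
        exact ⟨List.count_pos_iff.1 (by omega), by omega⟩

lemma ge3_cons_card (a : ℕ) (t : List ℕ) :
    ((a :: t).toFinset.filter (fun x => 3 ≤ x)).card
      = (t.toFinset.filter (fun x => 3 ≤ x)).card + (if 3 ≤ a ∧ a ∉ t then 1 else 0) := by
  rw [List.toFinset_cons]
  by_cases hm : a ∈ t
  · rw [Finset.insert_eq_self.2 (List.mem_toFinset.2 hm)]
    simp [hm]
  · rw [Finset.filter_insert]
    by_cases h3 : 3 ≤ a
    · rw [if_pos h3, Finset.card_insert_of_notMem (by simp [hm]), if_pos ⟨h3, hm⟩]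
    · rw [if_neg h3, if_neg (by tauto)]
      simp

lemma hookCount_one_eq (l : List ℕ) (hs : l.Pairwise (· ≥ ·)) (hodd : ∀ x ∈ l, ¬ 2 ∣ x) :
    hookCount l 1 = l.toFinset.card := by
  induction l with
  | nil => simp [hookCount_nil]
  | cons a t ih =>
      have ht : ∀ x ∈ t, x ≤ a := fun x hx => List.rel_of_pairwise_cons hs hx
      have hsort : t.Pairwise (· ≥ ·) := hs.of_cons
      have ha : ¬ 2 ∣ a := hodd a List.mem_cons_self
      have htodd : ∀ x ∈ t, ¬ 2 ∣ x := fun x hx => hodd x (List.mem_cons_of_mem a hx)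
      rw [hookCount_cons a t 1 ht hsort, row1_card a t ha ht htodd, ih hsort htodd,
        List.toFinset_cons]
      by_cases hm : a ∈ t
      · rw [if_pos hm, Finset.insert_eq_self.2 (List.mem_toFinset.2 hm)]
        omega
      · rw [if_neg hm, Finset.card_insert_of_notMem (by simp [hm])]
        omega

lemma hookCount_two_eq (l : List ℕ) (hs : l.Pairwise (· ≥ ·)) (hodd : ∀ x ∈ l, ¬ 2 ∣ x) :
    hookCount l 2 = (l.toFinset.filter (fun x => 3 ≤ x)).card
      + (l.toFinset.filter (fun x => 2 ≤ l.count x)).card := by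
  induction l with
  | nil => simp [hookCount_nil]
  | cons a t ih =>
      have ht : ∀ x ∈ t, x ≤ a := fun x hx => List.rel_of_pairwise_cons hs hx
      have hsort : t.Pairwise (· ≥ ·) := hs.of_cons
      have ha : ¬ 2 ∣ a := hodd a List.mem_cons_self
      have htodd : ∀ x ∈ t, ¬ 2 ∣ x := fun x hx => hodd x (List.mem_cons_of_mem a hx)
      rw [hookCount_cons a t 2 ht hsort, row2_card a t ha ht htodd, ih hsort htodd,
        ge3_cons_card, memcount_cons_card]
      have : (a ∈ t ↔ ¬ t.count a = 0) := by
        rw [List.count_eq_zero]; tauto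
      by_cases hm : a ∈ t
      · have hc : ¬ t.count a = 0 := this.1 hm
        rw [if_neg (show ¬(3 ≤ a ∧ t.count a = 0) by tauto),
          if_neg (show ¬(3 ≤ a ∧ a ∉ t) by tauto)]
        omega
      · have hc : t.count a = 0 := by rw [List.count_eq_zero]; exact hm
        by_cases h3 : 3 ≤ a
        · rw [if_pos (show 3 ≤ a ∧ t.count a = 0 from ⟨h3, hc⟩),
            if_pos (show 3 ≤ a ∧ a ∉ t from ⟨h3, hm⟩)]
          omega
        · rw [if_neg (show ¬(3 ≤ a ∧ t.count a = 0) by tauto),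
            if_neg (show ¬(3 ≤ a ∧ a ∉ t) by tauto)]
          omega

def maxPart (m : Multiset ℕ) : ℕ := m.toFinset.sup id

def phiM (m : Multiset ℕ) : Multiset ℕ :=
  if maxPart m % 4 = 1 then
    (maxPart m + 1)/2 ::ₘ (maxPart m + 1)/2 ::ₘ ((m.erase 1).erase (maxPart m))
  else
    (maxPart m - 1)/2 ::ₘ (maxPart m - 1)/2 ::ₘ 1 ::ₘ 1 ::ₘ ((m.erase 1).erase (maxPart m))

lemma phiM_decomp (m : Multiset ℕ) (hodd : ∀ x ∈ m, ¬ 2 ∣ x)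
    (hc1 : m.count 1 = 1) (hng : ∀ a, 3 ≤ a → m.count a ≤ 1) (hsum5 : 5 ≤ m.sum) :
    ∃ u rest : _, 3 ≤ u ∧ ¬ 2 ∣ u ∧ (∀ x ∈ rest, ¬ 2 ∣ x) ∧ rest.count 1 = 0 ∧
      (∀ a, 3 ≤ a → rest.count a ≤ 1) ∧
      ((phiM m = u ::ₘ u ::ₘ rest ∧ m = 1 ::ₘ (2*u-1) ::ₘ rest)
        ∨ (phiM m = u ::ₘ u ::ₘ 1 ::ₘ 1 ::ₘ rest ∧ m = 1 ::ₘ (2*u+1) ::ₘ rest)) := by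
  set L := maxPart m with hL
  have h1m : 1 ∈ m := by
    rw [← Multiset.count_pos, hc1]; omega
  have hne : m.toFinset.Nonempty := ⟨1, Multiset.mem_toFinset.2 h1m⟩
  obtain ⟨b, hbmem, hbeq⟩ := Finset.exists_mem_eq_sup m.toFinset hne id
  have hLm : L ∈ m := by
    rw [hL, maxPart, hbeq]; exact Multiset.mem_toFinset.1 hbmem
  have hmax : ∀ x ∈ m, x ≤ L := by
    intro x hx
    exact Finset.le_sup (f := id) (Multiset.mem_toFinset.2 hx)
  have hLodd : ¬ 2 ∣ L := hodd L hLm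
  -- L ≥ 5
  have hL5 : 5 ≤ L := by
    by_contra hlt
    have hle : m ≤ (1 ::ₘ 3 ::ₘ 0) := by
      rw [Multiset.le_iff_count]
      intro a
      by_cases ham : a ∈ m
      · have h1 := hmax a ham
        have h2 := hodd a ham
        have : a = 1 ∨ a = 3 := by omega
        rcases this with rfl | rfl
        · simp [hc1]
        · have := hng 3 (by omega)
          simp
          omega
      · have : m.count a = 0 := Multiset.count_eq_zero.2 ham
        omega
    obtain ⟨u, hu⟩ := Multiset.le_iff_exists_add.1 hle
    have : m.sum ≤ 4 := by
      by_contra h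
      have h4 : (1 ::ₘ 3 ::ₘ (0:Multiset ℕ)).sum = 4 := by simp
      have := congrArg Multiset.sum hu
      rw [Multiset.sum_add, h4] at this
      omega
    omega
  have hLne1 : L ≠ 1 := by omega
  have hL1 : L ∈ m.erase 1 := by
    rw [← Multiset.count_pos, Multiset.count_erase_of_ne hLne1]
    exact Multiset.count_pos.2 hLm
  set rest := (m.erase 1).erase L with hrest
  have hm1 : m = 1 ::ₘ L ::ₘ rest := by
    rw [hrest, Multiset.cons_erase hL1, Multiset.cons_erase h1m]
  have hrle : rest ≤ m := le_trans (Multiset.erase_le _ _) (Multiset.erase_le _ _)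
  have hrodd : ∀ x ∈ rest, ¬ 2 ∣ x := fun x hx => hodd x (Multiset.mem_of_le hrle hx)
  have hrc1 : rest.count 1 = 0 := by
    rw [hrest, Multiset.count_erase_of_ne (show (1:ℕ) ≠ L from fun h => hLne1 h.symm), Multiset.count_erase_self, hc1]
  have hrng : ∀ a, 3 ≤ a → rest.count a ≤ 1 := by
    intro a ha
    exact le_trans (Multiset.count_le_of_le a hrle) (hng a ha)
  have hL4 : L % 4 = 1 ∨ L % 4 = 3 := by omega
  rcases hL4 with h4 | h4
  · refine ⟨(L+1)/2, rest, by omega, by omega, hrodd, hrc1, hrng, Or.inl ⟨?_, ?_⟩⟩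
    · rw [phiM, if_pos (by rw [← hL]; exact h4)]
    · rw [hm1]
      congr 1
      congr 1
      omega
  · refine ⟨(L-1)/2, rest, by omega, by omega, hrodd, hrc1, hrng, Or.inr ⟨?_, ?_⟩⟩
    · rw [phiM, if_neg (by rw [← hL]; omega)]
    · rw [hm1]
      congr 1
      congr 1
      omega

lemma phiM_props (m : Multiset ℕ) (hodd : ∀ x ∈ m, ¬ 2 ∣ x)
    (hc1 : m.count 1 = 1) (hng : ∀ a, 3 ≤ a → m.count a ≤ 1) (hsum5 : 5 ≤ m.sum) :
    (phiM m).sum = m.sum ∧ (∀ x ∈ phiM m, ¬ 2 ∣ x) ∧ (phiM m).count 1 ≠ 1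
      ∧ ∃ u, 3 ≤ u ∧ 2 ≤ (phiM m).count u := by
  obtain ⟨u, rest, hu3, huo, hro, hrc1, hrng, hcase⟩ := phiM_decomp m hodd hc1 hng hsum5
  have hu1 : (1:ℕ) ≠ u := by omega
  rcases hcase with ⟨he, hm⟩ | ⟨he, hm⟩
  · refine ⟨?_, ?_, ?_, u, hu3, ?_⟩
    · rw [he, hm]
      simp only [Multiset.sum_cons]
      omega
    · intro x hx
      rw [he] at hx
      rcases Multiset.mem_cons.1 hx with rfl | hx
      · exact huo
      · rcases Multiset.mem_cons.1 hx with rfl | hx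
        · exact huo
        · exact hro x hx
    · rw [he, Multiset.count_cons_of_ne hu1, Multiset.count_cons_of_ne hu1, hrc1]
      omega
    · rw [he, Multiset.count_cons_self, Multiset.count_cons_self]
      omega
  · refine ⟨?_, ?_, ?_, u, hu3, ?_⟩
    · rw [he, hm]
      simp only [Multiset.sum_cons]
      omega
    · intro x hx
      rw [he] at hx
      rcases Multiset.mem_cons.1 hx with rfl | hx
      · exact huo
      rcases Multiset.mem_cons.1 hx with rfl | hx
      · exact huo
      rcases Multiset.mem_cons.1 hx with rfl | hx
      · omega
      rcases Multiset.mem_cons.1 hx with rfl | hx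
      · omega
      · exact hro x hx
    · rw [he, Multiset.count_cons_of_ne hu1, Multiset.count_cons_of_ne hu1,
        Multiset.count_cons_self, Multiset.count_cons_self, hrc1]
      omega
    · rw [he, Multiset.count_cons_self, Multiset.count_cons_self]
      omega

lemma phiM_inj (m1 m2 : Multiset ℕ)
    (hodd1 : ∀ x ∈ m1, ¬ 2 ∣ x) (hc11 : m1.count 1 = 1)
    (hng1 : ∀ a, 3 ≤ a → m1.count a ≤ 1) (hsum1 : 5 ≤ m1.sum)
    (hodd2 : ∀ x ∈ m2, ¬ 2 ∣ x) (hc12 : m2.count 1 = 1)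
    (hng2 : ∀ a, 3 ≤ a → m2.count a ≤ 1) (hsum2 : 5 ≤ m2.sum)
    (heq : phiM m1 = phiM m2) : m1 = m2 := by
  obtain ⟨u1, r1, hu31, huo1, hro1, hrc11', hrng1, hcase1⟩ := phiM_decomp m1 hodd1 hc11 hng1 hsum1
  obtain ⟨u2, r2, hu32, huo2, hro2, hrc12', hrng2, hcase2⟩ := phiM_decomp m2 hodd2 hc12 hng2 hsum2
  have h1u1 : (1:ℕ) ≠ u1 := by omega
  have h1u2 : (1:ℕ) ≠ u2 := by omega
  rcases hcase1 with ⟨he1, hm1⟩ | ⟨he1, hm1⟩ <;> rcases hcase2 with ⟨he2, hm2⟩ | ⟨he2, hm2⟩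
  · -- both case 1
    rw [he1, he2] at heq
    have hu : u2 = u1 := by
      by_contra hne
      have h2 : 2 ≤ (u2 ::ₘ u2 ::ₘ r2).count u2 := by
        rw [Multiset.count_cons_self, Multiset.count_cons_self]; omega
      rw [← heq, Multiset.count_cons_of_ne hne, Multiset.count_cons_of_ne hne] at h2
      have := hrng1 u2 hu32
      omega
    subst hu
    rw [Multiset.cons_inj_right, Multiset.cons_inj_right] at heq
    rw [hm1, hm2, heq]
  · -- case 1 vs case 2 : contradiction via count 1
    rw [he1, he2] at heq
    have hA : (u1 ::ₘ u1 ::ₘ r1).count 1 = 0 := by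
      rw [Multiset.count_cons_of_ne h1u1, Multiset.count_cons_of_ne h1u1, hrc11']
    have hB : 2 ≤ (u2 ::ₘ u2 ::ₘ 1 ::ₘ 1 ::ₘ r2).count 1 := by
      rw [Multiset.count_cons_of_ne h1u2, Multiset.count_cons_of_ne h1u2,
        Multiset.count_cons_self, Multiset.count_cons_self]
      omega
    rw [← heq] at hB
    omega
  · rw [he1, he2] at heq
    have hA : (u2 ::ₘ u2 ::ₘ r2).count 1 = 0 := by
      rw [Multiset.count_cons_of_ne h1u2, Multiset.count_cons_of_ne h1u2, hrc12']
    have hB : 2 ≤ (u1 ::ₘ u1 ::ₘ 1 ::ₘ 1 ::ₘ r1).count 1 := by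
      rw [Multiset.count_cons_of_ne h1u1, Multiset.count_cons_of_ne h1u1,
        Multiset.count_cons_self, Multiset.count_cons_self]
      omega
    rw [heq] at hB
    omega
  · -- both case 2
    rw [he1, he2] at heq
    have hu : u2 = u1 := by
      by_contra hne
      have h2 : 2 ≤ (u2 ::ₘ u2 ::ₘ 1 ::ₘ 1 ::ₘ r2).count u2 := by
        rw [Multiset.count_cons_self, Multiset.count_cons_self]; omega
      rw [← heq, Multiset.count_cons_of_ne hne, Multiset.count_cons_of_ne hne,
        Multiset.count_cons_of_ne (by omega), Multiset.count_cons_of_ne (by omega)] at h2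
      have := hrng1 u2 hu32
      omega
    subst hu
    rw [Multiset.cons_inj_right, Multiset.cons_inj_right, Multiset.cons_inj_right,
      Multiset.cons_inj_right] at heq
    rw [hm1, hm2, heq]

lemma sorted_rev_sort (m : Multiset ℕ) :
    ((m.sort (· ≤ ·)).reverse).Pairwise (· ≥ ·) := by
  rw [List.pairwise_reverse]
  exact (Multiset.pairwise_sort m (· ≤ ·)).imp (fun h => h)

lemma mem_rev_sort (m : Multiset ℕ) (x : ℕ) :
    x ∈ (m.sort (· ≤ ·)).reverse ↔ x ∈ m := by
  rw [List.mem_reverse, Multiset.mem_sort]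

lemma toFinset_rev_sort (m : Multiset ℕ) :
    ((m.sort (· ≤ ·)).reverse).toFinset = m.toFinset := by
  apply Finset.ext
  intro x
  rw [List.mem_toFinset, Multiset.mem_toFinset, mem_rev_sort]

lemma count_rev_sort (m : Multiset ℕ) (x : ℕ) :
    ((m.sort (· ≤ ·)).reverse).count x = m.count x := by
  rw [← Multiset.coe_count, Multiset.coe_reverse, Multiset.sort_eq]

lemma parts_hook_one (m : Multiset ℕ) (hodd : ∀ x ∈ m, ¬ 2 ∣ x) :
    hookCount ((m.sort (· ≤ ·)).reverse) 1 = m.toFinset.card := by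
  rw [hookCount_one_eq _ (sorted_rev_sort m)
    (fun x hx => hodd x ((mem_rev_sort m x).1 hx)), toFinset_rev_sort]

lemma parts_hook_two (m : Multiset ℕ) (hodd : ∀ x ∈ m, ¬ 2 ∣ x) :
    hookCount ((m.sort (· ≤ ·)).reverse) 2
      = (m.toFinset.filter (fun x => 3 ≤ x)).card
        + (m.toFinset.filter (fun x => 2 ≤ m.count x)).card := by
  rw [hookCount_two_eq _ (sorted_rev_sort m)
    (fun x hx => hodd x ((mem_rev_sort m x).1 hx)), toFinset_rev_sort]
  congr 1
  exact congrArg Finset.card (Finset.filter_congr (fun x _ => by rw [count_rev_sort]))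

open Classical in
noncomputable def PhiP (n : ℕ) (p : n.Partition) : n.Partition :=
  if h : (phiM p.parts).sum = n ∧ ∀ x ∈ phiM p.parts, 0 < x then
    { parts := phiM p.parts
      parts_pos := fun {i} hi => h.2 i hi
      parts_sum := h.1 }
  else p

theorem stmt2 : ∀ n : ℕ, 4 < n → b 2 1 n ≤ b 2 2 n := by
  intro n hn
  classical
  simp only [b]
  set S := Finset.univ.filter (fun p : n.Partition => ∀ i ∈ p.parts, ¬ 2 ∣ i) with hS
  have hoddS : ∀ p ∈ S, ∀ x ∈ p.parts, ¬ 2 ∣ x := by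
    intro p hp
    exact (Finset.mem_filter.1 hp).2
  have hb1 : ∑ p ∈ S, hookCount ((p.parts.sort (· ≤ ·)).reverse) 1
      = ∑ p ∈ S, ((p.parts.toFinset.filter (fun x => 3 ≤ x)).card
          + (if p.parts.count 1 = 0 then 0 else 1)) := by
    apply Finset.sum_congr rfl
    intro p hp
    rw [parts_hook_one _ (hoddS p hp)]
    rw [← Finset.card_filter_add_card_filter_not (p := fun x => 3 ≤ x)]
    congr 1
    by_cases h1 : p.parts.count 1 = 0
    · rw [if_pos h1]
      rw [Finset.card_eq_zero, Finset.filter_eq_empty_iff]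
      intro x hx h3
      have hxm : x ∈ p.parts := Multiset.mem_toFinset.1 hx
      have := hoddS p hp x hxm
      have hx1 : x = 1 := by omega
      subst hx1
      rw [Multiset.count_eq_zero] at h1
      exact h1 hxm
    · rw [if_neg h1]
      have h1m : (1 : ℕ) ∈ p.parts := by
        rw [← Multiset.count_pos]
        omega
      have : p.parts.toFinset.filter (fun x => ¬ 3 ≤ x) = {1} := by
        apply Finset.ext
        intro x
        simp only [Finset.mem_filter, Multiset.mem_toFinset, Finset.mem_singleton]
        constructor
        · rintro ⟨hxm, h3⟩
          have := hoddS p hp x hxm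
          omega
        · rintro rfl
          exact ⟨h1m, by omega⟩
      rw [this, Finset.card_singleton]
  have hb2 : ∑ p ∈ S, hookCount ((p.parts.sort (· ≤ ·)).reverse) 2
      = ∑ p ∈ S, ((p.parts.toFinset.filter (fun x => 3 ≤ x)).card
          + ((p.parts.toFinset.filter (fun x => 3 ≤ x ∧ 2 ≤ p.parts.count x)).card
            + (if 2 ≤ p.parts.count 1 then 1 else 0))) := by
    apply Finset.sum_congr rfl
    intro p hp
    rw [parts_hook_two _ (hoddS p hp)]
    congr 1
    rw [← Finset.card_filter_add_card_filter_not
      (s := p.parts.toFinset.filter (fun x => 2 ≤ p.parts.count x)) (p := fun x => 3 ≤ x)]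
    rw [Finset.filter_filter, Finset.filter_filter]
    congr 1
    · exact congrArg Finset.card (Finset.filter_congr (fun x _ => and_comm))
    · by_cases h2 : 2 ≤ p.parts.count 1
      · rw [if_pos h2]
        have h1m : (1 : ℕ) ∈ p.parts := by
          rw [← Multiset.count_pos]; omega
        have : p.parts.toFinset.filter (fun x => 2 ≤ p.parts.count x ∧ ¬ 3 ≤ x) = {1} := by
          apply Finset.ext
          intro x
          simp only [Finset.mem_filter, Multiset.mem_toFinset, Finset.mem_singleton]
          constructor
          · rintro ⟨hxm, -, h3⟩
            have := hoddS p hp x hxm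
            omega
          · rintro rfl
            exact ⟨h1m, h2, by omega⟩
        rw [this, Finset.card_singleton]
      · rw [if_neg h2]
        rw [Finset.card_eq_zero, Finset.filter_eq_empty_iff]
        rintro x hx ⟨hc, h3⟩
        have hxm : x ∈ p.parts := Multiset.mem_toFinset.1 hx
        have := hoddS p hp x hxm
        have hx1 : x = 1 := by omega
        subst hx1
        omega
  rw [hb1, hb2]
  -- reduce to the key counting inequality
  have key : ∑ p ∈ S, (if p.parts.count 1 = 1 then 1 else 0)
      ≤ ∑ p ∈ S, (p.parts.toFinset.filter (fun x => 3 ≤ x ∧ 2 ≤ p.parts.count x)).card := by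
    set gcard : n.Partition → ℕ :=
      fun p => (p.parts.toFinset.filter (fun x => 3 ≤ x ∧ 2 ≤ p.parts.count x)).card with hgcard
    set T := S.filter (fun p => p.parts.count 1 = 1) with hT
    have hLHS : ∑ p ∈ S, (if p.parts.count 1 = 1 then 1 else 0) = T.card := by
      rw [hT, Finset.card_filter]
    rw [hLHS]
    set A := T.filter (fun p => 0 < gcard p) with hA
    set D := T.filter (fun p => ¬ 0 < gcard p) with hD
    have hTcard : T.card = A.card + D.card :=
      (Finset.card_filter_add_card_filter_not (p := fun p => 0 < gcard p)).symm
    -- properties of elements of D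
    have hDprops : ∀ p ∈ D, (∀ x ∈ p.parts, ¬ 2 ∣ x) ∧ p.parts.count 1 = 1
        ∧ (∀ a, 3 ≤ a → p.parts.count a ≤ 1) ∧ 5 ≤ p.parts.sum := by
      intro p hp
      have hpT : p ∈ T := (Finset.mem_filter.1 hp).1
      have hpS : p ∈ S := (Finset.mem_filter.1 hpT).1
      have hg : ¬ 0 < gcard p := (Finset.mem_filter.1 hp).2
      refine ⟨hoddS p hpS, (Finset.mem_filter.1 hpT).2, ?_, ?_⟩
      · intro a ha
        by_contra hcnt
        apply hg
        rw [hgcard, Finset.card_pos]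
        refine ⟨a, Finset.mem_filter.2 ⟨Multiset.mem_toFinset.2 ?_, ha, by omega⟩⟩
        rw [← Multiset.count_pos]
        omega
      · rw [p.parts_sum]
        omega
    have hPhiParts : ∀ p ∈ D, (PhiP n p).parts = phiM p.parts := by
      intro p hp
      obtain ⟨ho, hc1, hng, hs5⟩ := hDprops p hp
      obtain ⟨hsum, hodd', -, -⟩ := phiM_props p.parts ho hc1 hng hs5
      have hcond : (phiM p.parts).sum = n ∧ ∀ x ∈ phiM p.parts, 0 < x := by
        constructor
        · rw [hsum, p.parts_sum]
        · intro x hx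
          have := hodd' x hx
          omega
      rw [PhiP, dif_pos hcond]
    have hImg : ∀ p ∈ D, (PhiP n p) ∈ S ∧ (PhiP n p).parts.count 1 ≠ 1
        ∧ 0 < gcard (PhiP n p) := by
      intro p hp
      obtain ⟨ho, hc1, hng, hs5⟩ := hDprops p hp
      obtain ⟨hsum, hodd', hcnt1, u, hu3, hucnt⟩ := phiM_props p.parts ho hc1 hng hs5
      have hparts := hPhiParts p hp
      refine ⟨?_, ?_, ?_⟩
      · rw [hS]
        refine Finset.mem_filter.2 ⟨Finset.mem_univ _, ?_⟩
        rw [hparts]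
        exact hodd'
      · rw [hparts]
        exact hcnt1
      · rw [hgcard, Finset.card_pos]
        refine ⟨u, Finset.mem_filter.2 ⟨Multiset.mem_toFinset.2 ?_, ?_, ?_⟩⟩
        · rw [hparts, ← Multiset.count_pos]
          omega
        · exact hu3
        · rw [hparts]
          exact hucnt
    have hInj : Set.InjOn (PhiP n) D := by
      intro p hp q hq hpq
      obtain ⟨ho1, hc11, hng1, hs51⟩ := hDprops p hp
      obtain ⟨ho2, hc12, hng2, hs52⟩ := hDprops q hq
      have h1 := hPhiParts p hp
      have h2 := hPhiParts q hq
      apply Nat.Partition.ext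
      apply phiM_inj p.parts q.parts ho1 hc11 hng1 hs51 ho2 hc12 hng2 hs52
      rw [← h1, ← h2, hpq]
    have hcardImg : (D.image (PhiP n)).card = D.card :=
      Finset.card_image_of_injOn hInj
    have hdisj : Disjoint A (D.image (PhiP n)) := by
      rw [Finset.disjoint_left]
      intro q hqA hqI
      obtain ⟨p, hp, rfl⟩ := Finset.mem_image.1 hqI
      have h1 : (PhiP n p).parts.count 1 = 1 :=
        (Finset.mem_filter.1 (Finset.mem_filter.1 hqA).1).2
      exact (hImg p hp).2.1 h1
    have hsub : A ∪ D.image (PhiP n) ⊆ S := by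
      intro q hq
      rcases Finset.mem_union.1 hq with hq | hq
      · exact (Finset.mem_filter.1 (Finset.mem_filter.1 hq).1).1
      · obtain ⟨p, hp, rfl⟩ := Finset.mem_image.1 hq
        exact (hImg p hp).1
    calc T.card = A.card + D.card := hTcard
      _ = A.card + (D.image (PhiP n)).card := by rw [hcardImg]
      _ = (A ∪ D.image (PhiP n)).card := (Finset.card_union_of_disjoint hdisj).symm
      _ = ∑ _q ∈ A ∪ D.image (PhiP n), 1 := Finset.card_eq_sum_ones _
      _ ≤ ∑ q ∈ A ∪ D.image (PhiP n), gcard q := by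
          apply Finset.sum_le_sum
          intro q hq
          rcases Finset.mem_union.1 hq with hq | hq
          · have := (Finset.mem_filter.1 hq).2
            omega
          · obtain ⟨p, hp, rfl⟩ := Finset.mem_image.1 hq
            have := (hImg p hp).2.2
            omega
      _ ≤ ∑ p ∈ S, gcard p := Finset.sum_le_sum_of_subset hsub
  have pointwise : ∀ p : n.Partition,
      (if p.parts.count 1 = 0 then 0 else 1)
        ≤ (if 2 ≤ p.parts.count 1 then 1 else 0) + (if p.parts.count 1 = 1 then 1 else 0) := by
    intro p
    split_ifs <;> omega
  calc ∑ p ∈ S, ((p.parts.toFinset.filter (fun x => 3 ≤ x)).card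
          + (if p.parts.count 1 = 0 then 0 else 1))
      ≤ ∑ p ∈ S, (((p.parts.toFinset.filter (fun x => 3 ≤ x)).card
          + (if 2 ≤ p.parts.count 1 then 1 else 0))
          + (if p.parts.count 1 = 1 then 1 else 0)) := by
        apply Finset.sum_le_sum
        intro p hp
        have := pointwise p
        omega
    _ = ∑ p ∈ S, ((p.parts.toFinset.filter (fun x => 3 ≤ x)).card
          + (if 2 ≤ p.parts.count 1 then 1 else 0))
        + ∑ p ∈ S, (if p.parts.count 1 = 1 then 1 else 0) := Finset.sum_add_distrib
    _ ≤ ∑ p ∈ S, ((p.parts.toFinset.filter (fun x => 3 ≤ x)).card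
          + (if 2 ≤ p.parts.count 1 then 1 else 0))
        + ∑ p ∈ S, (p.parts.toFinset.filter (fun x => 3 ≤ x ∧ 2 ≤ p.parts.count x)).card :=
        Nat.add_le_add_left key _
    _ = ∑ p ∈ S, ((p.parts.toFinset.filter (fun x => 3 ≤ x)).card
          + ((p.parts.toFinset.filter (fun x => 3 ≤ x ∧ 2 ≤ p.parts.count x)).card
            + (if 2 ≤ p.parts.count 1 then 1 else 0))) := by
        rw [← Finset.sum_add_distrib]
        apply Finset.sum_congr rfl
        intro p hp
        omega
end

section
/- For all integers n > 4, b_{2,2}(n) − b_{2,1}(n) = (∑_{i=0}^{n−5} d_3(i)) − d_3(n−1), where d_3(m) is the number of partitions of m into distinct parts each of size at least 3 (with d_3(0) = 1). -/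
open Finset PowerSeries

/-- `d3 m` : the number of partitions of `m` into distinct parts, all of size at least `3`.
In particular `d3 0 = 1` (the empty partition). -/
def d3 (m : ℕ) : ℕ :=
  (Finset.univ.filter (fun p : m.Partition => p.parts.Nodup ∧ ∀ i ∈ p.parts, 3 ≤ i)).card

open PowerSeries

namespace Theorems100

noncomputable section

variable {α : Type*}

open Finset

open scoped Classical

/-- The partial product for the generating function for odd partitions.
TODO: As `m` tends to infinity, this converges (in the `X`-adic topology).

If `m` is sufficiently large, the `i`th coefficient gives the number of odd partitions of the
natural number `i`: proved in `oddGF_prop`.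
It is stated for an arbitrary field `α`, though it usually suffices to use `ℚ` or `ℝ`.
-/
def partialOddGF (m : ℕ) [Field α] :=
  ∏ i ∈ range m, (1 - (X : PowerSeries α) ^ (2 * i + 1))⁻¹

/-- The partial product for the generating function for distinct partitions.
TODO: As `m` tends to infinity, this converges (in the `X`-adic topology).

If `m` is sufficiently large, the `i`th coefficient gives the number of distinct partitions of the
natural number `i`: proved in `distinctGF_prop`.
It is stated for an arbitrary commutative semiring `α`, though it usually suffices to use `ℕ`, `ℚ`
or `ℝ`.
-/
def partialDistinctGF (m : ℕ) [CommSemiring α] :=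
  ∏ i ∈ range m, (1 + (X : PowerSeries α) ^ (i + 1))

open Finset.HasAntidiagonal

universe u
variable {ι : Type u}

/-- A convenience constructor for the power series whose coefficients indicate a subset. -/
def indicatorSeries (α : Type*) [Semiring α] (s : Set ℕ) : PowerSeries α :=
  PowerSeries.mk fun n => if n ∈ s then 1 else 0

theorem coeff_indicator (s : Set ℕ) [Semiring α] (n : ℕ) :
    coeff n (indicatorSeries α s) = if n ∈ s then 1 else 0 :=
  coeff_mk _ _

theorem coeff_indicator_pos (s : Set ℕ) [Semiring α] (n : ℕ) (h : n ∈ s) :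
    coeff n (indicatorSeries α s) = 1 := by rw [coeff_indicator, if_pos h]

theorem coeff_indicator_neg (s : Set ℕ) [Semiring α] (n : ℕ) (h : n ∉ s) :
    coeff n (indicatorSeries α s) = 0 := by rw [coeff_indicator, if_neg h]

theorem constantCoeff_indicator (s : Set ℕ) [Semiring α] :
    constantCoeff (indicatorSeries α s) = if 0 ∈ s then 1 else 0 :=
  rfl

theorem two_series (i : ℕ) [Semiring α] :
    1 + (X : PowerSeries α) ^ i.succ = indicatorSeries α {0, i.succ} := by
  ext n
  simp only [coeff_indicator, coeff_one, coeff_X_pow, Set.mem_insert_iff, Set.mem_singleton_iff,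
    map_add]
  cases' n with d
  · simp [(Nat.succ_ne_zero i).symm]
  · simp [Nat.succ_ne_zero d]

theorem num_series' [Field α] (i : ℕ) :
    (1 - (X : PowerSeries α) ^ (i + 1))⁻¹ = indicatorSeries α {k | i + 1 ∣ k} := by
  rw [PowerSeries.inv_eq_iff_mul_eq_one]
  · ext n
    cases n with
    | zero => simp [mul_sub, zero_pow, constantCoeff_indicator]
    | succ n =>
      simp only [coeff_one, if_false, mul_sub, mul_one, coeff_indicator,
        LinearMap.map_sub, reduceCtorEq]
      simp_rw [coeff_mul, coeff_X_pow, coeff_indicator, @boole_mul _ _ _ _]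
      erw [@sum_ite _ _ _ _ _ (fun _ => Classical.propDecidable _), sum_ite]
      simp_rw [@filter_filter _ _ _ _ _, sum_const_zero, add_zero, sum_const, nsmul_eq_mul, mul_one,
        sub_eq_iff_eq_add, zero_add]
      symm
      split_ifs with h
      · suffices #{a ∈ antidiagonal (n + 1) | i + 1 ∣ a.fst ∧ a.snd = i + 1} = 1 by
          simp only [Set.mem_setOf_eq]; convert congr_arg ((↑) : ℕ → α) this; norm_cast
        rw [card_eq_one]
        cases' h with p hp
        refine ⟨((i + 1) * (p - 1), i + 1), ?_⟩
        ext ⟨a₁, a₂⟩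
        simp only [mem_filter, Prod.mk_inj, HasAntidiagonal.mem_antidiagonal, mem_singleton]
        constructor
        · rintro ⟨a_left, ⟨a, rfl⟩, rfl⟩
          refine ⟨?_, rfl⟩
          rw [Nat.mul_sub_left_distrib, ← hp, ← a_left, mul_one, Nat.add_sub_cancel]
        · rintro ⟨rfl, rfl⟩
          match p with
          | 0 => rw [mul_zero] at hp; cases hp
          | p + 1 => rw [hp]; simp [mul_add]
      · suffices #{a ∈ antidiagonal (n + 1) | i + 1 ∣ a.fst ∧ a.snd = i + 1} = 0 by
          simp only [Set.mem_setOf_eq]; convert congr_arg ((↑) : ℕ → α) this; norm_cast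
        rw [card_eq_zero]
        apply eq_empty_of_forall_notMem
        simp only [Prod.forall, mem_filter, not_and, HasAntidiagonal.mem_antidiagonal]
        rintro _ h₁ h₂ ⟨a, rfl⟩ rfl
        apply h
        simp [← h₂]
  · simp [zero_pow]

def mkOdd : ℕ ↪ ℕ :=
  ⟨fun i => 2 * i + 1, fun x y h => by linarith⟩

-- The main workhorse of the partition theorem proof.
theorem partialGF_prop (α : Type*) [CommSemiring α] (n : ℕ) (s : Finset ℕ) (hs : ∀ i ∈ s, 0 < i)
    (c : ℕ → Set ℕ) (hc : ∀ i, i ∉ s → 0 ∈ c i) :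
    #{p : n.Partition | (∀ j, p.parts.count j ∈ c j) ∧ ∀ j ∈ p.parts, j ∈ s} =
      coeff (R := α) n (∏ i ∈ s, indicatorSeries α ((· * i) '' c i)) := by
  simp_rw [coeff_prod, coeff_indicator, prod_boole, sum_boole]
  apply congr_arg
  simp only [mem_univ, forall_true_left, not_and, not_forall, exists_prop,
    Set.mem_image, not_exists]
  set φ : (a : Nat.Partition n) →
    a ∈ filter (fun p ↦ (∀ (j : ℕ), Multiset.count j p.parts ∈ c j) ∧ ∀ j ∈ p.parts, j ∈ s) univ →
    ℕ →₀ ℕ := fun p _ => {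
      toFun := fun i => Multiset.count i p.parts • i
      support := Finset.filter (fun i => i ≠ 0) p.parts.toFinset
      mem_support_toFun := fun a => by
        simp only [smul_eq_mul, ne_eq, mul_eq_zero, Multiset.count_eq_zero]
        rw [not_or, not_not]
        simp only [Multiset.mem_toFinset, not_not, mem_filter] }
  refine Finset.card_bij φ ?_ ?_ ?_
  · intro a ha
    simp only [φ, not_forall, not_exists, not_and, exists_prop, mem_filter]
    rw [mem_finsuppAntidiag]
    dsimp only [ne_eq, smul_eq_mul, id_eq, eq_mpr_eq_cast, le_eq_subset, Finsupp.coe_mk]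
    simp only [mem_univ, forall_true_left, not_and, not_forall, exists_prop,
      mem_filter, true_and] at ha
    refine ⟨⟨?_, fun i ↦ ?_⟩, fun i _ ↦ ⟨a.parts.count i, ha.1 i, rfl⟩⟩
    · conv_rhs => simp [← a.parts_sum]
      rw [sum_multiset_count_of_subset _ s]
      · simp only [smul_eq_mul]
      · intro i
        simp only [Multiset.mem_toFinset, not_not, mem_filter]
        apply ha.2
    · simp only [ne_eq, Multiset.mem_toFinset, not_not, mem_filter, and_imp]
      exact fun hi _ ↦ ha.2 i hi
  · 
    intro p₁ hp₁ p₂ hp₂ h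
    apply Nat.Partition.ext
    simp only [true_and, mem_univ, mem_filter] at hp₁ hp₂
    ext i
    simp only [φ, ne_eq, Multiset.mem_toFinset, not_not, smul_eq_mul, Finsupp.mk.injEq] at h
    by_cases hi : i = 0
    · rw [hi]
      rw [Multiset.count_eq_zero_of_notMem]
      · rw [Multiset.count_eq_zero_of_notMem]
        intro a; exact Nat.lt_irrefl 0 (hs 0 (hp₂.2 0 a))
      intro a; exact Nat.lt_irrefl 0 (hs 0 (hp₁.2 0 a))
    · rw [← mul_left_inj' hi]
      rw [funext_iff] at h
      exact h.2 i
  · simp only [φ, mem_filter, mem_finsuppAntidiag, mem_univ, exists_prop, true_and, and_assoc]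
    rintro f ⟨hf, hf₃, hf₄⟩
    have hf' : f ∈ finsuppAntidiag s n := mem_finsuppAntidiag.mpr ⟨hf, hf₃⟩
    simp only [mem_finsuppAntidiag] at hf'
    refine ⟨⟨∑ i ∈ s, Multiset.replicate (f i / i) i, ?_, ?_⟩, ?_, ?_, ?_⟩
    · intro i hi
      simp only [exists_prop, Multiset.mem_sum, mem_map, Function.Embedding.coeFn_mk] at hi
      rcases hi with ⟨t, ht, z⟩
      apply hs
      rwa [Multiset.eq_of_mem_replicate z]
    · simp_rw [Multiset.sum_sum, Multiset.sum_replicate, Nat.nsmul_eq_mul]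
      rw [← hf'.1]
      refine sum_congr rfl fun i hi => Nat.div_mul_cancel ?_
      rcases hf₄ i hi with ⟨w, _, hw₂⟩
      rw [← hw₂]
      exact dvd_mul_left _ _
    · intro i
      simp_rw [Multiset.count_sum', Multiset.count_replicate, sum_ite_eq']
      split_ifs with h
      · rcases hf₄ i h with ⟨w, hw₁, hw₂⟩
        rwa [← hw₂, Nat.mul_div_cancel _ (hs i h)]
      · exact hc _ h
    · intro i hi
      rw [Multiset.mem_sum] at hi
      rcases hi with ⟨j, hj₁, hj₂⟩
      rwa [Multiset.eq_of_mem_replicate hj₂]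
    · ext i
      simp_rw [Multiset.count_sum', Multiset.count_replicate, sum_ite_eq']
      simp only [ne_eq, Multiset.mem_toFinset, not_not, smul_eq_mul, ite_mul,
        zero_mul, Finsupp.coe_mk]
      split_ifs with h
      · apply Nat.div_mul_cancel
        rcases hf₄ i h with ⟨w, _, hw₂⟩
        apply Dvd.intro_left _ hw₂
      · apply symm
        rw [← Finsupp.notMem_support_iff]
        exact notMem_mono hf'.2 h

theorem partialOddGF_prop [Field α] (n m : ℕ) :
    #{p : n.Partition | ∀ j ∈ p.parts, j ∈ (range m).map mkOdd} = coeff (R := α) n (partialOddGF m) := by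
  rw [partialOddGF]
  convert partialGF_prop α n
    ((range m).map mkOdd) _ (fun _ => Set.univ) (fun _ _ => trivial) using 2
  · congr
    simp only [true_and, forall_const, Set.mem_univ]
  · rw [Finset.prod_map]
    simp_rw [num_series']
    congr! 2 with x
    ext k
    constructor
    · rintro ⟨p, rfl⟩
      refine ⟨p, ⟨⟩, ?_⟩
      apply mul_comm
    rintro ⟨a_w, -, rfl⟩
    apply Dvd.intro_left a_w rfl
  · intro i
    rw [mem_map]
    rintro ⟨a, -, rfl⟩
    exact Nat.succ_pos _

/-- If m is big enough, the partial product's coefficient counts the number of odd partitions -/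
theorem oddGF_prop [Field α] (n m : ℕ) (h : n < m * 2) :
    #(Nat.Partition.odds n) = coeff (R := α) n (partialOddGF m) := by
  rw [← partialOddGF_prop, Nat.Partition.odds, Nat.Partition.restricted]
  congr 2
  ext p
  simp only [Finset.mem_filter, Finset.mem_univ, true_and]
  apply forall₂_congr
  intro i hi
  have hin : i ≤ n := by
    simpa [p.parts_sum] using Multiset.single_le_sum (fun _ _ => Nat.zero_le _) _ hi
  simp only [mkOdd, exists_prop, mem_range, Function.Embedding.coeFn_mk, mem_map]
  constructor
  · intro hi₂
    have := Nat.mod_add_div i 2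
    rw [Nat.not_even_iff] at hi₂
    rw [hi₂, add_comm] at this
    refine ⟨i / 2, ?_, this⟩
    rw [Nat.div_lt_iff_lt_mul zero_lt_two]
    exact lt_of_le_of_lt hin h
  · rintro ⟨a, -, rfl⟩
    rw [even_iff_two_dvd]
    apply Nat.two_not_dvd_two_mul_add_one

theorem partialDistinctGF_prop [CommSemiring α] (n m : ℕ) :
    #{p : n.Partition |
        p.parts.Nodup ∧ ∀ j ∈ p.parts, j ∈ (range m).map ⟨Nat.succ, Nat.succ_injective⟩} =
      coeff (R := α) n (partialDistinctGF m) := by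
  rw [partialDistinctGF]
  convert partialGF_prop α n
    ((range m).map ⟨Nat.succ, Nat.succ_injective⟩) _ (fun _ => {0, 1}) (fun _ _ => Or.inl rfl)
    using 2
  · congr! with p
    rw [Multiset.nodup_iff_count_le_one]
    congr! 1 with i
    rcases Multiset.count i p.parts with (_ | _ | ms) <;> simp
  · simp_rw [Finset.prod_map, two_series]
    congr with i
    simp [Set.image_pair]
  · simp only [mem_map, Function.Embedding.coeFn_mk]
    rintro i ⟨_, _, rfl⟩
    apply Nat.succ_pos

/-- If m is big enough, the partial product's coefficient counts the number of distinct partitions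
-/
theorem distinctGF_prop [CommSemiring α] (n m : ℕ) (h : n < m + 1) :
    #(Nat.Partition.distincts n) = coeff (R := α) n (partialDistinctGF m) := by
  rw [← partialDistinctGF_prop, Nat.Partition.distincts]
  congr with p
  apply (and_iff_left _).symm
  intro i hi
  have : i ≤ n := by
    simpa [p.parts_sum] using Multiset.single_le_sum (fun _ _ => Nat.zero_le _) _ hi
  simp only [mkOdd, exists_prop, mem_range, Function.Embedding.coeFn_mk, mem_map]
  refine ⟨i - 1, ?_, Nat.succ_pred_eq_of_pos (p.parts_pos hi)⟩
  rw [tsub_lt_iff_right (Nat.one_le_iff_ne_zero.mpr (p.parts_pos hi).ne')]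
  exact lt_of_le_of_lt this h

/-- The key proof idea for the partition theorem, showing that the generating functions for both
sequences are ultimately the same (since the factor converges to 0 as m tends to infinity).
It's enough to not take the limit though, and just consider large enough `m`.
-/
theorem same_gf [Field α] (m : ℕ) :
    (partialOddGF m * (range m).prod fun i => 1 - (X : PowerSeries α) ^ (m + i + 1)) =
      partialDistinctGF m := by
  rw [partialOddGF, partialDistinctGF]
  induction' m with m ih
  · simp
  set! π₀ : PowerSeries α := ∏ i ∈ range m, (1 - X ^ (m + 1 + i + 1)) with hπ₀
  set! π₁ : PowerSeries α := ∏ i ∈ range m, (1 - X ^ (2 * i + 1))⁻¹ with hπ₁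
  set! π₂ : PowerSeries α := ∏ i ∈ range m, (1 - X ^ (m + i + 1)) with hπ₂
  set! π₃ : PowerSeries α := ∏ i ∈ range m, (1 + X ^ (i + 1)) with hπ₃
  rw [← hπ₃] at ih
  have h : constantCoeff (R := α) (1 - X ^ (2 * m + 1)) ≠ 0 := by
    rw [RingHom.map_sub, RingHom.map_pow, constantCoeff_one, constantCoeff_X,
      zero_pow (2 * m).succ_ne_zero, sub_zero]
    exact one_ne_zero
  calc
    (∏ i ∈ range (m + 1), (1 - X ^ (2 * i + 1))⁻¹) *
          ∏ i ∈ range (m + 1), (1 - X ^ (m + 1 + i + 1)) =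
        π₁ * (1 - X ^ (2 * m + 1))⁻¹ * (π₀ * (1 - X ^ (m + 1 + m + 1))) := by
      rw [prod_range_succ _ m, ← hπ₁, prod_range_succ _ m, ← hπ₀]
    _ = π₁ * (1 - X ^ (2 * m + 1))⁻¹ * (π₀ * ((1 + X ^ (m + 1)) * (1 - X ^ (m + 1)))) := by
      rw [← sq_sub_sq, one_pow, add_assoc _ m 1, ← two_mul (m + 1), pow_mul']
    _ = π₀ * (1 - X ^ (m + 1)) * (1 - X ^ (2 * m + 1))⁻¹ * (π₁ * (1 + X ^ (m + 1))) := by ring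
    _ =
        (∏ i ∈ range (m + 1), (1 - X ^ (m + 1 + i))) * (1 - X ^ (2 * m + 1))⁻¹ *
          (π₁ * (1 + X ^ (m + 1))) := by
      rw [prod_range_succ', add_zero, hπ₀]; simp_rw [← add_assoc]
    _ = π₂ * (1 - X ^ (m + 1 + m)) * (1 - X ^ (2 * m + 1))⁻¹ * (π₁ * (1 + X ^ (m + 1))) := by
      rw [add_right_comm, hπ₂, ← prod_range_succ]; simp_rw [add_right_comm]
    _ = π₂ * (1 - X ^ (2 * m + 1)) * (1 - X ^ (2 * m + 1))⁻¹ * (π₁ * (1 + X ^ (m + 1))) := by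
      rw [two_mul, add_right_comm _ m 1]
    _ = (1 - X ^ (2 * m + 1)) * (1 - X ^ (2 * m + 1))⁻¹ * π₂ * (π₁ * (1 + X ^ (m + 1))) := by ring
    _ = π₂ * (π₁ * (1 + X ^ (m + 1))) := by rw [PowerSeries.mul_inv_cancel _ h, one_mul]
    _ = π₁ * π₂ * (1 + X ^ (m + 1)) := by ring
    _ = π₃ * (1 + X ^ (m + 1)) := by rw [ih]
    _ = _ := by rw [prod_range_succ]

theorem same_coeffs [Field α] (m n : ℕ) (h : n ≤ m) :
    coeff (R := α) n (partialOddGF m) = coeff (R := α) n (partialDistinctGF m) := by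
  rw [← same_gf, coeff_mul_prod_one_sub_of_lt_order]
  rintro i -
  rw [order_X_pow]
  exact mod_cast Nat.lt_succ_of_le (le_add_right h)

theorem partition_theorem (n : ℕ) : #(Nat.Partition.odds n) = #(Nat.Partition.distincts n) := by
  suffices (#(Nat.Partition.odds n) : ℚ) = #(Nat.Partition.distincts n) from
    mod_cast this
  rw [distinctGF_prop n (n + 1) (by linarith)]
  rw [oddGF_prop n (n + 1) (by linarith)]
  apply same_coeffs (n + 1) n n.le_succ

end

end Theorems100


namespace HookAux

/-- number of indices whose entry exceeds `j` -/
def cIdx (l : List ℕ) (j : ℕ) : ℕ :=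
  ((Finset.range l.length).filter (fun i => j < l.getD i 0)).card

lemma lowerSet_mem_iff (S : Finset ℕ) (h : ∀ i j : ℕ, j ≤ i → i ∈ S → j ∈ S) (i : ℕ) :
    i ∈ S ↔ i < S.card := by
  constructor
  · intro hi
    have hsub : Finset.range (i+1) ⊆ S := fun j hj =>
      h i j (Nat.lt_succ_iff.mp (Finset.mem_range.mp hj)) hi
    calc i < i + 1 := Nat.lt_succ_self i
    _ = (Finset.range (i+1)).card := by simp
    _ ≤ S.card := Finset.card_le_card hsub
  · intro hi
    by_contra hmem
    have hsub : S ⊆ Finset.range i := by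
      intro j hj
      simp only [Finset.mem_range]
      by_contra hji
      exact hmem (h j i (le_of_not_gt hji) hj)
    have := Finset.card_le_card hsub
    simp only [Finset.card_range] at this; omega

lemma sorted_getD_le (l : List ℕ) (h : l.Pairwise (· ≥ ·)) {i j : ℕ} (hij : i ≤ j)
    (hj : j < l.length) : l.getD j 0 ≤ l.getD i 0 := by
  rcases eq_or_lt_of_le hij with rfl | hlt
  · exact le_refl _
  · have hi : i < l.length := lt_trans hlt hj
    rw [l.getD_eq_getElem 0 hj, l.getD_eq_getElem 0 hi]
    exact List.pairwise_iff_get.mp h ⟨i, hi⟩ ⟨j, hj⟩ hlt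

lemma cIdx_le_length (l : List ℕ) (j : ℕ) : cIdx l j ≤ l.length := by
  have := Finset.card_filter_le (Finset.range l.length) (fun i => j < l.getD i 0)
  simpa [cIdx] using this

lemma cIdx_anti (l : List ℕ) {j j' : ℕ} (h : j ≤ j') : cIdx l j' ≤ cIdx l j := by
  apply Finset.card_le_card
  intro i hi
  simp only [Finset.mem_filter, Finset.mem_range] at *
  exact ⟨hi.1, lt_of_le_of_lt h hi.2⟩

/-- L1 -/
lemma lt_getD_iff (l : List ℕ) (h : l.Pairwise (· ≥ ·)) {i : ℕ} (hi : i < l.length) (j : ℕ) :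
    j < l.getD i 0 ↔ i < cIdx l j := by
  have hlow : ∀ i' j' : ℕ, j' ≤ i' →
      i' ∈ (Finset.range l.length).filter (fun i => j < l.getD i 0) →
      j' ∈ (Finset.range l.length).filter (fun i => j < l.getD i 0) := by
    intro i' j' hle hi'
    simp only [Finset.mem_filter, Finset.mem_range] at *
    refine ⟨lt_of_le_of_lt hle hi'.1, lt_of_lt_of_le hi'.2 (sorted_getD_le l h hle hi'.1)⟩
  have := lowerSet_mem_iff _ hlow i
  simp only [Finset.mem_filter, Finset.mem_range] at this
  rw [cIdx]
  constructor
  · intro hj; exact this.mp ⟨hi, hj⟩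
  · intro hc; exact (this.mpr hc).2

/-- L3 -/
lemma getD_eq_iff (l : List ℕ) (h : l.Pairwise (· ≥ ·)) {i a : ℕ} (hi : i < l.length) (ha : 1 ≤ a) :
    l.getD i 0 = a ↔ cIdx l a ≤ i ∧ i < cIdx l (a - 1) := by
  rw [← lt_getD_iff l h hi, ← not_lt, ← lt_getD_iff l h hi]
  omega

lemma card_filter_range_eq_countP (l : List ℕ) (p : ℕ → Prop) [DecidablePred p] :
    ((Finset.range l.length).filter (fun i => p (l.getD i 0))).card
      = (l.filter (fun x => decide (p x))).length := by
  induction l with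
  | nil => simp
  | cons x l ih =>
      rw [Finset.card_filter, List.length_cons, Finset.sum_range_succ']
      simp only [List.getD_cons_succ, List.getD_cons_zero]
      rw [← Finset.card_filter, ih, List.filter_cons]
      by_cases h : p x <;> simp [h]

lemma count_eq_cIdx_sub (l : List ℕ) (h : l.Pairwise (· ≥ ·)) {a : ℕ} (ha : 1 ≤ a) :
    l.count a = cIdx l (a - 1) - cIdx l a := by
  have h1 : l.count a = ((Finset.range l.length).filter (fun i => l.getD i 0 = a)).card := by
    rw [card_filter_range_eq_countP l (fun x => x = a)]
    rw [List.count, List.countP_eq_length_filter]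
    congr 1
  have h2 : (Finset.range l.length).filter (fun i => l.getD i 0 = a)
      = Finset.Ico (cIdx l a) (cIdx l (a-1)) := by
    ext i
    simp only [Finset.mem_filter, Finset.mem_range, Finset.mem_Ico]
    constructor
    · rintro ⟨hil, hia⟩
      exact (getD_eq_iff l h hil ha).mp hia
    · rintro ⟨h1', h2'⟩
      have hil : i < l.length := lt_of_lt_of_le h2' (cIdx_le_length l _)
      exact ⟨hil, (getD_eq_iff l h hil ha).mpr ⟨h1', h2'⟩⟩
  rw [h1, h2, Nat.card_Ico]

lemma length_filter_list_range (n : ℕ) (p : ℕ → Prop) [DecidablePred p] :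
    ((List.range n).filter (fun i => decide (p i))).length = ((Finset.range n).filter p).card := by
  rw [Finset.card_filter]
  induction n with
  | zero => simp
  | succ n ih =>
      rw [List.range_succ, Finset.sum_range_succ, List.filter_append, List.length_append, ih]
      by_cases h : p n <;> simp [h]

/-- leg length -/
lemma leg_eq (l : List ℕ) (h : l.Pairwise (· ≥ ·)) (i j : ℕ) :
    ((List.range l.length).filter (fun i' => decide (i < i' ∧ j < l.getD i' 0))).length
      = cIdx l j - (i + 1) := by
  rw [length_filter_list_range l.length (fun i' => i < i' ∧ j < l.getD i' 0)]
  have : (Finset.range l.length).filter (fun i' => i < i' ∧ j < l.getD i' 0)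
      = Finset.Ico (i+1) (cIdx l j) := by
    ext i'
    simp only [Finset.mem_filter, Finset.mem_range, Finset.mem_Ico]
    constructor
    · rintro ⟨hl, hii, hji⟩
      exact ⟨hii, (lt_getD_iff l h hl j).mp hji⟩
    · rintro ⟨h1', h2'⟩
      have hl : i' < l.length := lt_of_lt_of_le h2' (cIdx_le_length l _)
      exact ⟨hl, h1', (lt_getD_iff l h hl j).mpr h2'⟩
  rw [this, Nat.card_Ico]


variable (l : List ℕ)

lemma mem_hookSet_iff (h : l.Pairwise (· ≥ ·)) (k : ℕ) (p : ℕ × ℕ) :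
    (p ∈ (Finset.range l.length ×ˢ Finset.range (l.getD 0 0)).filter
      (fun p => p.2 < l.getD p.1 0 ∧
        (l.getD p.1 0 - p.2) +
          ((List.range l.length).filter (fun i' => p.1 < i' ∧ p.2 < l.getD i' 0)).length = k))
    ↔ (p.1 < l.length ∧ p.2 < l.getD 0 0 ∧ p.2 < l.getD p.1 0 ∧
        (l.getD p.1 0 - p.2) + (cIdx l p.2 - (p.1 + 1)) = k) := by
  rw [Finset.mem_filter, Finset.mem_product, Finset.mem_range, Finset.mem_range,
    leg_eq l h p.1 p.2]
  tauto

theorem hookCount_one (hpos : ∀ x ∈ l, 0 < x) (h : l.Pairwise (· ≥ ·)) :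
    hookCount l 1 = l.toFinset.card := by
  rw [hookCount]
  refine Finset.card_bij' (fun p _ => p.2 + 1) (fun a _ => (cIdx l (a - 1) - 1, a - 1))
    ?_ ?_ ?_ ?_
  · -- maps into toFinset
    intro p hp
    rw [mem_hookSet_iff l h] at hp
    obtain ⟨h1, h2, h3, h4⟩ := hp
    have hC : p.1 < cIdx l p.2 := (lt_getD_iff l h h1 p.2).mp h3
    have heq : l.getD p.1 0 = p.2 + 1 := by omega
    rw [List.mem_toFinset, ← heq, l.getD_eq_getElem 0 h1]
    exact List.getElem_mem _
  · -- maps into hook set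
    intro a ha
    rw [List.mem_toFinset] at ha
    have ha1 : 1 ≤ a := hpos a ha
    have hcount : 1 ≤ l.count a := List.count_pos_iff.mpr ha
    rw [count_eq_cIdx_sub l h ha1] at hcount
    have hBA : cIdx l a ≤ cIdx l (a-1) := cIdx_anti l (by omega)
    have hAlen : cIdx l (a-1) ≤ l.length := cIdx_le_length l _
    have hA1 : 1 ≤ cIdx l (a-1) := by omega
    have hilen : cIdx l (a-1) - 1 < l.length := by omega
    have hia : l.getD (cIdx l (a-1) - 1) 0 = a :=
      (getD_eq_iff l h hilen ha1).mpr (by omega)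
    rw [mem_hookSet_iff l h]
    dsimp only
    refine ⟨hilen, ?_, ?_, ?_⟩
    · rw [lt_getD_iff l h (by omega) (a-1)]; omega
    · rw [hia]; omega
    · rw [hia]
      have h5 : a - 1 = a - 1 := rfl
      omega
  · -- left inverse
    intro p hp
    rw [mem_hookSet_iff l h] at hp
    obtain ⟨h1, h2, h3, h4⟩ := hp
    have hC : p.1 < cIdx l p.2 := (lt_getD_iff l h h1 p.2).mp h3
    have heq : cIdx l (p.2 + 1 - 1) = p.1 + 1 := by
      simp only [Nat.add_sub_cancel]; omega
    ext
    · dsimp only; omega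
    · dsimp only; omega
  · -- right inverse
    intro a ha
    rw [List.mem_toFinset] at ha
    have := hpos a ha
    dsimp only
    omega

theorem hookCount_two (hpos : ∀ x ∈ l, 0 < x) (h : l.Pairwise (· ≥ ·))
    (hodd : ∀ x ∈ l, Odd x) :
    hookCount l 2 = (l.toFinset.filter (fun a => 2 ≤ l.count a)).card
      + (l.toFinset.filter (fun a => 2 ≤ a)).card := by
  rw [hookCount]
  set S := (Finset.range l.length ×ˢ Finset.range (l.getD 0 0)).filter
    (fun p => p.2 < l.getD p.1 0 ∧
      (l.getD p.1 0 - p.2) +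
        ((List.range l.length).filter (fun i' => p.1 < i' ∧ p.2 < l.getD i' 0)).length = 2)
    with hS
  rw [← Finset.card_filter_add_card_filter_not
    (p := fun p : ℕ × ℕ => l.getD p.1 0 = p.2 + 1) (s := S)]
  congr 1
  · -- second-to-last occurrences ↔ parts with multiplicity ≥ 2
    refine Finset.card_bij' (fun p _ => p.2 + 1)
      (fun a _ => (cIdx l (a - 1) - 2, a - 1)) ?_ ?_ ?_ ?_
    · intro p hp
      rw [Finset.mem_filter, mem_hookSet_iff l h] at hp
      obtain ⟨⟨h1, h2, h3, h4⟩, h5⟩ := hp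
      have hC : p.1 < cIdx l p.2 := (lt_getD_iff l h h1 p.2).mp h3
      have hmem : p.2 + 1 ∈ l := by
        rw [← h5, l.getD_eq_getElem 0 h1]; exact List.getElem_mem _
      rw [Finset.mem_filter, List.mem_toFinset]
      refine ⟨hmem, ?_⟩
      have hC2 : cIdx l p.2 = p.1 + 2 := by omega
      have hBle : cIdx l (p.2 + 1) ≤ p.1 := by
        have := (getD_eq_iff l h h1 (a := p.2 + 1) (by omega)).mp h5
        simpa using this.1
      rw [count_eq_cIdx_sub l h (by omega : 1 ≤ p.2 + 1)]
      simp only [Nat.add_sub_cancel]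
      omega
    · intro a ha
      rw [Finset.mem_filter, List.mem_toFinset] at ha
      obtain ⟨hmem, hcnt⟩ := ha
      have ha1 : 1 ≤ a := hpos a hmem
      rw [count_eq_cIdx_sub l h ha1] at hcnt
      have hBA : cIdx l a ≤ cIdx l (a-1) := cIdx_anti l (by omega)
      have hAlen : cIdx l (a-1) ≤ l.length := cIdx_le_length l _
      have hA2 : 2 ≤ cIdx l (a-1) := by omega
      have hilen : cIdx l (a-1) - 2 < l.length := by omega
      have hia : l.getD (cIdx l (a-1) - 2) 0 = a :=
        (getD_eq_iff l h hilen ha1).mpr (by omega)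
      rw [Finset.mem_filter, mem_hookSet_iff l h]
      dsimp only
      refine ⟨⟨hilen, ?_, ?_, ?_⟩, ?_⟩
      · rw [lt_getD_iff l h (by omega) (a-1)]; omega
      · rw [hia]; omega
      · rw [hia]; omega
      · rw [hia]; omega
    · intro p hp
      rw [Finset.mem_filter, mem_hookSet_iff l h] at hp
      obtain ⟨⟨h1, h2, h3, h4⟩, h5⟩ := hp
      have hC : p.1 < cIdx l p.2 := (lt_getD_iff l h h1 p.2).mp h3
      have hC2 : cIdx l p.2 = p.1 + 2 := by omega
      have heq : cIdx l (p.2 + 1 - 1) = p.1 + 2 := by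
        simp only [Nat.add_sub_cancel]; omega
      ext
      · dsimp only; omega
      · dsimp only; omega
    · intro a ha
      rw [Finset.mem_filter, List.mem_toFinset] at ha
      have := hpos a ha.1
      dsimp only
      omega
  · -- last occurrences of parts `a ≥ 2` (using oddness: `a-1` is never a part)
    refine Finset.card_bij' (fun p _ => p.2 + 2)
      (fun a _ => (cIdx l (a - 2) - 1, a - 2)) ?_ ?_ ?_ ?_
    · intro p hp
      rw [Finset.mem_filter, mem_hookSet_iff l h] at hp
      obtain ⟨⟨h1, h2, h3, h4⟩, h5⟩ := hp
      have hC : p.1 < cIdx l p.2 := (lt_getD_iff l h h1 p.2).mp h3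
      have hl2 : l.getD p.1 0 = p.2 + 2 := by omega
      rw [Finset.mem_filter, List.mem_toFinset]
      constructor
      · rw [← hl2, l.getD_eq_getElem 0 h1]; exact List.getElem_mem _
      · omega
    · intro a ha
      rw [Finset.mem_filter, List.mem_toFinset] at ha
      obtain ⟨hmem, ha2⟩ := ha
      have haodd : Odd a := hodd a hmem
      have ha3 : 3 ≤ a := by
        rcases haodd with ⟨k, hk⟩; omega
      have hcnt : 1 ≤ l.count a := List.count_pos_iff.mpr hmem
      rw [count_eq_cIdx_sub l h (by omega)] at hcnt
      -- a - 1 is even hence not a part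
      have hne : l.count (a-1) = 0 := by
        rw [List.count_eq_zero]
        intro hmem'
        rcases hodd (a-1) hmem' with ⟨k, hk⟩
        rcases haodd with ⟨k', hk'⟩
        omega
      rw [count_eq_cIdx_sub l h (by omega : 1 ≤ a - 1)] at hne
      have hanti : cIdx l (a-1) ≤ cIdx l (a-1-1) := cIdx_anti l (by omega)
      have h21 : a - 1 - 1 = a - 2 := by omega
      rw [h21] at hne hanti
      have hBA : cIdx l a ≤ cIdx l (a-1) := cIdx_anti l (by omega)
      have hAlen : cIdx l (a-2) ≤ l.length := cIdx_le_length l _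
      have hA1 : 1 ≤ cIdx l (a-2) := by omega
      have hilen : cIdx l (a-2) - 1 < l.length := by omega
      have hia : l.getD (cIdx l (a-2) - 1) 0 = a := by
        rw [getD_eq_iff l h hilen (by omega)]
        omega
      rw [Finset.mem_filter, mem_hookSet_iff l h]
      dsimp only
      refine ⟨⟨hilen, ?_, ?_, ?_⟩, ?_⟩
      · rw [lt_getD_iff l h (by omega) (a-2)]; omega
      · rw [hia]; omega
      · rw [hia]; omega
      · rw [hia]; omega
    · intro p hp
      rw [Finset.mem_filter, mem_hookSet_iff l h] at hp
      obtain ⟨⟨h1, h2, h3, h4⟩, h5⟩ := hp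
      have hC : p.1 < cIdx l p.2 := (lt_getD_iff l h h1 p.2).mp h3
      have hC1 : cIdx l p.2 = p.1 + 1 := by omega
      have heq : cIdx l (p.2 + 2 - 2) = p.1 + 1 := by
        simp only [Nat.add_sub_cancel]; omega
      ext
      · dsimp only; omega
      · dsimp only; omega
    · intro a ha
      rw [Finset.mem_filter, List.mem_toFinset] at ha
      dsimp only
      omega


variable {n : ℕ}

lemma sortedList_facts (p : n.Partition) :
    ((p.parts.sort (· ≤ ·)).reverse.Pairwise (· ≥ ·)) ∧
    (∀ x ∈ (p.parts.sort (· ≤ ·)).reverse, x ∈ p.parts) ∧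
    ((p.parts.sort (· ≤ ·)).reverse.toFinset = p.parts.toFinset) ∧
    (∀ a, ((p.parts.sort (· ≤ ·)).reverse.count a = p.parts.count a)) := by
  set L := p.parts.sort (· ≤ ·) with hL
  have hsorted : L.Pairwise (· ≤ ·) := p.parts.pairwise_sort _
  have hcoe : (L : Multiset ℕ) = p.parts := p.parts.sort_eq _
  refine ⟨?_, ?_, ?_, ?_⟩
  · have : L.reverse.reverse.Pairwise (· ≤ ·) := by simpa using hsorted
    have := List.pairwise_reverse.mpr hsorted
    simpa [flip] using this
  · intro x hx
    rw [List.mem_reverse] at hx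
    rw [← hcoe]
    exact_mod_cast hx
  · ext a
    rw [List.toFinset_reverse, List.mem_toFinset, Multiset.mem_toFinset, ← hcoe]
    simp
  · intro a
    rw [List.count_reverse, ← hcoe, Multiset.coe_count]

lemma hook_one_partition (p : n.Partition) :
    hookCount ((p.parts.sort (· ≤ ·)).reverse) 1 = p.parts.toFinset.card := by
  obtain ⟨hs, hm, ht, hc⟩ := sortedList_facts p
  rw [hookCount_one _ (fun x hx => p.parts_pos (hm x hx)) hs, ht]

lemma hook_two_partition (p : n.Partition) (hodd : ∀ i ∈ p.parts, ¬ 2 ∣ i) :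
    hookCount ((p.parts.sort (· ≤ ·)).reverse) 2
      = (p.parts.toFinset.filter (fun a => 2 ≤ p.parts.count a)).card
        + (p.parts.toFinset.filter (fun a => 2 ≤ a)).card := by
  obtain ⟨hs, hm, ht, hc⟩ := sortedList_facts p
  rw [hookCount_two _ (fun x hx => p.parts_pos (hm x hx)) hs
    (fun x hx => Nat.odd_iff.mpr (Nat.not_even_iff.mp
      (fun he => hodd x (hm x hx) he.two_dvd)))]
  congr 1
  · rw [ht]
    congr 1
    apply Finset.filter_congr
    intro a _
    simp [hc a]
  · rw [ht]


end HookAux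

namespace HookAux
def On (n : ℕ) : Finset n.Partition :=
  Finset.univ.filter (fun p => ∀ i ∈ p.parts, ¬ 2 ∣ i)

lemma partition_heq {m₁ m₂ : ℕ} (h : m₁ = m₂) {p : m₁.Partition} {q : m₂.Partition}
    (hp : p.parts = q.parts) : HEq p q := by
  subst h; exact heq_of_eq (Nat.Partition.ext hp)

/-- C1 -/
lemma sum_distinct_split (n : ℕ) :
    ∑ p ∈ On n, p.parts.toFinset.card
      = (∑ p ∈ On n, (p.parts.toFinset.filter (fun a => 2 ≤ a)).card)
        + ((On n).filter (fun p => 1 ∈ p.parts)).card := by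
  rw [Finset.card_filter]
  rw [← Finset.sum_add_distrib]
  apply Finset.sum_congr rfl
  intro p _
  rw [← Finset.card_filter_add_card_filter_not (p := fun a => 2 ≤ a)
    (s := p.parts.toFinset)]
  congr 1
  have : p.parts.toFinset.filter (fun a => ¬ 2 ≤ a)
      = if 1 ∈ p.parts then {1} else ∅ := by
    split_ifs with h1
    · ext a
      simp only [Finset.mem_filter, Multiset.mem_toFinset, Finset.mem_singleton]
      constructor
      · rintro ⟨ha, ha2⟩
        have := p.parts_pos ha
        omega
      · rintro rfl
        exact ⟨h1, by omega⟩
    · ext a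
      simp only [Finset.mem_filter, Multiset.mem_toFinset, Finset.notMem_empty, iff_false]
      rintro ⟨ha, ha2⟩
      have := p.parts_pos ha
      have : a = 1 := by omega
      exact h1 (this ▸ ha)
  rw [this]
  split_ifs <;> simp

def mkPart (m : ℕ) (s : Multiset ℕ) (hpos : ∀ i ∈ s, 0 < i) (hsum : s.sum = m) :
    m.Partition := ⟨s, fun hi => hpos _ hi, hsum⟩

@[simp] lemma mkPart_parts (m : ℕ) (s : Multiset ℕ) (hpos) (hsum) :
    (mkPart m s hpos hsum).parts = s := rfl

lemma sum_erase_of_mem {s : Multiset ℕ} {a : ℕ} (h : a ∈ s) :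
    (s.erase a).sum = s.sum - a := by
  have := Multiset.cons_erase h
  have h2 : s.sum = a + (s.erase a).sum := by
    conv_lhs => rw [← this]
    rw [Multiset.sum_cons]
  omega

/-- C2 -/
lemma card_with_one (n : ℕ) (hn : 1 ≤ n) :
    ((On n).filter (fun p => 1 ∈ p.parts)).card = (On (n - 1)).card := by
  refine Finset.card_bij'
    (fun p hp => mkPart (n-1) (p.parts.erase 1)
      (fun i hi => p.parts_pos (Multiset.mem_of_mem_erase hi))
      (by
        rw [sum_erase_of_mem (Finset.mem_filter.mp hp).2, p.parts_sum]))
    (fun q hq => mkPart n (1 ::ₘ q.parts)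
      (fun i hi => by
        rcases Multiset.mem_cons.mp hi with rfl | h
        · exact one_pos
        · exact q.parts_pos h)
      (by rw [Multiset.sum_cons, q.parts_sum]; omega))
    ?_ ?_ ?_ ?_
  · intro p hp
    rw [Finset.mem_filter] at hp
    obtain ⟨hOn, h1⟩ := hp
    rw [On, Finset.mem_filter] at hOn ⊢
    exact ⟨Finset.mem_univ _, fun i hi => hOn.2 i (Multiset.mem_of_mem_erase hi)⟩
  · intro q hq
    rw [On, Finset.mem_filter] at hq
    rw [Finset.mem_filter, On, Finset.mem_filter]
    refine ⟨⟨Finset.mem_univ _, fun i hi => ?_⟩, by simp⟩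
    rcases Multiset.mem_cons.mp hi with rfl | h
    · omega
    · exact hq.2 i h
  · intro p hp
    apply Nat.Partition.ext
    simp only [mkPart_parts]
    rw [Multiset.cons_erase (Finset.mem_filter.mp hp).2]
  · intro q hq
    apply Nat.Partition.ext
    simp only [mkPart_parts]
    rw [Multiset.erase_cons_head]

end HookAux

namespace HookAux2
open HookAux

set_option maxHeartbeats 1000000 in
lemma sum_repeated (n : ℕ) (hn : 2 ≤ n) :
    ∑ p ∈ On n, (p.parts.toFinset.filter (fun a => 2 ≤ p.parts.count a)).card
      = ∑ t ∈ Finset.range ((n-2)/4 + 1), (On (n - (4*t+2))).card := by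
  rw [← Finset.card_sigma, ← Finset.card_sigma]
  have memfact : ∀ (p : n.Partition) (a : ℕ),
      (⟨p, a⟩ : Σ _p : n.Partition, ℕ) ∈
        (On n).sigma (fun p => p.parts.toFinset.filter (fun a => 2 ≤ p.parts.count a)) →
      (∀ i ∈ p.parts, ¬ 2 ∣ i) ∧ a ∈ p.parts ∧ 2 ≤ p.parts.count a ∧
        a ∈ p.parts.erase a ∧
        ((p.parts.erase a).erase a).sum = n - 2 * a ∧ 2 * a ≤ n ∧ ¬ 2 ∣ a := by
    intro p a hx
    rw [Finset.mem_sigma] at hx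
    have h1 : p ∈ On n := hx.1
    have h2 : a ∈ p.parts.toFinset.filter (fun a => 2 ≤ p.parts.count a) := hx.2
    rw [On, Finset.mem_filter] at h1
    rw [Finset.mem_filter, Multiset.mem_toFinset] at h2
    obtain ⟨hmem, hcnt⟩ := h2
    have hmem2 : a ∈ p.parts.erase a := by
      rw [← Multiset.count_pos, Multiset.count_erase_self]
      omega
    have hs1 : (p.parts.erase a).sum = n - a := by
      rw [sum_erase_of_mem hmem, p.parts_sum]
    have hle1 : a ≤ n := by
      have := Multiset.single_le_sum (fun x _hx => Nat.zero_le x) a hmem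
      rw [p.parts_sum] at this; exact this
    have hs2 : ((p.parts.erase a).erase a).sum = (p.parts.erase a).sum - a :=
      sum_erase_of_mem hmem2
    have hle2 : a ≤ (p.parts.erase a).sum :=
      Multiset.single_le_sum (fun x _hx => Nat.zero_le x) a hmem2
    exact ⟨h1.2, hmem, hcnt, hmem2, by omega, by omega, h1.2 a hmem⟩
  have memfact2 : ∀ (t : ℕ) (q : (n - (4*t+2)).Partition),
      (⟨t, q⟩ : Σ t : ℕ, (n - (4*t+2)).Partition) ∈
        (Finset.range ((n-2)/4 + 1)).sigma (fun t => On (n - (4*t+2))) →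
      t ≤ (n-2)/4 ∧ (∀ i ∈ q.parts, ¬ 2 ∣ i) ∧ 4*t+2 ≤ n := by
    intro t q hx
    rw [Finset.mem_sigma] at hx
    have h1 : t ∈ Finset.range ((n-2)/4 + 1) := hx.1
    have h2 : q ∈ On (n - (4*t+2)) := hx.2
    rw [Finset.mem_range] at h1
    rw [On, Finset.mem_filter] at h2
    exact ⟨by omega, h2.2, by omega⟩
  refine Finset.card_bij'
    (fun x hx => ⟨(x.2 - 1)/2,
      mkPart (n - (4*((x.2 - 1)/2)+2)) ((x.1.parts.erase x.2).erase x.2)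
        (fun i hi => x.1.parts_pos (Multiset.mem_of_mem_erase (Multiset.mem_of_mem_erase hi)))
        (by
          obtain ⟨p, a⟩ := x
          obtain ⟨hodd, hmem, hcnt, hmem2, hsum, hle, ha2⟩ := memfact p a hx
          show ((p.parts.erase a).erase a).sum = n - (4*((a - 1)/2)+2)
          rw [hsum]
          omega)⟩)
    (fun x hx => ⟨mkPart n ((2*x.1+1) ::ₘ (2*x.1+1) ::ₘ x.2.parts)
        (fun i hi => by
          rcases Multiset.mem_cons.mp hi with rfl | hi'
          · omega
          rcases Multiset.mem_cons.mp hi' with rfl | hi''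
          · omega
          · exact x.2.parts_pos hi'')
        (by
          obtain ⟨t, q⟩ := x
          obtain ⟨ht, hodd, h42⟩ := memfact2 t q hx
          show ((2*t+1) ::ₘ (2*t+1) ::ₘ q.parts).sum = n
          rw [Multiset.sum_cons, Multiset.sum_cons, q.parts_sum]
          omega), 2*x.1+1⟩)
    ?_ ?_ ?_ ?_
  · -- forward membership
    rintro ⟨p, a⟩ hx
    obtain ⟨hodd, hmem, hcnt, hmem2, hsum, hle, ha2⟩ := memfact p a hx
    rw [Finset.mem_sigma]
    constructor
    · show (a-1)/2 ∈ Finset.range ((n-2)/4 + 1)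
      rw [Finset.mem_range]
      omega
    · show mkPart _ _ _ _ ∈ On (n - (4*((a-1)/2)+2))
      rw [On, Finset.mem_filter]
      refine ⟨Finset.mem_univ _, fun i hi => ?_⟩
      rw [mkPart_parts] at hi
      exact hodd i (Multiset.mem_of_mem_erase (Multiset.mem_of_mem_erase hi))
  · -- backward membership
    rintro ⟨t, q⟩ hx
    obtain ⟨ht, hodd, h42⟩ := memfact2 t q hx
    rw [Finset.mem_sigma]
    constructor
    · show mkPart _ _ _ _ ∈ On n
      rw [On, Finset.mem_filter]
      refine ⟨Finset.mem_univ _, fun i hi => ?_⟩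
      rw [mkPart_parts] at hi
      rcases Multiset.mem_cons.mp hi with rfl | hi'
      · omega
      rcases Multiset.mem_cons.mp hi' with rfl | hi''
      · omega
      · exact hodd i hi''
    · show (2*t+1) ∈ Finset.filter _ _
      rw [Finset.mem_filter, Multiset.mem_toFinset, mkPart_parts]
      constructor
      · exact Multiset.mem_cons_self _ _
      · rw [Multiset.count_cons_self, Multiset.count_cons_self]
        omega
  · -- left inverse
    rintro ⟨p, a⟩ hx
    obtain ⟨hodd, hmem, hcnt, hmem2, hsum, hle, ha2⟩ := memfact p a hx
    have ha : 2*((a-1)/2)+1 = a := by omega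
    refine Sigma.ext ?_ (heq_of_eq ?_)
    · apply Nat.Partition.ext
      show (2*((a-1)/2)+1) ::ₘ (2*((a-1)/2)+1) ::ₘ ((p.parts.erase a).erase a) = p.parts
      rw [ha, Multiset.cons_erase hmem2, Multiset.cons_erase hmem]
    · show 2*((a-1)/2)+1 = a
      omega
  · -- right inverse
    rintro ⟨t, q⟩ hx
    obtain ⟨ht, hodd, h42⟩ := memfact2 t q hx
    have ha : (2*t+1-1)/2 = t := by omega
    refine Sigma.ext ?_ ?_
    · show (2*t+1-1)/2 = t
      omega
    · refine partition_heq ?_ ?_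
      · show n - (4*((2*t+1-1)/2)+2) = n - (4*t+2)
        omega
      · show (((2*t+1) ::ₘ (2*t+1) ::ₘ q.parts).erase (2*t+1)).erase (2*t+1) = q.parts
        rw [Multiset.erase_cons_head, Multiset.erase_cons_head]

end HookAux2

namespace HookAux3
open HookAux

def smallOf : ℕ → Multiset ℕ
  | 0 => 0
  | 1 => {1}
  | 2 => {2}
  | 3 => {1, 2}
  | _ => 0

def D3f (m : ℕ) : Finset m.Partition :=
  Finset.univ.filter (fun p => p.parts.Nodup ∧ ∀ i ∈ p.parts, 3 ≤ i)

lemma smallOf_facts (k : ℕ) (hk : k ≤ 3) :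
    (smallOf k).sum = k ∧ (smallOf k).Nodup ∧ (∀ x ∈ smallOf k, x = 1 ∨ x = 2) := by
  interval_cases k <;> refine ⟨by decide, by decide, ?_⟩ <;> intro x hx <;>
    simp [smallOf, Multiset.mem_singleton, Multiset.mem_cons] at hx <;> omega

lemma small_eq (s : Multiset ℕ) (hnd : s.Nodup) (hmem : ∀ x ∈ s, x = 1 ∨ x = 2) :
    s = smallOf s.sum ∧ s.sum ≤ 3 := by
  have hc : ∀ a, s.count a ≤ 1 := Multiset.nodup_iff_count_le_one.mp hnd
  have h0 : ∀ x, x ≠ 1 → x ≠ 2 → s.count x = 0 := by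
    intro x h1 h2
    rw [Multiset.count_eq_zero]
    intro hx
    rcases hmem x hx with rfl | rfl <;> simp at h1 h2
  by_cases h1 : 1 ∈ s <;> by_cases h2 : 2 ∈ s
  · have : s = {1, 2} := by
      apply Multiset.ext.mpr
      intro a
      have e1 : s.count 1 = 1 := le_antisymm (hc 1) (Multiset.count_pos.mpr h1)
      have e2 : s.count 2 = 1 := le_antisymm (hc 2) (Multiset.count_pos.mpr h2)
      rcases eq_or_ne a 1 with rfl | hne1
      · simpa using e1
      rcases eq_or_ne a 2 with rfl | hne2
      · simpa using e2
      · rw [h0 a hne1 hne2]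
        rw [show Multiset.count a ({1, 2} : Multiset ℕ) = 0 by
          simp [Multiset.count_cons, Multiset.count_singleton, hne1, hne2]]
    rw [this]; exact ⟨rfl, by decide⟩
  · have : s = {1} := by
      apply Multiset.ext.mpr
      intro a
      have e1 : s.count 1 = 1 := le_antisymm (hc 1) (Multiset.count_pos.mpr h1)
      rcases eq_or_ne a 1 with rfl | hne1
      · simpa using e1
      rcases eq_or_ne a 2 with rfl | hne2
      · rw [Multiset.count_eq_zero.mpr h2]; simp
      · rw [h0 a hne1 hne2, Multiset.count_singleton]; simp [hne1]
    rw [this]; exact ⟨rfl, by decide⟩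
  · have : s = {2} := by
      apply Multiset.ext.mpr
      intro a
      have e2 : s.count 2 = 1 := le_antisymm (hc 2) (Multiset.count_pos.mpr h2)
      rcases eq_or_ne a 2 with rfl | hne2
      · simpa using e2
      rcases eq_or_ne a 1 with rfl | hne1
      · rw [Multiset.count_eq_zero.mpr h1]; simp
      · rw [h0 a hne1 hne2, Multiset.count_singleton]; simp [hne2]
    rw [this]; exact ⟨rfl, by decide⟩
  · have : s = 0 := by
      rw [Multiset.eq_zero_iff_forall_notMem]
      intro x hx
      rcases hmem x hx with rfl | rfl
      · exact h1 hx
      · exact h2 hx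
    rw [this]; exact ⟨rfl, by decide⟩

set_option maxHeartbeats 1000000 in
lemma distincts_card_eq (m : ℕ) :
    (Nat.Partition.distincts m).card
      = ∑ k ∈ (Finset.range 4).filter (· ≤ m), (D3f (m - k)).card := by
  rw [← Finset.card_sigma]
  have memfactD : ∀ p : m.Partition, p ∈ Nat.Partition.distincts m →
      (p.parts.filter (fun x => ¬ 3 ≤ x)) = smallOf ((p.parts.filter (fun x => ¬ 3 ≤ x)).sum) ∧
      (p.parts.filter (fun x => ¬ 3 ≤ x)).sum ≤ 3 ∧
      (p.parts.filter (fun x => ¬ 3 ≤ x)).sum ≤ m ∧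
      (p.parts.filter (fun x => 3 ≤ x)).sum
        = m - (p.parts.filter (fun x => ¬ 3 ≤ x)).sum ∧
      (p.parts.filter (fun x => 3 ≤ x)).Nodup ∧
      (∀ i ∈ p.parts.filter (fun x => 3 ≤ x), 3 ≤ i) := by
    intro p hp
    rw [Nat.Partition.distincts, Finset.mem_filter] at hp
    have hnd := hp.2
    have hsplit : (p.parts.filter (fun x => 3 ≤ x)).sum
        + (p.parts.filter (fun x => ¬ 3 ≤ x)).sum = m := by
      rw [← Multiset.sum_add, Multiset.filter_add_not, p.parts_sum]
    obtain ⟨hse, hle3⟩ := small_eq (p.parts.filter (fun x => ¬ 3 ≤ x))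
      (hnd.filter _)
      (fun x hx => by
        rw [Multiset.mem_filter] at hx
        have := p.parts_pos hx.1
        omega)
    refine ⟨hse, hle3, by omega, by omega, hnd.filter _, ?_⟩
    intro i hi
    rw [Multiset.mem_filter] at hi
    exact hi.2
  have memfactS : ∀ (k : ℕ) (q : (m - k).Partition),
      (⟨k, q⟩ : Σ k : ℕ, (m - k).Partition) ∈
        ((Finset.range 4).filter (· ≤ m)).sigma (fun k => D3f (m - k)) →
      k ≤ 3 ∧ k ≤ m ∧ q.parts.Nodup ∧ (∀ i ∈ q.parts, 3 ≤ i) := by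
    intro k q hx
    rw [Finset.mem_sigma] at hx
    have h1 : k ∈ (Finset.range 4).filter (· ≤ m) := hx.1
    have h2 : q ∈ D3f (m - k) := hx.2
    rw [Finset.mem_filter, Finset.mem_range] at h1
    rw [D3f, Finset.mem_filter] at h2
    exact ⟨by omega, h1.2, h2.2.1, h2.2.2⟩
  refine Finset.card_bij'
    (fun p hp => ⟨(p.parts.filter (fun x => ¬ 3 ≤ x)).sum,
      mkPart (m - (p.parts.filter (fun x => ¬ 3 ≤ x)).sum)
        (p.parts.filter (fun x => 3 ≤ x))
        (fun i hi => p.parts_pos (Multiset.mem_of_mem_filter hi))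
        ((memfactD p hp).2.2.2.1)⟩)
    (fun x hx => mkPart m (smallOf x.1 + x.2.parts)
      (fun i hi => by
        rcases Multiset.mem_add.mp hi with hi' | hi'
        · obtain ⟨t, q⟩ := x
          obtain ⟨hk3, hkm, hnd, h3⟩ := memfactS t q hx
          obtain ⟨-, -, hmem⟩ := smallOf_facts t hk3
          rcases hmem i hi' with rfl | rfl <;> omega
        · obtain ⟨t, q⟩ := x
          obtain ⟨hk3, hkm, hnd, h3⟩ := memfactS t q hx
          have := h3 i hi'
          omega)
      (by
        obtain ⟨t, q⟩ := x
        obtain ⟨hk3, hkm, hnd, h3⟩ := memfactS t q hx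
        obtain ⟨hsum, -, -⟩ := smallOf_facts t hk3
        show (smallOf t + q.parts).sum = m
        rw [Multiset.sum_add, hsum, q.parts_sum]
        omega))
    ?_ ?_ ?_ ?_
  · -- forward membership
    intro p hp
    obtain ⟨hse, hle3, hlem, hbig, hnd, h3⟩ := memfactD p hp
    rw [Finset.mem_sigma]
    constructor
    · show (p.parts.filter (fun x => ¬ 3 ≤ x)).sum ∈ (Finset.range 4).filter (· ≤ m)
      rw [Finset.mem_filter, Finset.mem_range]
      exact ⟨by omega, hlem⟩
    · show mkPart _ _ _ _ ∈ D3f _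
      rw [D3f, Finset.mem_filter]
      exact ⟨Finset.mem_univ _, hnd, h3⟩
  · -- backward membership
    rintro ⟨t, q⟩ hx
    obtain ⟨hk3, hkm, hnd, h3⟩ := memfactS t q hx
    obtain ⟨hsum, hsnd, hmem⟩ := smallOf_facts t hk3
    show mkPart _ _ _ _ ∈ Nat.Partition.distincts m
    rw [Nat.Partition.distincts, Finset.mem_filter]
    refine ⟨Finset.mem_univ _, ?_⟩
    rw [mkPart_parts, Multiset.nodup_add]
    refine ⟨hsnd, hnd, Multiset.disjoint_left.mpr ?_⟩
    intro a ha hq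
    rcases hmem a ha with rfl | rfl <;> [exact absurd (h3 1 hq) (by omega);
      exact absurd (h3 2 hq) (by omega)]
  · -- left inverse
    intro p hp
    obtain ⟨hse, hle3, hlem, hbig, hnd, h3⟩ := memfactD p hp
    apply Nat.Partition.ext
    show smallOf ((p.parts.filter (fun x => ¬ 3 ≤ x)).sum)
        + p.parts.filter (fun x => 3 ≤ x) = p.parts
    rw [← hse, add_comm, Multiset.filter_add_not]
  · -- right inverse
    rintro ⟨t, q⟩ hx
    obtain ⟨hk3, hkm, hnd, h3⟩ := memfactS t q hx
    obtain ⟨hsum, hsnd, hmem⟩ := smallOf_facts t hk3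
    have hfs : (smallOf t + q.parts).filter (fun x => ¬ 3 ≤ x) = smallOf t := by
      rw [Multiset.filter_add]
      rw [Multiset.filter_eq_self.mpr (fun a ha => by rcases hmem a ha with rfl | rfl <;> omega)]
      rw [Multiset.filter_eq_nil.mpr (fun a ha => by have := h3 a ha; omega)]
      rw [add_zero]
    have hfb : (smallOf t + q.parts).filter (fun x => 3 ≤ x) = q.parts := by
      rw [Multiset.filter_add]
      rw [Multiset.filter_eq_nil.mpr (fun a ha => by rcases hmem a ha with rfl | rfl <;> omega)]
      rw [Multiset.filter_eq_self.mpr (fun a ha => h3 a ha), zero_add]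
    have hks : ((smallOf t + q.parts).filter (fun x => ¬ 3 ≤ x)).sum = t := by
      rw [hfs, hsum]
    refine Sigma.ext ?_ ?_
    · show ((mkPart m (smallOf t + q.parts) _ _).parts.filter (fun x => ¬ 3 ≤ x)).sum = t
      rw [mkPart_parts]
      exact hks
    · refine partition_heq ?_ ?_
      · show m - ((mkPart m (smallOf t + q.parts) _ _).parts.filter (fun x => ¬ 3 ≤ x)).sum
          = m - t
        rw [mkPart_parts, hks]
      · show (mkPart m (smallOf t + q.parts) _ _).parts.filter (fun x => 3 ≤ x) = q.parts
        rw [mkPart_parts]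
        exact hfb


lemma dc_big (m : ℕ) (hm : 3 ≤ m) :
    (Nat.Partition.distincts m).card
      = (D3f m).card + (D3f (m-1)).card + (D3f (m-2)).card + (D3f (m-3)).card := by
  rw [distincts_card_eq]
  have hfe : (Finset.range 4).filter (· ≤ m) = Finset.range 4 := by
    apply Finset.filter_true_of_mem
    intro k hk
    rw [Finset.mem_range] at hk
    show k ≤ m
    omega
  rw [hfe, Finset.sum_range_succ, Finset.sum_range_succ, Finset.sum_range_succ,
    Finset.sum_range_one, Nat.sub_zero]

lemma dc_small (m : ℕ) (hm : m ≤ 3) :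
    (Nat.Partition.distincts m).card = ∑ i ∈ Finset.range (m+1), (D3f i).card := by
  rw [distincts_card_eq]
  have hfe : (Finset.range 4).filter (· ≤ m) = Finset.range (m+1) := by
    ext k
    simp only [Finset.mem_filter, Finset.mem_range]
    constructor
    · rintro ⟨h1, h2⟩; omega
    · intro h; exact ⟨by omega, by omega⟩
  rw [hfe]
  rw [← Finset.sum_range_reflect (fun i => (D3f i).card) (m+1)]
  apply Finset.sum_congr rfl
  intro k hk
  rw [Finset.mem_range] at hk
  have : m - k = m + 1 - 1 - k := by omega
  rw [this]

lemma tele : ∀ n : ℕ, 2 ≤ n →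
    ∑ t ∈ Finset.range ((n-2)/4 + 1), (Nat.Partition.distincts (n - (4*t+2))).card
      = ∑ i ∈ Finset.range (n-1), (D3f i).card := by
  intro n
  induction n using Nat.strong_induction_on with
  | _ n ih =>
    intro hn
    by_cases hbig : 6 ≤ n
    · -- inductive step
      have h4 : (n-2)/4 = (n-6)/4 + 1 := by omega
      rw [h4, Finset.sum_range_succ']
      have hstep : ∀ t, n - (4*(t+1)+2) = (n-4) - (4*t+2) := by intro t; omega
      have hIH := ih (n-4) (by omega) (by omega)
      have he : ((n-4)-2)/4 = (n-6)/4 := by omega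
      rw [he] at hIH
      have hsum1 : ∑ t ∈ Finset.range ((n-6)/4 + 1),
          (Nat.Partition.distincts (n - (4*(t+1)+2))).card
          = ∑ i ∈ Finset.range ((n-4)-1), (D3f i).card := by
        rw [← hIH]
        apply Finset.sum_congr rfl
        intro t _
        rw [hstep t]
      rw [hsum1]
      have h52 : (n-4)-1 = n-5 := by omega
      rw [h52]
      have hn2 : n - (4*0+2) = n - 2 := by norm_num
      rw [hn2, dc_big (n-2) (by omega)]
      have e1 : n-2-1 = n-3 := by omega
      have e2 : n-2-2 = n-4 := by omega
      have e3 : n-2-3 = n-5 := by omega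
      rw [e1, e2, e3]
      have hr : n-1 = (n-5)+1+1+1+1 := by omega
      rw [hr, Finset.sum_range_succ, Finset.sum_range_succ, Finset.sum_range_succ,
        Finset.sum_range_succ]
      have f1 : n-5+1 = n-4 := by omega
      have f2 : n-5+1+1 = n-3 := by omega
      have f3 : n-5+1+1+1 = n-2 := by omega
      rw [f1, f2, f3]
      omega
    · -- base case 2 ≤ n ≤ 5
      have h0 : (n-2)/4 = 0 := by omega
      rw [h0, Finset.sum_range_one]
      have hn2 : n - (4*0+2) = n - 2 := by norm_num
      rw [hn2, dc_small (n-2) (by omega)]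
      have : n-2+1 = n-1 := by omega
      rw [this]


end HookAux3

lemma On_card_eq (m : ℕ) : (HookAux.On m).card = (Nat.Partition.distincts m).card := by
  have h : HookAux.On m = Nat.Partition.odds m := by
    rw [HookAux.On, Nat.Partition.odds]
    apply Finset.filter_congr
    intro p _
    constructor
    · intro h i hi he; exact h i hi (even_iff_two_dvd.mp he)
    · intro h i hi hd; exact h i hi (even_iff_two_dvd.mpr hd)
  rw [h, Theorems100.partition_theorem]

lemma d3_eq (j : ℕ) : d3 j = (HookAux3.D3f j).card := rfl

theorem stmt4 : ∀ n : ℕ, 4 < n →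
    (b 2 2 n : ℤ) - (b 2 1 n : ℤ) =
      (∑ i ∈ Finset.range (n - 4), (d3 i : ℤ)) - (d3 (n - 1) : ℤ) := by
  intro n hn
  have hOn : (Finset.univ.filter (fun p : n.Partition => ∀ i ∈ p.parts, ¬ 2 ∣ i))
      = HookAux.On n := rfl
  have hb1 : b 2 1 n = ∑ p ∈ HookAux.On n, p.parts.toFinset.card := by
    simp only [b, hOn]
    exact Finset.sum_congr rfl (fun p _ => HookAux.hook_one_partition p)
  have hb2 : b 2 2 n
      = (∑ p ∈ HookAux.On n, (p.parts.toFinset.filter (fun a => 2 ≤ p.parts.count a)).card)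
        + ∑ p ∈ HookAux.On n, (p.parts.toFinset.filter (fun a => 2 ≤ a)).card := by
    simp only [b, hOn]
    rw [← Finset.sum_add_distrib]
    apply Finset.sum_congr rfl
    intro p hp
    apply HookAux.hook_two_partition
    rw [HookAux.On, Finset.mem_filter] at hp
    exact hp.2
  have S1 := HookAux.sum_distinct_split n
  have S2 := HookAux.card_with_one n (by omega)
  have S3 := HookAux2.sum_repeated n (by omega)
  have S3' : ∑ p ∈ HookAux.On n, (p.parts.toFinset.filter
        (fun a => 2 ≤ p.parts.count a)).card
      = ∑ t ∈ Finset.range ((n-2)/4 + 1), (Nat.Partition.distincts (n - (4*t+2))).card := by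
    rw [S3]
    exact Finset.sum_congr rfl (fun t _ => On_card_eq _)
  have S5 := HookAux3.tele n (by omega)
  have S6 := HookAux3.dc_big (n-1) (by omega)
  have e1 : n-1-1 = n-2 := by omega
  have e2 : n-1-2 = n-3 := by omega
  have e3 : n-1-3 = n-4 := by omega
  rw [e1, e2, e3] at S6
  have S7 : ∑ i ∈ Finset.range (n-1), (HookAux3.D3f i).card
      = (∑ i ∈ Finset.range (n-4), (HookAux3.D3f i).card)
        + (HookAux3.D3f (n-4)).card + (HookAux3.D3f (n-3)).card
        + (HookAux3.D3f (n-2)).card := by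
    have hr : n-1 = (n-4)+1+1+1 := by omega
    rw [hr, Finset.sum_range_succ, Finset.sum_range_succ, Finset.sum_range_succ]
    have f1 : n-4+1 = n-3 := by omega
    have f2 : n-4+1+1 = n-2 := by omega
    rw [f1, f2]
  have S2' : ((HookAux.On n).filter (fun p => 1 ∈ p.parts)).card
      = (Nat.Partition.distincts (n-1)).card := by
    rw [S2, On_card_eq]
  have hcast : (∑ i ∈ Finset.range (n - 4), (d3 i : ℤ))
      = ((∑ i ∈ Finset.range (n - 4), (HookAux3.D3f i).card : ℕ) : ℤ) := by
    push_cast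
    exact Finset.sum_congr rfl (fun i _ => by rw [d3_eq])
  rw [hcast]
  rw [hb1, hb2, S1, S3', S5, S7, d3_eq (n-1)]
  rw [S2'] at *
  rw [S6]
  push_cast
  ring_nf
end

section
/- For all integers n ≥ 2, d_3(n) ≥ d_3(n−1), where d_3(m) is the number of partitions of m into distinct parts each at least 3, and d_3(0) = 1. -/
open Finset PowerSeries

lemma multiset_sup_mem (s : Multiset ℕ) (hs : s ≠ 0) : s.sup ∈ s := by
  induction s using Multiset.induction with
  | empty => simp at hs
  | cons a t ih =>
    rcases eq_or_ne t 0 with rfl | ht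
    · simp
    · rw [Multiset.sup_cons]
      rcases le_total a t.sup with h | h
      · rw [sup_eq_right.2 h]; exact Multiset.mem_cons_of_mem (ih ht)
      · rw [sup_eq_left.2 h]; exact Multiset.mem_cons_self a _

theorem stmt5 : ∀ n : ℕ, 2 ≤ n → d3 (n - 1) ≤ d3 n := by
  intro n hn
  classical
  have build : ∀ p : (n - 1).Partition, p.parts.sup ∈ p.parts →
      {q : n.Partition // q.parts = (p.parts.sup + 1) ::ₘ p.parts.erase p.parts.sup} := by
    intro p hp
    refine ⟨⟨(p.parts.sup + 1) ::ₘ p.parts.erase p.parts.sup, ?_, ?_⟩, rfl⟩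
    · intro i hi
      rcases Multiset.mem_cons.1 hi with rfl | hi
      · exact Nat.succ_pos _
      · exact p.parts_pos (Multiset.mem_of_mem_erase hi)
    · have h1 : (p.parts.sup ::ₘ p.parts.erase p.parts.sup).sum = n - 1 := by
        rw [Multiset.cons_erase hp, p.parts_sum]
      rw [Multiset.sum_cons] at h1 ⊢
      have hle := Multiset.le_sum_of_mem hp
      rw [p.parts_sum] at hle
      omega
  set f : (n - 1).Partition → n.Partition := fun p =>
    if h : p.parts.sup ∈ p.parts then (build p h).1 else default with hf
  have hfparts : ∀ p : (n - 1).Partition, p.parts.sup ∈ p.parts →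
      (f p).parts = (p.parts.sup + 1) ::ₘ p.parts.erase p.parts.sup := by
    intro p hp; rw [hf]; simp only [dif_pos hp]; exact (build p hp).2
  apply Finset.card_le_card_of_injOn f
  · intro p hp
    simp only [Finset.mem_coe, Finset.mem_filter, Finset.mem_univ, true_and] at hp ⊢
    have hne : p.parts ≠ 0 := by
      intro h0
      have := p.parts_sum
      rw [h0] at this
      simp at this
      omega
    have hmem := multiset_sup_mem p.parts hne
    rw [hfparts p hmem]
    constructor
    · rw [Multiset.nodup_cons]
      constructor
      · intro hmem'
        have := Multiset.le_sup (Multiset.mem_of_mem_erase hmem')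
        omega
      · exact hp.1.erase _
    · intro i hi
      rcases Multiset.mem_cons.1 hi with rfl | hi
      · have := hp.2 _ hmem; omega
      · exact hp.2 _ (Multiset.mem_of_mem_erase hi)
  · intro p1 hp1 p2 hp2 heq
    simp only [Finset.coe_filter, Set.mem_setOf_eq, Finset.mem_univ, true_and] at hp1 hp2
    have hne1 : p1.parts ≠ 0 := by
      intro h0; have := p1.parts_sum; rw [h0] at this; simp at this; omega
    have hne2 : p2.parts ≠ 0 := by
      intro h0; have := p2.parts_sum; rw [h0] at this; simp at this; omega
    have hm1 := multiset_sup_mem p1.parts hne1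
    have hm2 := multiset_sup_mem p2.parts hne2
    have h1 := hfparts p1 hm1
    have h2 := hfparts p2 hm2
    have hpe : (p1.parts.sup + 1) ::ₘ p1.parts.erase p1.parts.sup =
        (p2.parts.sup + 1) ::ₘ p2.parts.erase p2.parts.sup := by
      rw [← h1, ← h2, heq]
    -- sup of both sides
    have hsup1 : ((p1.parts.sup + 1) ::ₘ p1.parts.erase p1.parts.sup).sup = p1.parts.sup + 1 := by
      rw [Multiset.sup_cons]
      have : (p1.parts.erase p1.parts.sup).sup ≤ p1.parts.sup :=
        Multiset.sup_le.2 fun b hb => Multiset.le_sup (Multiset.mem_of_mem_erase hb)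
      omega
    have hsup2 : ((p2.parts.sup + 1) ::ₘ p2.parts.erase p2.parts.sup).sup = p2.parts.sup + 1 := by
      rw [Multiset.sup_cons]
      have : (p2.parts.erase p2.parts.sup).sup ≤ p2.parts.sup :=
        Multiset.sup_le.2 fun b hb => Multiset.le_sup (Multiset.mem_of_mem_erase hb)
      omega
    have hsupeq : p1.parts.sup = p2.parts.sup := by
      have := hsup1
      rw [hpe, hsup2] at this
      omega
    have : p1.parts = p2.parts := by
      have e1 := Multiset.cons_erase hm1
      have e2 := Multiset.cons_erase hm2
      rw [hsupeq] at e1 hpe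
      rw [← e2, ← (Multiset.cons_inj_right _).1 hpe]
      exact e1.symm
    exact Nat.Partition.ext this
end

section
/- The generating function identity B_{2,2}(q) = (1/(q;q²)_∞) · ( q² + q³/(1−q²) + q⁶/(1−q⁴) ) holds as formal power series, where B_{2,2}(q) = ∑_{n≥0} b_{2,2}(n) qⁿ. -/
open Finset PowerSeries

namespace Stmt7Aux

/-- indices giving hooks of type (arm 1, leg 0) -/
def cA (l : List ℕ) : Finset ℕ :=
  (range l.length).filter fun i => 3 ≤ l.getD i 0 ∧ l.getD (i+1) 0 < l.getD i 0

/-- indices giving hooks of type (arm 0, leg 1) -/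
def cB (l : List ℕ) : Finset ℕ :=
  (range l.length).filter fun i =>
    ((range l.length).filter fun i' => i < i' ∧ l.getD i' 0 = l.getD i 0).card = 1

lemma getD_mem {l : List ℕ} {i : ℕ} (h : i < l.length) : l.getD i 0 ∈ l := by
  rw [List.getD_eq_getElem _ _ h]; exact List.getElem_mem _

lemma mono_getD {l : List ℕ} (hs : l.Pairwise (· ≥ ·)) {i j : ℕ} (hij : i ≤ j)
    (hj : j < l.length) : l.getD j 0 ≤ l.getD i 0 := by
  rw [List.getD_eq_getElem _ _ hj, List.getD_eq_getElem _ _ (lt_of_le_of_lt hij hj)]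
  exact hs.rel_get_of_le (by exact hij)

lemma count_idx (x : ℕ) : ∀ (xs : List ℕ),
    ((range xs.length).filter fun k => xs.getD k 0 = x).card = xs.count x := by
  intro xs
  induction xs with
  | nil => simp
  | cons y t ih =>
      rw [List.length_cons, Finset.card_filter, Finset.sum_range_succ']
      simp only [List.getD_cons_succ, List.getD_cons_zero, List.count_cons]
      rw [← Finset.card_filter, ih]
      by_cases h : y = x <;> simp [h]

lemma cA_cons (x : ℕ) (xs : List ℕ) :
    (cA (x :: xs)).card = (cA xs).card + (if 3 ≤ x ∧ xs.getD 0 0 < x then 1 else 0) := by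
  rw [cA, cA, List.length_cons, Finset.card_filter, Finset.sum_range_succ']
  simp only [List.getD_cons_succ, List.getD_cons_zero]
  rw [← Finset.card_filter]

lemma cB_cons (x : ℕ) (xs : List ℕ) :
    (cB (x :: xs)).card = (cB xs).card + (if xs.count x = 1 then 1 else 0) := by
  rw [cB, cB, List.length_cons, Finset.card_filter, Finset.sum_range_succ']
  have inner : ∀ m : ℕ, ((range (xs.length + 1)).filter
      fun i' => m + 1 < i' ∧ (x :: xs).getD i' 0 = xs.getD m 0).card =
      ((range xs.length).filter fun i' => m < i' ∧ xs.getD i' 0 = xs.getD m 0).card := by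
    intro m
    rw [Finset.card_filter, Finset.sum_range_succ']
    simp only [List.getD_cons_succ, List.getD_cons_zero, Nat.add_lt_add_iff_right]
    rw [← Finset.card_filter]
    simp
  have inner0 : ((range (xs.length + 1)).filter
      fun i' => 0 < i' ∧ (x :: xs).getD i' 0 = x).card = xs.count x := by
    rw [Finset.card_filter, Finset.sum_range_succ']
    simp only [List.getD_cons_succ, List.getD_cons_zero, Nat.zero_lt_succ, true_and]
    rw [← Finset.card_filter, count_idx]
    simp
  simp only [List.getD_cons_succ, List.getD_cons_zero, inner, inner0]
  rw [← Finset.card_filter]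

lemma head_lt {x : ℕ} {xs : List ℕ} (hall : ∀ b ∈ xs, b ≤ x) (h3 : 0 < x)
    (hmem : x ∉ xs) : xs.getD 0 0 < x := by
  cases xs with
  | nil => simpa
  | cons y t =>
      have h1 : y ≤ x := hall y (by simp)
      have h2 : y ≠ x := by rintro rfl; exact hmem (by simp)
      simp only [List.getD_cons_zero]; omega

lemma head_eq {x : ℕ} {xs : List ℕ} (hs : xs.Pairwise (· ≥ ·)) (hall : ∀ b ∈ xs, b ≤ x)
    (hmem : x ∈ xs) : xs.getD 0 0 = x := by
  cases xs with
  | nil => simp at hmem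
  | cons y t =>
      have h1 : y ≤ x := hall y (by simp)
      have h2 : x ≤ y := by
        rcases List.mem_cons.1 hmem with rfl | hmt
        · exact le_refl _
        · exact (List.pairwise_cons.1 hs).1 _ hmt
      simp only [List.getD_cons_zero]; omega

lemma cA_card : ∀ (l : List ℕ), l.Pairwise (· ≥ ·) →
    (cA l).card = (l.toFinset.filter (fun v => 3 ≤ v)).card := by
  intro l
  induction l with
  | nil => simp [cA]
  | cons x xs ih =>
      intro hs
      rw [List.pairwise_cons] at hs
      rw [cA_cons, ih hs.2, List.toFinset_cons, Finset.filter_insert]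
      by_cases h3 : 3 ≤ x
      · by_cases hmem : x ∈ xs
        · have hx0 : xs.getD 0 0 = x := head_eq hs.2 hs.1 hmem
          rw [if_neg (by omega), if_pos h3, add_zero,
            Finset.insert_eq_self.2 (by simp [hmem, h3])]
        · have hx0 : xs.getD 0 0 < x := head_lt hs.1 (by omega) hmem
          rw [if_pos ⟨h3, hx0⟩, if_pos h3,
            Finset.card_insert_of_notMem (by simp [hmem]), add_comm]
      · rw [if_neg (by omega), if_neg h3, add_zero]

lemma cB_card : ∀ (l : List ℕ),
    (cB l).card = (l.toFinset.filter (fun v => 2 ≤ l.count v)).card := by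
  intro l
  induction l with
  | nil => simp [cB]
  | cons x xs ih =>
      rw [cB_cons, ih, List.toFinset_cons, Finset.filter_insert]
      have hcx : (x :: xs).count x = xs.count x + 1 := by
        rw [List.count_cons]; simp
    

      have hmemx : x ∈ xs ↔ 0 < xs.count x := (List.count_pos_iff).symm
      have key : (xs.toFinset.filter (fun v => 2 ≤ (x :: xs).count v)) =
          if 1 ≤ xs.count x then
            insert x (xs.toFinset.filter (fun v => 2 ≤ xs.count v))
          else (xs.toFinset.filter (fun v => 2 ≤ xs.count v)) := by
        split_ifs with h
        · ext v
          simp only [Finset.mem_filter, Finset.mem_insert, List.mem_toFinset]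
          by_cases hvx : v = x
          · subst hvx
            simp only [hcx]
            constructor
            · intro _; simp
            · intro _; exact ⟨hmemx.2 (by omega), by omega⟩
          · have : (x :: xs).count v = xs.count v := by
              rw [List.count_cons]; simp [Ne.symm hvx]
            rw [this]
            tauto
        · ext v
          simp only [Finset.mem_filter, List.mem_toFinset]
          by_cases hvx : v = x
          · subst hvx
            constructor
            · intro hv; exact absurd (hmemx.1 hv.1) (by omega)
            · intro hv; exact absurd (hmemx.1 hv.1) (by omega)
          · have : (x :: xs).count v = xs.count v := by
              rw [List.count_cons]; simp [Ne.symm hvx]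
            rw [this]
        
      rw [key, hcx]
      by_cases h1 : 1 ≤ xs.count x
      · rw [if_pos h1, Finset.insert_idem]
        by_cases h2 : 2 ≤ xs.count x
        · rw [if_neg (show ¬ xs.count x = 1 by omega), add_zero,
            if_pos (show 2 ≤ xs.count x + 1 by omega), Finset.insert_eq_self.2
            (by simp only [Finset.mem_filter, List.mem_toFinset]
                exact ⟨hmemx.2 (by omega), h2⟩)]
        · have hx1 : xs.count x = 1 := by omega
          rw [if_pos hx1, if_pos (show 2 ≤ xs.count x + 1 by omega),
            Finset.card_insert_of_notMem (by simp [hx1])]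
      · rw [if_neg h1, if_neg (show ¬ xs.count x = 1 by omega), add_zero,
          if_neg (show ¬ 2 ≤ xs.count x + 1 by omega)]


theorem hookCount_two (l : List ℕ) (hs : l.Pairwise (· ≥ ·)) (hodd : ∀ x ∈ l, x % 2 = 1) :
    hookCount l 2 = (cA l).card + (cB l).card := by
  have hpos : ∀ i, i < l.length → 0 < l.getD i 0 := fun i hi => by
    have := hodd _ (getD_mem hi); omega
  have hoddi : ∀ i, i < l.length → l.getD i 0 % 2 = 1 := fun i hi => hodd _ (getD_mem hi)
  rw [hookCount]
  have hlist : ∀ (i j : ℕ),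
      ((List.range l.length).filter (fun i' => decide (i < i' ∧ j < l.getD i' 0))).length =
      ((range l.length).filter (fun i' => i < i' ∧ j < l.getD i' 0)).card := fun i j => rfl
  have key : ∀ p ∈ range l.length ×ˢ range (l.getD 0 0),
      ((p.2 < l.getD p.1 0 ∧
        (l.getD p.1 0 - p.2) +
          ((List.range l.length).filter
            (fun i' => p.1 < i' ∧ p.2 < l.getD i' 0)).length = 2) ↔
      ((p.2 + 2 = l.getD p.1 0 ∧ 3 ≤ l.getD p.1 0 ∧ l.getD (p.1+1) 0 < l.getD p.1 0) ∨
       (p.2 + 1 = l.getD p.1 0 ∧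
        ((range l.length).filter
          (fun i' => p.1 < i' ∧ l.getD i' 0 = l.getD p.1 0)).card = 1))) := by
    rintro ⟨i, j⟩ hp
    rw [Finset.mem_product, Finset.mem_range, Finset.mem_range] at hp
    obtain ⟨hi, hj0⟩ := hp
    dsimp only
    rw [hlist]
    set v := l.getD i 0 with hv
    constructor
    · rintro ⟨hjv, hsum⟩
      have hvj : 1 ≤ v - j := by omega
      rcases Nat.lt_or_ge (v - j) 2 with hc1 | hc2
      · -- v - j = 1, N = 1 : type B
        right
        have hj1 : j + 1 = v := by omega
        refine ⟨hj1, ?_⟩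
        have hset : ((range l.length).filter (fun i' => i < i' ∧ j < l.getD i' 0)) =
            ((range l.length).filter (fun i' => i < i' ∧ l.getD i' 0 = v)) := by
          apply Finset.filter_congr
          intro i' hi'
          rw [Finset.mem_range] at hi'
          constructor
          · rintro ⟨hii', hji'⟩
            have hle : l.getD i' 0 ≤ v := mono_getD hs (le_of_lt hii') hi'
            exact ⟨hii', by omega⟩
          · rintro ⟨hii', heq⟩
            exact ⟨hii', by omega⟩
        rw [hset] at hsum
        omega
      · -- v - j = 2, N = 0 : type A
        left
        have hj2 : j + 2 = v := by omega
        have hN : ((range l.length).filter (fun i' => i < i' ∧ j < l.getD i' 0)).card = 0 := by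
          omega
        rw [Finset.card_eq_zero, Finset.filter_eq_empty_iff] at hN
        have hv3 : 3 ≤ v := by have := hoddi i hi; omega
        refine ⟨hj2, hv3, ?_⟩
        by_cases hil : i + 1 < l.length
        · by_contra hcon
          push_neg at hcon
          have h1 : j < l.getD (i+1) 0 := by omega
          exact (hN (Finset.mem_range.2 hil)) ⟨Nat.lt_succ_self i, h1⟩
        · rw [List.getD_eq_default _ _ (le_of_not_gt hil)]
          omega
    · rintro (⟨hj2, hv3, hlt⟩ | ⟨hj1, hcard⟩)
      · have hjv : j < v := by omega
        refine ⟨hjv, ?_⟩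
        have hN : ((range l.length).filter (fun i' => i < i' ∧ j < l.getD i' 0)) = ∅ := by
          rw [Finset.filter_eq_empty_iff]
          rintro i' hi' ⟨hii', hji'⟩
          rw [Finset.mem_range] at hi'
          have hle : l.getD i' 0 ≤ l.getD (i+1) 0 := mono_getD hs hii' hi'
          have hoi' : l.getD i' 0 % 2 = 1 := hoddi i' hi'
          have hoi : v % 2 = 1 := hoddi i hi
          omega
        rw [hN]
        simp
        omega
      · have hjv : j < v := by omega
        refine ⟨hjv, ?_⟩
        have hset : ((range l.length).filter (fun i' => i < i' ∧ j < l.getD i' 0)) =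
            ((range l.length).filter (fun i' => i < i' ∧ l.getD i' 0 = v)) := by
          apply Finset.filter_congr
          intro i' hi'
          rw [Finset.mem_range] at hi'
          constructor
          · rintro ⟨hii', hji'⟩
            have hle : l.getD i' 0 ≤ v := mono_getD hs (le_of_lt hii') hi'
            exact ⟨hii', by omega⟩
          · rintro ⟨hii', heq⟩
            exact ⟨hii', by omega⟩
        rw [hset, hcard]
        omega
  rw [Finset.filter_congr key, Finset.filter_or]
  rw [Finset.card_union_of_disjoint]
  · congr 1
    · -- type A part
      have himg : ((range l.length ×ˢ range (l.getD 0 0)).filter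
          (fun p => p.2 + 2 = l.getD p.1 0 ∧ 3 ≤ l.getD p.1 0 ∧
            l.getD (p.1+1) 0 < l.getD p.1 0)) =
          (cA l).image (fun i => (i, l.getD i 0 - 2)) := by
        ext ⟨i, j⟩
        simp only [Finset.mem_filter, Finset.mem_product, Finset.mem_range,
          Finset.mem_image, cA, Prod.mk.injEq]
        constructor
        · rintro ⟨⟨hi, hj0⟩, hj2, hPA⟩
          exact ⟨i, ⟨hi, hPA⟩, rfl, by omega⟩
        · rintro ⟨a, ⟨ha, hPA⟩, rfl, rfl⟩
          obtain ⟨h3, hlt⟩ := hPA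
          have hle : l.getD a 0 ≤ l.getD 0 0 := mono_getD hs (Nat.zero_le a) ha
          exact ⟨⟨ha, by omega⟩, by omega, h3, hlt⟩
      rw [himg, Finset.card_image_of_injOn fun a _ b _ h => congrArg Prod.fst h]
    · -- type B part
      have himg : ((range l.length ×ˢ range (l.getD 0 0)).filter
          (fun p => p.2 + 1 = l.getD p.1 0 ∧
            ((range l.length).filter
              (fun i' => p.1 < i' ∧ l.getD i' 0 = l.getD p.1 0)).card = 1)) =
          (cB l).image (fun i => (i, l.getD i 0 - 1)) := by
        ext ⟨i, j⟩
        simp only [Finset.mem_filter, Finset.mem_product, Finset.mem_range,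
          Finset.mem_image, cB, Prod.mk.injEq]
        constructor
        · rintro ⟨⟨hi, hj0⟩, hj1, hPB⟩
          exact ⟨i, ⟨hi, hPB⟩, rfl, by omega⟩
        · rintro ⟨a, ⟨ha, hPB⟩, rfl, rfl⟩
          have hle : l.getD a 0 ≤ l.getD 0 0 := mono_getD hs (Nat.zero_le a) ha
          have hpa : 0 < l.getD a 0 := hpos a ha
          exact ⟨⟨ha, by omega⟩, by omega, hPB⟩
      rw [himg, Finset.card_image_of_injOn fun a _ b _ h => congrArg Prod.fst h]
  · rw [Finset.disjoint_left]
    rintro ⟨i, j⟩ h1 h2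
    rw [Finset.mem_filter] at h1 h2
    omega

theorem hook_multiset (s : Multiset ℕ) (hodd : ∀ x ∈ s, x % 2 = 1) :
    hookCount ((s.sort (· ≤ ·)).reverse) 2 =
      (s.toFinset.filter (fun v => 3 ≤ v)).card +
      (s.toFinset.filter (fun v => 2 ≤ s.count v)).card := by
  set l := (s.sort (· ≤ ·)).reverse with hl
  have hsorted : l.Pairwise (· ≥ ·) := by
    rw [hl, List.pairwise_reverse]
    exact Multiset.pairwise_sort s (· ≤ ·)
  have hmem : ∀ x, x ∈ l ↔ x ∈ s := by
    intro x; rw [hl, List.mem_reverse, Multiset.mem_sort]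
  have hcount : ∀ v, l.count v = s.count v := by
    intro v; rw [hl, List.count_reverse, ← Multiset.coe_count, Multiset.sort_eq]
  have htf : l.toFinset = s.toFinset := by
    ext v; rw [List.mem_toFinset, Multiset.mem_toFinset, hmem]
  rw [hookCount_two l hsorted (fun x hx => hodd x ((hmem x).1 hx)),
    cA_card l hsorted, cB_card l, htf]
  congr 1
  apply congrArg Finset.card
  exact Finset.filter_congr fun v _ => by rw [hcount]

/-- number of partitions of `m` into odd parts -/
def podd (m : ℕ) : ℕ :=
  ((Finset.univ : Finset (Nat.Partition m)).filter (fun p => ∀ i ∈ p.parts, ¬ 2 ∣ i)).card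

theorem card_mem_part (n v : ℕ) (hv : v % 2 = 1) (hvn : v ≤ n) :
    ((Finset.univ : Finset (Nat.Partition n)).filter
      (fun p => (∀ i ∈ p.parts, ¬ 2 ∣ i) ∧ v ∈ p.parts)).card = podd (n - v) := by
  rw [podd]
  apply Finset.card_bij (fun p hp =>
    (⟨p.parts.erase v,
      fun {i} hi => p.parts_pos (Multiset.mem_of_mem_erase hi), by
        have hp' := (Finset.mem_filter.1 hp).2
        have h := Multiset.sum_erase hp'.2
        rw [p.parts_sum] at h
        omega⟩ : Nat.Partition (n - v)))
  · intro p hp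
    have hp' := (Finset.mem_filter.1 hp).2
    exact Finset.mem_filter.2 ⟨Finset.mem_univ _,
      fun i hi => hp'.1 i (Multiset.mem_of_mem_erase hi)⟩
  · intro p₁ hp₁ p₂ hp₂ h
    have h' := congrArg Nat.Partition.parts h
    dsimp only at h'
    apply Nat.Partition.ext
    have h₁ := Multiset.cons_erase (Finset.mem_filter.1 hp₁).2.2
    have h₂ := Multiset.cons_erase (Finset.mem_filter.1 hp₂).2.2
    rw [← h₁, ← h₂, h']
  · intro q hq
    have hq' := (Finset.mem_filter.1 hq).2
    refine ⟨⟨v ::ₘ q.parts, fun {i} hi => ?_, by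
      rw [Multiset.sum_cons, q.parts_sum]; omega⟩, ?_, ?_⟩
    · rcases Multiset.mem_cons.1 hi with rfl | hi'
      · omega
      · exact q.parts_pos hi'
    · refine Finset.mem_filter.2 ⟨Finset.mem_univ _, fun i hi => ?_, Multiset.mem_cons_self _ _⟩
      rcases Multiset.mem_cons.1 hi with rfl | hi'
      · omega
      · exact hq' i hi'
    · apply Nat.Partition.ext
      exact Multiset.erase_cons_head _ _

theorem card_mem_part2 (n v : ℕ) (hv : v % 2 = 1) (hvn : 2 * v ≤ n) :
    ((Finset.univ : Finset (Nat.Partition n)).filter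
      (fun p => (∀ i ∈ p.parts, ¬ 2 ∣ i) ∧ 2 ≤ p.parts.count v)).card = podd (n - 2 * v) := by
  rw [podd]
  have hmem2 : ∀ p : Nat.Partition n, 2 ≤ p.parts.count v → v ∈ p.parts.erase v := by
    intro p h
    rw [← Multiset.count_pos, Multiset.count_erase_self]
    omega
  apply Finset.card_bij (fun p hp =>
    (⟨(p.parts.erase v).erase v,
      fun {i} hi => p.parts_pos (Multiset.mem_of_mem_erase (Multiset.mem_of_mem_erase hi)), by
        have hp' := (Finset.mem_filter.1 hp).2
        have hm1 : v ∈ p.parts := by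
          rw [← Multiset.count_pos]; omega
        have h1 := Multiset.sum_erase hm1
        have h2 := Multiset.sum_erase (hmem2 p hp'.2)
        rw [p.parts_sum] at h1
        omega⟩ : Nat.Partition (n - 2 * v)))
  · intro p hp
    have hp' := (Finset.mem_filter.1 hp).2
    exact Finset.mem_filter.2 ⟨Finset.mem_univ _,
      fun i hi => hp'.1 i (Multiset.mem_of_mem_erase (Multiset.mem_of_mem_erase hi))⟩
  · intro p₁ hp₁ p₂ hp₂ h
    have h' := congrArg Nat.Partition.parts h
    dsimp only at h'
    apply Nat.Partition.ext
    have e₁ := Multiset.cons_erase (hmem2 p₁ (Finset.mem_filter.1 hp₁).2.2)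
    have m₁ : v ∈ p₁.parts := by
      have := (Finset.mem_filter.1 hp₁).2.2
      rw [← Multiset.count_pos]; omega
    have e₂ := Multiset.cons_erase (hmem2 p₂ (Finset.mem_filter.1 hp₂).2.2)
    have m₂ : v ∈ p₂.parts := by
      have := (Finset.mem_filter.1 hp₂).2.2
      rw [← Multiset.count_pos]; omega
    rw [← Multiset.cons_erase m₁, ← Multiset.cons_erase m₂, ← e₁, ← e₂, h']
  · intro q hq
    have hq' := (Finset.mem_filter.1 hq).2
    refine ⟨⟨v ::ₘ v ::ₘ q.parts, fun {i} hi => ?_, by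
      rw [Multiset.sum_cons, Multiset.sum_cons, q.parts_sum]; omega⟩, ?_, ?_⟩
    · rcases Multiset.mem_cons.1 hi with rfl | hi'
      · omega
      · rcases Multiset.mem_cons.1 hi' with rfl | hi''
        · omega
        · exact q.parts_pos hi''
    · refine Finset.mem_filter.2 ⟨Finset.mem_univ _, fun i hi => ?_, ?_⟩
      · rcases Multiset.mem_cons.1 hi with rfl | hi'
        · omega
        · rcases Multiset.mem_cons.1 hi' with rfl | hi''
          · omega
          · exact hq' i hi''
      · rw [Multiset.count_cons_self, Multiset.count_cons_self]
        omega
    · apply Nat.Partition.ext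
      dsimp only
      rw [Multiset.erase_cons_head, Multiset.erase_cons_head]

theorem b_eq (n : ℕ) :
    b 2 2 n =
      (∑ v ∈ range (n+1), if 3 ≤ v ∧ v % 2 = 1 then podd (n - v) else 0) +
      (∑ v ∈ range (n+1), if v % 2 = 1 ∧ 2 * v ≤ n then podd (n - 2 * v) else 0) := by
  rw [b]
  set O := Finset.univ.filter (fun p : n.Partition => ∀ i ∈ p.parts, ¬ 2 ∣ i) with hO
  have hparts_odd : ∀ p ∈ O, ∀ x ∈ p.parts, x % 2 = 1 := by
    intro p hp x hx
    have h1 := (Finset.mem_filter.1 hp).2 x hx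
    have h2 := p.parts_pos hx
    omega
  rw [Finset.sum_congr rfl (fun p hp => hook_multiset p.parts (hparts_odd p hp)),
    Finset.sum_add_distrib]
  congr 1
  · -- distinct parts ≥ 3
    have step1 : ∀ p ∈ O, (p.parts.toFinset.filter (fun v => 3 ≤ v)).card =
        ∑ v ∈ range (n+1), (if v ∈ p.parts ∧ 3 ≤ v then 1 else 0) := by
      intro p _
      rw [← Finset.card_filter]
      apply congrArg Finset.card
      ext v
      simp only [Finset.mem_filter, Finset.mem_range, Multiset.mem_toFinset]
      constructor
      · rintro ⟨h1, h2⟩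
        have := Multiset.single_le_sum (fun x _ => Nat.zero_le x) v h1
        rw [p.parts_sum] at this
        exact ⟨by omega, h1, h2⟩
      · rintro ⟨_, h1, h2⟩; exact ⟨h1, h2⟩
    rw [Finset.sum_congr rfl step1, Finset.sum_comm]
    apply Finset.sum_congr rfl
    intro v hv
    rw [Finset.mem_range] at hv
    rw [← Finset.card_filter]
    by_cases h3 : 3 ≤ v
    · by_cases hoddv : v % 2 = 1
      · rw [if_pos ⟨h3, hoddv⟩, ← card_mem_part n v hoddv (by omega)]
        apply congrArg Finset.card
        rw [hO, Finset.filter_filter]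
        apply Finset.filter_congr
        intro p _
        tauto
      · rw [if_neg (by omega), Finset.card_eq_zero, Finset.filter_eq_empty_iff]
        rintro p hp ⟨hvp, _⟩
        have := (Finset.mem_filter.1 hp).2 v hvp
        omega
    · rw [if_neg (by omega), Finset.card_eq_zero, Finset.filter_eq_empty_iff]
      rintro p hp ⟨_, h3'⟩
      omega
  · -- repeated parts
    have step1 : ∀ p ∈ O, (p.parts.toFinset.filter (fun v => 2 ≤ p.parts.count v)).card =
        ∑ v ∈ range (n+1), (if 2 ≤ p.parts.count v then 1 else 0) := by
      intro p _
      rw [← Finset.card_filter]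
      apply congrArg Finset.card
      ext v
      simp only [Finset.mem_filter, Finset.mem_range, Multiset.mem_toFinset]
      constructor
      · rintro ⟨h1, h2⟩
        have := Multiset.single_le_sum (fun x _ => Nat.zero_le x) v h1
        rw [p.parts_sum] at this
        exact ⟨by omega, h2⟩
      · rintro ⟨_, h2⟩
        refine ⟨by rw [← Multiset.count_pos]; omega, h2⟩
    rw [Finset.sum_congr rfl step1, Finset.sum_comm]
    apply Finset.sum_congr rfl
    intro v hv
    rw [Finset.mem_range] at hv
    rw [← Finset.card_filter]
    have hbound : ∀ p : Nat.Partition n, 2 ≤ p.parts.count v → 0 < v → 2 * v ≤ n := by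
      intro p hc hv0
      have hm1 : v ∈ p.parts := by rw [← Multiset.count_pos]; omega
      have hm2 : v ∈ p.parts.erase v := by
        rw [← Multiset.count_pos, Multiset.count_erase_self]; omega
      have h1 := Multiset.sum_erase hm1
      have h2 := Multiset.single_le_sum (fun x _ => Nat.zero_le x) v hm2
      rw [p.parts_sum] at h1
      omega
    by_cases hoddv : v % 2 = 1
    · by_cases h2v : 2 * v ≤ n
      · rw [if_pos ⟨hoddv, h2v⟩, ← card_mem_part2 n v hoddv h2v]
        apply congrArg Finset.card
        rw [hO, Finset.filter_filter]
      · rw [if_neg (by omega), Finset.card_eq_zero, Finset.filter_eq_empty_iff]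
        intro p hp hc
        exact h2v (hbound p hc (by omega))
    · rw [if_neg (by omega), Finset.card_eq_zero, Finset.filter_eq_empty_iff]
      intro p hp hc
      have hm1 : v ∈ p.parts := by rw [← Multiset.count_pos]; omega
      have := (Finset.mem_filter.1 hp).2 v hm1
      omega

section ArchiveCopy
open PowerSeries


noncomputable section

variable {α : Type*}

open Finset

open scoped Classical

/-- The partial product for the generating function for odd partitions.
TODO: As `m` tends to infinity, this converges (in the `X`-adic topology).

If `m` is sufficiently large, the `i`th coefficient gives the number of odd partitions of the
natural number `i`: proved in `oddGF_prop`.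
It is stated for an arbitrary field `α`, though it usually suffices to use `ℚ` or `ℝ`.
-/
def partialOddGF (m : ℕ) [Field α] :=
  ∏ i ∈ range m, (1 - (X : PowerSeries α) ^ (2 * i + 1))⁻¹

open Finset.HasAntidiagonal

universe u
variable {ι : Type u}

/-- A convenience constructor for the power series whose coefficients indicate a subset. -/
def indicatorSeries (α : Type*) [Semiring α] (s : Set ℕ) : PowerSeries α :=
  PowerSeries.mk fun n => if n ∈ s then 1 else 0

theorem coeff_indicator (s : Set ℕ) [Semiring α] (n : ℕ) :
    coeff (R := α) n (indicatorSeries _ s) = if n ∈ s then 1 else 0 :=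
  coeff_mk _ _

theorem coeff_indicator_pos (s : Set ℕ) [Semiring α] (n : ℕ) (h : n ∈ s) :
    coeff (R := α) n (indicatorSeries _ s) = 1 := by rw [coeff_indicator, if_pos h]

theorem coeff_indicator_neg (s : Set ℕ) [Semiring α] (n : ℕ) (h : n ∉ s) :
    coeff (R := α) n (indicatorSeries _ s) = 0 := by rw [coeff_indicator, if_neg h]

theorem constantCoeff_indicator (s : Set ℕ) [Semiring α] :
    constantCoeff (R := α) (indicatorSeries _ s) = if 0 ∈ s then 1 else 0 :=
  rfl

theorem num_series' [Field α] (i : ℕ) :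
    (1 - (X : PowerSeries α) ^ (i + 1))⁻¹ = indicatorSeries α {k | i + 1 ∣ k} := by
  rw [PowerSeries.inv_eq_iff_mul_eq_one]
  · ext n
    cases n with
    | zero => simp [mul_sub, zero_pow, constantCoeff_indicator]
    | succ n =>
      simp only [coeff_one, if_false, mul_sub, mul_one, coeff_indicator,
        LinearMap.map_sub, reduceCtorEq]
      simp_rw [coeff_mul, coeff_X_pow, coeff_indicator, @boole_mul _ _ _ _]
      erw [@sum_ite _ _ _ _ _ (fun _ => Classical.propDecidable _), sum_ite]
      simp_rw [@filter_filter _ _ _ _ _, sum_const_zero, add_zero, sum_const, nsmul_eq_mul, mul_one,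
        sub_eq_iff_eq_add, zero_add]
      symm
      split_ifs with h
      · suffices #{a ∈ antidiagonal (n + 1) | i + 1 ∣ a.fst ∧ a.snd = i + 1} = 1 by
          simp only [Set.mem_setOf_eq]; convert congr_arg ((↑) : ℕ → α) this; norm_cast
        rw [card_eq_one]
        cases' h with p hp
        refine ⟨((i + 1) * (p - 1), i + 1), ?_⟩
        ext ⟨a₁, a₂⟩
        simp only [mem_filter, Prod.mk.injEq, Finset.HasAntidiagonal.mem_antidiagonal, mem_singleton]
        constructor
        · rintro ⟨a_left, ⟨a, rfl⟩, rfl⟩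
          refine ⟨?_, rfl⟩
          rw [Nat.mul_sub_left_distrib, ← hp, ← a_left, mul_one, Nat.add_sub_cancel]
        · rintro ⟨rfl, rfl⟩
          match p with
          | 0 => rw [mul_zero] at hp; cases hp
          | p + 1 => rw [hp]; simp [mul_add]
      · suffices #{a ∈ antidiagonal (n + 1) | i + 1 ∣ a.fst ∧ a.snd = i + 1} = 0 by
          simp only [Set.mem_setOf_eq]; convert congr_arg ((↑) : ℕ → α) this; norm_cast
        rw [card_eq_zero]
        apply eq_empty_of_forall_notMem
        simp only [Prod.forall, mem_filter, not_and, Finset.HasAntidiagonal.mem_antidiagonal]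
        rintro _ h₁ h₂ ⟨a, rfl⟩ rfl
        apply h
        simp [← h₂]
  · simp [zero_pow]

def mkOdd : ℕ ↪ ℕ :=
  ⟨fun i => 2 * i + 1, fun x y h => by linarith⟩

-- The main workhorse of the partition theorem proof.
theorem partialGF_prop (α : Type*) [CommSemiring α] (n : ℕ) (s : Finset ℕ) (hs : ∀ i ∈ s, 0 < i)
    (c : ℕ → Set ℕ) (hc : ∀ i, i ∉ s → 0 ∈ c i) :
    #{p : n.Partition | (∀ j, p.parts.count j ∈ c j) ∧ ∀ j ∈ p.parts, j ∈ s} =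
      coeff n (∏ i ∈ s, indicatorSeries α ((· * i) '' c i)) := by
  simp_rw [coeff_prod, coeff_indicator, prod_boole, sum_boole]
  apply congr_arg
  simp only [mem_univ, forall_true_left, not_and, not_forall, exists_prop,
    Set.mem_image, not_exists]
  set φ : (a : Nat.Partition n) →
    a ∈ filter (fun p ↦ (∀ (j : ℕ), Multiset.count j p.parts ∈ c j) ∧ ∀ j ∈ p.parts, j ∈ s) univ →
    ℕ →₀ ℕ := fun p _ => {
      toFun := fun i => Multiset.count i p.parts • i
      support := Finset.filter (fun i => i ≠ 0) p.parts.toFinset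
      mem_support_toFun := fun a => by
        simp only [smul_eq_mul, ne_eq, mul_eq_zero, Multiset.count_eq_zero]
        rw [not_or, not_not]
        simp only [Multiset.mem_toFinset, not_not, mem_filter] }
  refine Finset.card_bij φ ?_ ?_ ?_
  · intro a ha
    simp only [φ, not_forall, not_exists, not_and, exists_prop, mem_filter]
    rw [mem_finsuppAntidiag]
    dsimp only [ne_eq, smul_eq_mul, id_eq, eq_mpr_eq_cast, le_eq_subset, Finsupp.coe_mk]
    simp only [mem_univ, forall_true_left, not_and, not_forall, exists_prop,
      mem_filter, true_and] at ha
    refine ⟨⟨?_, fun i ↦ ?_⟩, fun i _ ↦ ⟨a.parts.count i, ha.1 i, rfl⟩⟩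
    · conv_rhs => simp [← a.parts_sum]
      rw [sum_multiset_count_of_subset _ s]
      · simp only [smul_eq_mul]
      · intro i
        simp only [Multiset.mem_toFinset, not_not, mem_filter]
        apply ha.2
    · simp only [ne_eq, Multiset.mem_toFinset, not_not, mem_filter, and_imp]
      exact fun hi _ ↦ ha.2 i hi
  · intro p₁ hp₁ p₂ hp₂ h
    apply Nat.Partition.ext
    simp only [true_and, mem_univ, mem_filter] at hp₁ hp₂
    ext i
    simp only [φ, ne_eq, Multiset.mem_toFinset, not_not, smul_eq_mul, Finsupp.mk.injEq] at h
    by_cases hi : i = 0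
    · rw [hi]
      rw [Multiset.count_eq_zero_of_notMem]
      · rw [Multiset.count_eq_zero_of_notMem]
        intro a; exact Nat.lt_irrefl 0 (hs 0 (hp₂.2 0 a))
      intro a; exact Nat.lt_irrefl 0 (hs 0 (hp₁.2 0 a))
    · rw [← mul_left_inj' hi]
      rw [funext_iff] at h
      exact h.2 i
  · simp only [φ, mem_filter, mem_finsuppAntidiag, mem_univ, exists_prop, true_and, and_assoc]
    rintro f ⟨hf, hf₃, hf₄⟩
    have hf' : f ∈ finsuppAntidiag s n := mem_finsuppAntidiag.mpr ⟨hf, hf₃⟩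
    simp only [mem_finsuppAntidiag] at hf'
    refine ⟨⟨∑ i ∈ s, Multiset.replicate (f i / i) i, ?_, ?_⟩, ?_, ?_, ?_⟩
    · intro i hi
      simp only [exists_prop, Multiset.mem_sum, mem_map, Function.Embedding.coeFn_mk] at hi
      rcases hi with ⟨t, ht, z⟩
      apply hs
      rwa [Multiset.eq_of_mem_replicate z]
    · simp_rw [Multiset.sum_sum, Multiset.sum_replicate, Nat.nsmul_eq_mul]
      rw [← hf'.1]
      refine sum_congr rfl fun i hi => Nat.div_mul_cancel ?_
      rcases hf₄ i hi with ⟨w, _, hw₂⟩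
      rw [← hw₂]
      exact dvd_mul_left _ _
    · intro i
      simp_rw [Multiset.count_sum', Multiset.count_replicate, sum_ite_eq']
      split_ifs with h
      · rcases hf₄ i h with ⟨w, hw₁, hw₂⟩
        rwa [← hw₂, Nat.mul_div_cancel _ (hs i h)]
      · exact hc _ h
    · intro i hi
      rw [Multiset.mem_sum] at hi
      rcases hi with ⟨j, hj₁, hj₂⟩
      rwa [Multiset.eq_of_mem_replicate hj₂]
    · ext i
      simp_rw [Multiset.count_sum', Multiset.count_replicate, sum_ite_eq']
      simp only [ne_eq, Multiset.mem_toFinset, not_not, smul_eq_mul, ite_mul,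
        zero_mul, Finsupp.coe_mk]
      split_ifs with h
      · apply Nat.div_mul_cancel
        rcases hf₄ i h with ⟨w, _, hw₂⟩
        apply Dvd.intro_left _ hw₂
      · apply symm
        rw [← Finsupp.notMem_support_iff]
        exact notMem_mono hf'.2 h

theorem partialOddGF_prop [Field α] (n m : ℕ) :
    #{p : n.Partition | ∀ j ∈ p.parts, j ∈ (range m).map mkOdd} = coeff (R := α) n (partialOddGF m) := by
  rw [partialOddGF]
  convert partialGF_prop α n
    ((range m).map mkOdd) _ (fun _ => Set.univ) (fun _ _ => trivial) using 2
  · congr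
    simp only [true_and, forall_const, Set.mem_univ]
  · rw [Finset.prod_map]
    simp_rw [num_series']
    congr! 2 with x
    ext k
    constructor
    · rintro ⟨p, rfl⟩
      refine ⟨p, ⟨⟩, ?_⟩
      apply mul_comm
    rintro ⟨a_w, -, rfl⟩
    apply Dvd.intro_left a_w rfl
  · intro i
    rw [mem_map]
    rintro ⟨a, -, rfl⟩
    exact Nat.succ_pos _

/-- If m is big enough, the partial product's coefficient counts the number of odd partitions -/
theorem oddGF_prop [Field α] (n m : ℕ) (h : n < m * 2) :
    #(Nat.Partition.odds n) = coeff (R := α) n (partialOddGF m) := by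
  rw [← partialOddGF_prop, Nat.Partition.odds]
  congr 2 with p
  simp only [Nat.Partition.restricted, mem_filter, mem_univ, true_and]
  apply forall₂_congr
  intro i hi
  have hin : i ≤ n := by
    simpa [p.parts_sum] using Multiset.single_le_sum (fun _ _ => Nat.zero_le _) _ hi
  simp only [mkOdd, exists_prop, mem_range, Function.Embedding.coeFn_mk, mem_map]
  constructor
  · intro hi₂
    have := Nat.mod_add_div i 2
    rw [Nat.not_even_iff] at hi₂
    rw [hi₂, add_comm] at this
    refine ⟨i / 2, ?_, this⟩
    rw [Nat.div_lt_iff_lt_mul zero_lt_two]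
    exact lt_of_le_of_lt hin h
  · rintro ⟨a, -, rfl⟩
    rw [even_iff_two_dvd]
    apply Nat.two_not_dvd_two_mul_add_one


end
end ArchiveCopy

open PowerSeries

lemma podd_eq (m : ℕ) : podd m = (Nat.Partition.odds m).card := by
  rw [podd, Nat.Partition.odds]
  apply congrArg Finset.card
  apply Finset.filter_congr
  intro p _
  constructor
  · intro h i hi
    have := h i hi
    rw [Nat.even_iff]
    omega
  · intro h i hi
    have := h i hi
    simp only [Nat.even_iff] at this
    omega

lemma coeff_inv_one_sub_pow (m b : ℕ) (hm : 0 < m) :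
    (PowerSeries.coeff (R := ℚ) b) (1 - (X : ℚ⟦X⟧) ^ m)⁻¹ = if m ∣ b then 1 else 0 := by
  have h := num_series' (α := ℚ) (m - 1)
  rw [Nat.sub_add_cancel hm] at h
  rw [h, coeff_indicator]
  by_cases hd : m ∣ b <;> simp [Set.mem_setOf_eq, hd]

lemma coeff_F (bq : ℕ) :
    (PowerSeries.coeff (R := ℚ) bq) ((X : ℚ⟦X⟧) ^ 2 + X ^ 3 * (1 - X ^ 2)⁻¹ + X ^ 6 * (1 - X ^ 4)⁻¹) =
    if bq = 2 ∨ (3 ≤ bq ∧ bq % 2 = 1) ∨ (6 ≤ bq ∧ bq % 4 = 2) then 1 else 0 := by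
  rw [map_add, map_add, PowerSeries.coeff_X_pow, PowerSeries.coeff_X_pow_mul',
    PowerSeries.coeff_X_pow_mul', coeff_inv_one_sub_pow 2 _ (by norm_num),
    coeff_inv_one_sub_pow 4 _ (by norm_num)]
  split_ifs <;> first | (exfalso; omega) | norm_num

lemma coeff_rhs (n : ℕ) :
    (PowerSeries.coeff (R := ℚ) n)
        ((∏ m ∈ Finset.range (n + 1), (1 - (X : ℚ⟦X⟧) ^ (2 * m + 1))⁻¹) *
          (X ^ 2 + X ^ 3 * (1 - X ^ 2)⁻¹ + X ^ 6 * (1 - X ^ 4)⁻¹)) =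
    ∑ v ∈ range (n + 1),
      (if v = 2 ∨ (3 ≤ v ∧ v % 2 = 1) ∨ (6 ≤ v ∧ v % 4 = 2)
        then ((Nat.Partition.odds (n - v)).card : ℚ) else 0) := by
  rw [PowerSeries.coeff_mul, Finset.Nat.sum_antidiagonal_eq_sum_range_succ_mk]
  have hP : ∀ k, k ≤ n → (PowerSeries.coeff (R := ℚ) k)
      (∏ m ∈ Finset.range (n + 1), (1 - (X : ℚ⟦X⟧) ^ (2 * m + 1))⁻¹) =
      ((Nat.Partition.odds k).card : ℚ) := by
    intro k hk
    rw [show (∏ m ∈ Finset.range (n + 1), (1 - (X : ℚ⟦X⟧) ^ (2 * m + 1))⁻¹) =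
      partialOddGF (n + 1) from rfl]
    exact (oddGF_prop k (n + 1) (by omega)).symm
  have hstep : ∀ k ∈ range (n + 1),
      (PowerSeries.coeff (R := ℚ) k)
        (∏ m ∈ Finset.range (n + 1), (1 - (X : ℚ⟦X⟧) ^ (2 * m + 1))⁻¹) *
      (PowerSeries.coeff (R := ℚ) (n - k)) ((X : ℚ⟦X⟧) ^ 2 + X ^ 3 * (1 - X ^ 2)⁻¹ +
        X ^ 6 * (1 - X ^ 4)⁻¹) =
      (fun k => ((Nat.Partition.odds k).card : ℚ) *
        (if (n - k) = 2 ∨ (3 ≤ (n - k) ∧ (n - k) % 2 = 1) ∨ (6 ≤ (n - k) ∧ (n - k) % 4 = 2)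
          then 1 else 0)) k := by
    intro k hk
    rw [Finset.mem_range] at hk
    rw [hP k (by omega), coeff_F]
  rw [Finset.sum_congr rfl hstep, ← Finset.sum_range_reflect]
  apply Finset.sum_congr rfl
  intro v hv
  rw [Finset.mem_range] at hv
  have h1 : n + 1 - 1 - v = n - v := by omega
  have h2 : n - (n - v) = v := by omega
  rw [h1, h2]
  split_ifs <;> simp

lemma T2_reindex (n : ℕ) :
    (∑ v ∈ range (n+1), if v % 2 = 1 ∧ 2 * v ≤ n then podd (n - 2 * v) else 0) =
    (∑ k ∈ range (n+1), if k % 4 = 2 then podd (n - k) else 0) := by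
  rw [← Finset.sum_filter, ← Finset.sum_filter]
  apply Finset.sum_nbij' (fun v => 2 * v) (fun k => k / 2)
  · intro a ha
    simp only [Finset.mem_filter, Finset.mem_range] at ha ⊢
    omega
  · intro a ha
    simp only [Finset.mem_filter, Finset.mem_range] at ha ⊢
    omega
  · intro a _
    omega
  · intro a ha
    simp only [Finset.mem_filter, Finset.mem_range] at ha
    omega
  · intro a ha
    rfl

theorem b_natEq (n : ℕ) :
    b 2 2 n = ∑ v ∈ range (n+1),
      if v = 2 ∨ (3 ≤ v ∧ v % 2 = 1) ∨ (6 ≤ v ∧ v % 4 = 2)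
        then (Nat.Partition.odds (n - v)).card else 0 := by
  rw [b_eq, T2_reindex, ← Finset.sum_add_distrib]
  apply Finset.sum_congr rfl
  intro v hv
  rw [Finset.mem_range] at hv
  rw [podd_eq]
  split_ifs <;> omega

theorem main_result : ∀ n : ℕ,
    (PowerSeries.coeff (R := ℚ) n) (PowerSeries.mk fun m => (b 2 2 m : ℚ)) =
      (PowerSeries.coeff (R := ℚ) n)
        ((∏ m ∈ Finset.range (n + 1), (1 - (X : ℚ⟦X⟧) ^ (2 * m + 1))⁻¹) *
          (X ^ 2 + X ^ 3 * (1 - X ^ 2)⁻¹ + X ^ 6 * (1 - X ^ 4)⁻¹)) := by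
  intro n
  rw [PowerSeries.coeff_mk, coeff_rhs n, b_natEq n]
  push_cast [apply_ite (Nat.cast : ℕ → ℚ)]
  rfl

end Stmt7Aux

theorem stmt7 : ∀ n : ℕ,
    (PowerSeries.coeff (R := ℚ) n) (PowerSeries.mk fun m => (b 2 2 m : ℚ)) =
      (PowerSeries.coeff (R := ℚ) n)
        ((∏ m ∈ Finset.range (n + 1), (1 - (X : ℚ⟦X⟧) ^ (2 * m + 1))⁻¹) *
          (X ^ 2 + X ^ 3 * (1 - X ^ 2)⁻¹ + X ^ 6 * (1 - X ^ 4)⁻¹)) := Stmt7Aux.main_result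
end

section
/- Sylvester's identity: as formal power series in q with parameter x, ∏_{m≥1}(1+xq^m) = ∑_{n≥0} [(−xq;q)_n / (q;q)_n] · (1 + x q^{2n+1}) · x^n q^{n(3n+1)/2}, where (a;q)_n = ∏_{i=0}^{n−1}(1 − a q^i). -/
open Finset PowerSeries

noncomputable section Sylv

abbrev SS : Type := PowerSeries (RatFunc ℚ)

def xx : SS := PowerSeries.C (R := RatFunc ℚ) RatFunc.X

def gg : ℕ → ℕ → SS
  | _, 0 => 1
  | 0, _+1 => 0
  | a+1, b+1 => gg a (b+1) + X^(a-b) * gg a b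

def PP (n : ℕ) : SS := ∏ i ∈ range n, (1 + xx * X^(i+1))

def EE (n : ℕ) : SS := ∏ i ∈ range n, (1 - (X : SS)^(i+1))

def ww (n : ℕ) : ℕ := n * (3 * n + 1) / 2

def AA (M n : ℕ) : SS :=
  xx^n * X^(ww n) * PP n * (gg (M-n) n + xx * X^(2*n+1) * gg (M-n-1) n)

@[simp] lemma gg_zero_right (a : ℕ) : gg a 0 = 1 := by cases a <;> rfl

@[simp] lemma gg_zero_left (b : ℕ) : gg 0 (b+1) = 0 := rfl

lemma gg_succ (a b : ℕ) : gg (a+1) (b+1) = gg a (b+1) + X^(a-b) * gg a b := rfl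

lemma gg_lt : ∀ a b : ℕ, a < b → gg a b = 0 := by
  intro a
  induction a with
  | zero => intro b hb; cases b with | zero => omega | succ b => rfl
  | succ a ih =>
    intro b hb
    cases b with
    | zero => omega
    | succ b => rw [gg_succ, ih b (by omega), ih (b+1) (by omega)]; ring

lemma gg_diag : ∀ a : ℕ, gg a a = 1 := by
  intro a
  induction a with
  | zero => rfl
  | succ a ih => rw [gg_succ, ih, gg_lt a (a+1) (by omega)]; simp

lemma absorb : ∀ a b : ℕ, (1 - X^(b+1)) * gg a (b+1) = (1 - X^(a-b)) * gg a b := by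
  intro a
  induction a with
  | zero =>
    intro b
    rw [gg_zero_left]
    have : (0:ℕ) - b = 0 := by omega
    rw [this]
    simp
  | succ a ih =>
    intro b
    rcases le_or_gt b a with hba | hba
    · -- b ≤ a
      rw [gg_succ]
      have h1 : (1 - X^(b+1)) * (gg a (b+1) + X^(a-b) * gg a b)
          = (1 - X^(a-b)) * gg a b + X^(a-b) * ((1 - X^(b+1)) * gg a b) := by
        rw [mul_add, ih b]; ring
      rw [h1]
      have hab : a - b + (b + 1) = a + 1 := by omega
      have h2 : (1 - X^(a-b)) * gg a b + X^(a-b) * ((1 - X^(b+1)) * gg a b)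
          = (1 - X^(a+1)) * gg a b := by
        rw [← hab, pow_add]; ring
      rw [h2]
      cases b with
      | zero => simp
      | succ b' =>
        -- goal: (1 - X^(a+1)) * gg a (b'+1) = (1 - X^((a+1)-(b'+1))) * gg (a+1) (b'+1)
        have he : (a+1) - (b'+1) = a - b' := by omega
        rw [he, gg_succ]
        have h3 : (1 - X^(a-b')) * (gg a (b'+1) + X^(a-b') * gg a b')
            = (1 - X^(a-b')) * gg a (b'+1) + X^(a-b') * ((1 - X^(b'+1)) * gg a (b'+1)) := by
          rw [ih b']; ring
        rw [h3]
        have hab' : a - b' + (b' + 1) = a + 1 := by omega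
        rw [← hab', pow_add]
        ring
    · -- a < b
      rw [gg_succ, gg_lt a (b+1) (by omega), gg_lt a b hba]
      rcases eq_or_lt_of_le (Nat.succ_le_of_lt hba) with hb | hb
      · -- b = a+1
        have : a + 1 - b = 0 := by omega
        rw [this]
        simp
      · rw [gg_lt (a+1) b hb]
        ring

lemma pascal2 (a b : ℕ) : gg (a+1) (b+1) = X^(b+1) * gg a (b+1) + gg a b := by
  rw [gg_succ]
  linear_combination (absorb a b)

lemma two_ww (n : ℕ) : 2 * ww n = n * (3 * n + 1) := by
  have h : 2 ∣ n * (3 * n + 1) := by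
    rcases Nat.even_or_odd n with ⟨k, hk⟩ | ⟨k, hk⟩
    · exact ⟨k * (3*n+1), by subst hk; ring⟩
    · exact ⟨n * (3*k+2), by subst hk; ring⟩
  rw [ww, Nat.mul_div_cancel' h]

lemma ww_succ (n : ℕ) : ww (n+1) = ww n + 3*n + 2 := by
  have h1 := two_ww n
  have h2 : 2 * ww (n+1) = n*(3*n+1) + 6*n + 4 := by rw [two_ww]; ring
  omega

lemma ww_zero : ww 0 = 0 := rfl

lemma ww_one : ww 1 = 2 := rfl

lemma ww_ge (n : ℕ) (hn : 1 ≤ n) : 2 * n ≤ ww n := by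
  have h1 := two_ww n
  have h4 : 4 * n ≤ n * (3 * n + 1) := by nlinarith
  omega

lemma EF : ∀ n a : ℕ, n ≤ a →
    EE n * gg a n = ∏ i ∈ range n, (1 - (X:SS)^(a-n+1+i)) := by
  intro n
  induction n with
  | zero => intro a _; simp [EE]
  | succ n ih =>
    intro a ha
    have h1 : EE (n+1) = EE n * (1 - X^(n+1)) := by
      rw [EE, EE, prod_range_succ]
    rw [h1, mul_assoc, absorb a n,
      show EE n * ((1 - X^(a-n)) * gg a n) = (1 - X^(a-n)) * (EE n * gg a n) from by ring,
      ih a (by omega)]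
    rw [prod_range_succ']
    have h2 : a - (n+1) + 1 + 0 = a - n := by omega
    rw [h2, mul_comm]
    congr 1
    apply prod_congr rfl
    intro i _
    congr 2
    omega

lemma prod_one_sub_dvd : ∀ b k : ℕ, (X:SS)^k ∣ (∏ i ∈ range b, (1 - (X:SS)^(k+i))) - 1 := by
  intro b
  induction b with
  | zero => intro k; simp
  | succ b ih =>
    intro k
    rw [prod_range_succ]
    have h1 : (∏ i ∈ range b, (1 - (X:SS)^(k+i))) * (1 - X^(k+b)) - 1
        = ((∏ i ∈ range b, (1 - (X:SS)^(k+i))) - 1) * (1 - X^(k+b)) - X^(k+b) := by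
      ring
    rw [h1]
    apply dvd_sub
    · exact Dvd.dvd.mul_right (ih k) _
    · exact pow_dvd_pow X (by omega)

lemma EE_unit (n : ℕ) : (constantCoeff (R := RatFunc ℚ)) (EE n) ≠ 0 := by
  rw [EE, map_prod]
  have : ∀ i ∈ range n, (constantCoeff (R := RatFunc ℚ)) (1 - (X:SS)^(i+1)) = 1 := by
    intro i _
    simp
  rw [prod_congr rfl this]
  simp

lemma g_approx (n a : ℕ) (h : n ≤ a) :
    (X:SS)^(a-n+1) ∣ (gg a n - (EE n)⁻¹) := by
  have hE : EE n * (EE n)⁻¹ = 1 := PowerSeries.mul_inv_cancel _ (EE_unit n)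
  have h1 : gg a n - (EE n)⁻¹ = (EE n)⁻¹ * (EE n * gg a n - 1) := by
    have : (EE n)⁻¹ * (EE n * gg a n) = gg a n := by
      rw [← mul_assoc, mul_comm ((EE n)⁻¹) (EE n), hE, one_mul]
    rw [mul_sub, this, mul_one]
  rw [h1, EF n a h]
  exact Dvd.dvd.mul_left (prod_one_sub_dvd n (a-n+1)) _

def BP (m j : ℕ) : SS := xx^(j+2) * X^(ww (j+1) + m + 3) * PP (j+1) * gg (m-j) j

lemma PP_succ (n : ℕ) : PP (n+1) = PP n * (1 + xx * X^(n+1)) := prod_range_succ _ _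

lemma gg_one_step (a : ℕ) : gg (a+1) 1 = gg a 1 + X^a := by
  have h := gg_succ a 0
  simpa using h

lemma AA_zero (M : ℕ) : AA M 0 = 1 + xx * X := by
  simp [AA, PP, ww_zero]

lemma AA_vanish (M n : ℕ) (h1 : M ≤ n) (h2 : 1 ≤ n) : AA M n = 0 := by
  obtain ⟨k, rfl⟩ : ∃ k, n = k+1 := ⟨n-1, by omega⟩
  rw [AA, show M - (k+1) = 0 from by omega, show (0:ℕ) - 1 = 0 from rfl,
    gg_zero_left]
  ring

lemma certC2 (m : ℕ) :
    AA (m+3) 1 = AA (m+2) 1 + xx * X^(m+3) * AA (m+2) 0 + BP m 0 := by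
  rw [AA, AA, AA_zero (m+2), BP]
  rw [show m+3-1-1 = m+1 from by omega, show m+3-1 = m+2 from by omega,
      show m+2-1-1 = m from by omega, show m+2-1 = m+1 from by omega,
      show m-0 = m from rfl, show (0:ℕ)+1 = 1 from rfl]
  have h1 : gg (m+2) 1 = gg (m+1) 1 + X^(m+1) := gg_one_step (m+1)
  have h2 : gg (m+1) 1 = gg m 1 + X^m := gg_one_step m
  rw [h1, h2]
  rw [ww_one, gg_zero_right]
  simp only [PP, prod_range_one]
  ring

lemma certC3 (m j : ℕ) :
    AA (m+3) (j+2) = AA (m+2) (j+2) + xx * X^(m+3) * AA (m+2) (j+1)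
      + (BP m (j+1) - BP m j) := by
  have hj2 : j+1+1 = j+2 := rfl
  have hww : ww (j+2) = ww (j+1) + (3*j+5) := by
    have h : ww (j+2) = ww (j+1) + 3*(j+1) + 2 := ww_succ (j+1)
    omega
  have hPP : PP (j+2) = PP (j+1) * (1 + xx * X^(j+2)) := by
    have h := PP_succ (j+1); rwa [hj2] at h
  rw [AA, AA, AA, BP, BP, hj2]
  rcases lt_trichotomy m (2*j) with hm | hm | hm
  · -- case IV : m < 2j, everything vanishes
    rw [gg_lt (m+3-(j+2)-1) (j+2) (by omega), gg_lt (m+3-(j+2)) (j+2) (by omega),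
        gg_lt (m+2-(j+2)-1) (j+2) (by omega), gg_lt (m+2-(j+2)) (j+2) (by omega),
        gg_lt (m+2-(j+1)-1) (j+1) (by omega), gg_lt (m+2-(j+1)) (j+1) (by omega),
        gg_lt (m-(j+1)) (j+1) (by omega), gg_lt (m-j) j (by omega)]
    ring
  · -- case III : m = 2j
    subst hm
    rw [gg_lt (2*j+3-(j+2)-1) (j+2) (by omega), gg_lt (2*j+3-(j+2)) (j+2) (by omega),
        gg_lt (2*j+2-(j+2)-1) (j+2) (by omega), gg_lt (2*j+2-(j+2)) (j+2) (by omega),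
        gg_lt (2*j+2-(j+1)-1) (j+1) (by omega),
        show 2*j+2-(j+1) = j+1 from by omega, gg_diag (j+1),
        gg_lt (2*j-(j+1)) (j+1) (by omega),
        show 2*j-j = j from by omega, gg_diag j]
    rw [hww]
    ring
  · rcases Nat.lt_or_ge m (2*j+2) with hm2 | hm2
    · -- case II : m = 2j+1
      have hmeq : m = 2*j+1 := by omega
      subst hmeq
      rw [show 2*j+1+3-(j+2)-1 = j+1 from by omega,
          gg_lt (j+1) (j+2) (by omega),
          show 2*j+1+3-(j+2) = j+2 from by omega, gg_diag (j+2),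
          show 2*j+1+2-(j+2)-1 = j from by omega,
          gg_lt j (j+2) (by omega),
          gg_lt (2*j+1+2-(j+2)) (j+2) (by omega),
          show 2*j+1+2-(j+1)-1 = j+1 from by omega, gg_diag (j+1),
          show 2*j+1+2-(j+1) = j+2 from by omega,
          gg_lt (2*j+1-(j+1)) (j+1) (by omega),
          show 2*j+1-j = j+1 from by omega]
      have rC : gg (j+2) (j+1) = X^(j+1) * gg (j+1) (j+1) + gg (j+1) j := by
        have h := pascal2 (j+1) j
        rwa [hj2] at h
      rw [rC, gg_diag (j+1), hww, hPP]
      ring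
    · -- case I : 2*j+2 ≤ m, generic
      obtain ⟨k, rfl⟩ : ∃ k, m = 2*j+2+k := ⟨m-(2*j+2), by omega⟩
      rw [show 2*j+2+k+3-(j+2)-1 = j+2+k from by omega,
          show 2*j+2+k+3-(j+2) = j+3+k from by omega,
          show 2*j+2+k+2-(j+2)-1 = j+1+k from by omega,
          show 2*j+2+k+2-(j+2) = j+2+k from by omega,
          show 2*j+2+k+2-(j+1)-1 = j+2+k from by omega,
          show 2*j+2+k+2-(j+1) = j+3+k from by omega,
          show 2*j+2+k-(j+1) = j+1+k from by omega,
          show 2*j+2+k-j = j+2+k from by omega]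
      have rA : gg (j+3+k) (j+2) = gg (j+2+k) (j+2) + X^(k+1) * gg (j+2+k) (j+1) := by
        have h := gg_succ (j+2+k) (j+1)
        rwa [show j+2+k+1 = j+3+k from by omega, hj2,
            show j+2+k-(j+1) = k+1 from by omega] at h
      have rB : gg (j+2+k) (j+2) = gg (j+1+k) (j+2) + X^k * gg (j+1+k) (j+1) := by
        have h := gg_succ (j+1+k) (j+1)
        rwa [show j+1+k+1 = j+2+k from by omega, hj2,
            show j+1+k-(j+1) = k from by omega] at h
      have rC : gg (j+3+k) (j+1) = X^(j+1) * gg (j+2+k) (j+1) + gg (j+2+k) j := by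
        have h := pascal2 (j+2+k) j
        rwa [show j+2+k+1 = j+3+k from by omega, hj2] at h
      rw [rA, rB, rC, hww, hPP]
      ring

lemma split2 (f : ℕ → SS) (n : ℕ) :
    ∑ i ∈ range (n+2), f i = ∑ j ∈ range n, f (j+2) + f 1 + f 0 := by
  rw [sum_range_succ' f (n+1), sum_range_succ' (fun i => f (i+1)) n]

lemma BP_top (m : ℕ) : BP m (m+2) = 0 := by
  rw [BP, show m-(m+2) = 0 from by omega, gg_lt 0 (m+2) (by omega)]
  ring

lemma key : ∀ m : ℕ, ∑ n ∈ range (m+3), AA (m+1) n = PP (m+1) := by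
  intro m
  induction m with
  | zero =>
    rw [show (0:ℕ)+3 = 3 from rfl]
    rw [sum_range_succ, sum_range_succ, sum_range_succ, sum_range_zero,
        AA_zero, AA_vanish 1 1 (by omega) (by omega), AA_vanish 1 2 (by omega) (by omega)]
    simp [PP]
  | succ m ih =>
    cases m with
    | zero =>
      show ∑ n ∈ range 4, AA 2 n = PP 2
      rw [sum_range_succ, sum_range_succ, sum_range_succ, sum_range_succ, sum_range_zero,
          AA_zero, AA_vanish 2 2 (by omega) (by omega), AA_vanish 2 3 (by omega) (by omega)]
      have h21 : AA 2 1 = xx * X^2 * PP 1 := by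
        rw [AA, show (2:ℕ)-1 = 1 from rfl, show (2:ℕ)-1-1 = 0 from rfl,
            gg_diag 1, gg_zero_left, ww_one]
        ring
      rw [h21]
      simp only [PP, prod_range_succ, prod_range_one, prod_range_zero]
      ring
    | succ m' =>
      have ih' : ∑ n ∈ range (m'+4), AA (m'+2) n = PP (m'+2) := ih
      show ∑ n ∈ range (m'+5), AA (m'+3) n = PP (m'+3)
      have e1 : ∑ n ∈ range (m'+5), AA (m'+3) n = ∑ n ∈ range (m'+4), AA (m'+3) n := by
        rw [sum_range_succ, AA_vanish (m'+3) (m'+4) (by omega) (by omega), add_zero]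
      have e2 : ∑ n ∈ range (m'+4), AA (m'+3) n
          = ∑ j ∈ range (m'+2), AA (m'+3) (j+2) + AA (m'+3) 1 + AA (m'+3) 0 :=
        split2 _ _
      have e3 : ∑ j ∈ range (m'+2), AA (m'+3) (j+2)
          = ∑ j ∈ range (m'+2), (AA (m'+2) (j+2) + xx * X^(m'+3) * AA (m'+2) (j+1))
            + (BP m' (m'+2) - BP m' 0) := by
        rw [← Finset.sum_range_sub (fun j => BP m' j) (m'+2), ← sum_add_distrib]
        exact sum_congr rfl (fun j _ => certC3 m' j)
      have e4 : ∑ j ∈ range (m'+2), (AA (m'+2) (j+2) + xx * X^(m'+3) * AA (m'+2) (j+1))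
          = ∑ j ∈ range (m'+2), AA (m'+2) (j+2)
            + xx * X^(m'+3) * ∑ j ∈ range (m'+2), AA (m'+2) (j+1) := by
        rw [sum_add_distrib, mul_sum]
      have e5 : ∑ n ∈ range (m'+4), AA (m'+2) n
          = ∑ j ∈ range (m'+2), AA (m'+2) (j+2) + AA (m'+2) 1 + AA (m'+2) 0 :=
        split2 _ _
      have e6 : ∑ n ∈ range (m'+3), AA (m'+2) n
          = ∑ j ∈ range (m'+2), AA (m'+2) (j+1) + AA (m'+2) 0 :=
        sum_range_succ' _ _
      have e7 : ∑ n ∈ range (m'+4), AA (m'+2) n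
          = ∑ n ∈ range (m'+3), AA (m'+2) n + AA (m'+2) (m'+3) := sum_range_succ _ _
      have hv : AA (m'+2) (m'+3) = 0 := AA_vanish _ _ (by omega) (by omega)
      have hPP3 : PP (m'+3) = PP (m'+2) * (1 + xx * X^(m'+3)) := PP_succ (m'+2)
      rw [e1, e2, e3, e4, BP_top m', certC2 m', AA_zero, AA_zero, hPP3]
      have hs3 : ∑ j ∈ range (m'+2), AA (m'+2) (j+1) = PP (m'+2) - (1 + xx * X) := by
        have := e6
        rw [e7, hv, add_zero] at ih'
        rw [ih'] at this
        rw [AA_zero] at this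
        linear_combination -this
      have hs2 : ∑ j ∈ range (m'+2), AA (m'+2) (j+2) = PP (m'+2) - AA (m'+2) 1 - (1 + xx * X) := by
        rw [e5, AA_zero] at ih'
        linear_combination ih'
      rw [hs3, hs2]
      ring

lemma coeff_term_eq (N n : ℕ) (hn : n < N + 1) :
    (PowerSeries.coeff (R := RatFunc ℚ) N) (AA (N+1) n)
      = (PowerSeries.coeff (R := RatFunc ℚ) N)
          (PP n * (EE n)⁻¹ * (1 + xx * X^(2*n+1)) * xx^n * X^(ww n)) := by
  rcases Nat.lt_or_ge N (ww n) with hw | hw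
  · have hd1 : (X:SS)^(N+1) ∣ AA (N+1) n := by
      rw [AA]
      exact Dvd.dvd.mul_right (Dvd.dvd.mul_right
        (Dvd.dvd.mul_left (pow_dvd_pow X (by omega)) _) _) _
    have hd2 : (X:SS)^(N+1) ∣ PP n * (EE n)⁻¹ * (1 + xx * X^(2*n+1)) * xx^n * X^(ww n) :=
      Dvd.dvd.mul_left (pow_dvd_pow X (by omega)) _
    rw [PowerSeries.X_pow_dvd_iff] at hd1 hd2
    rw [hd1 N (by omega), hd2 N (by omega)]
  · have h2n : 2*n ≤ N := by
      rcases Nat.eq_zero_or_pos n with h | h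
      · omega
      · have := ww_ge n h; omega
    have hwn : 2*n ≤ ww n + 1 := by
      rcases Nat.eq_zero_or_pos n with h | h
      · omega
      · have := ww_ge n h; omega
    have key1 : (X:SS)^(N+2-2*n) ∣ (gg (N+1-n) n - (EE n)⁻¹) := by
      have h := g_approx n (N+1-n) (by omega)
      rwa [show N+1-n-n+1 = N+2-2*n from by omega] at h
    have key2 : (X:SS)^(N+1-2*n) ∣ (gg (N+1-n-1) n - (EE n)⁻¹) := by
      have h := g_approx n (N-n) (by omega)
      rwa [show N-n-n+1 = N+1-2*n from by omega,
           show N-n = N+1-n-1 from by omega] at h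
    have hdiff : (X:SS)^(N+1) ∣
        (AA (N+1) n - PP n * (EE n)⁻¹ * (1 + xx * X^(2*n+1)) * xx^n * X^(ww n)) := by
      have hexp : AA (N+1) n - PP n * (EE n)⁻¹ * (1 + xx * X^(2*n+1)) * xx^n * X^(ww n)
          = (X^(ww n) * (gg (N+1-n) n - (EE n)⁻¹)) * (xx^n * PP n)
            + (X^(ww n) * X^(2*n+1) * (gg (N+1-n-1) n - (EE n)⁻¹)) * (xx^n * xx * PP n) := by
        rw [AA]; ring
      rw [hexp]
      apply dvd_add
      · apply Dvd.dvd.mul_right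
        have t1 : (X:SS)^(N+1) ∣ X^(ww n + (N+2-2*n)) := pow_dvd_pow X (by omega)
        exact t1.trans (by rw [pow_add]; exact mul_dvd_mul_left _ key1)
      · apply Dvd.dvd.mul_right
        have t2 : (X:SS)^(N+1) ∣ X^(ww n + (2*n+1) + (N+1-2*n)) := pow_dvd_pow X (by omega)
        exact t2.trans (by rw [pow_add, pow_add]; exact mul_dvd_mul_left _ key2)
    have hc := (PowerSeries.X_pow_dvd_iff.mp hdiff) N (by omega)
    rw [map_sub] at hc
    exact sub_eq_zero.mp hc

theorem stmt10 : ∀ N : ℕ,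
    (PowerSeries.coeff (R := RatFunc ℚ) N)
        (∏ m ∈ Finset.range (N + 1),
          (1 + PowerSeries.C (R := RatFunc ℚ) RatFunc.X * X ^ (m + 1))) =
      (PowerSeries.coeff (R := RatFunc ℚ) N)
        (∑ n ∈ Finset.range (N + 1),
          (∏ i ∈ Finset.range n, (1 + PowerSeries.C (R := RatFunc ℚ) RatFunc.X * X ^ (i + 1))) *
            (∏ i ∈ Finset.range n, (1 - (X : (RatFunc ℚ)⟦X⟧) ^ (i + 1)))⁻¹ *
            (1 + PowerSeries.C (R := RatFunc ℚ) RatFunc.X * X ^ (2 * n + 1)) *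
            (PowerSeries.C (R := RatFunc ℚ) RatFunc.X) ^ n * X ^ (n * (3 * n + 1) / 2)) := by
  intro N
  have hL : (∏ m ∈ Finset.range (N + 1),
      ((1 : SS) + PowerSeries.C (R := RatFunc ℚ) RatFunc.X * X ^ (m + 1))) = PP (N+1) := rfl
  rw [hL, ← key N]
  rw [sum_range_succ, sum_range_succ,
      AA_vanish (N+1) (N+2) (by omega) (by omega),
      AA_vanish (N+1) (N+1) (by omega) (by omega), add_zero, add_zero]
  rw [map_sum, map_sum]
  apply sum_congr rfl
  intro n hn
  rw [mem_range] at hn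
  exact coeff_term_eq N n hn

end Sylv
end

section
/- The coefficient of qⁿ in (1−q)·∏_{m≥3}(1+q^m) is nonnegative for every n ≥ 2; equivalently, d_3(n) − d_3(n−1) ≥ 0 for n ≥ 2. -/
open Finset PowerSeries

/-- The finset version: finsets of naturals, all elements at least 3, summing to `k`. -/
def D3set (k : ℕ) : Finset (Finset ℕ) :=
  (Finset.range (k+1)).powerset.filter fun S => (∀ i ∈ S, 3 ≤ i) ∧ S.sum id = k

lemma d3_eq_s12 (k : ℕ) : d3 k = (D3set k).card := by
  apply Finset.card_bij (fun p hp => (⟨p.parts, (Finset.mem_filter.1 hp).2.1⟩ : Finset ℕ))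
  · intro p hp
    obtain ⟨-, hnd, h3⟩ := Finset.mem_filter.1 hp
    simp only [D3set, Finset.mem_filter, Finset.mem_powerset]
    refine ⟨?_, h3, ?_⟩
    · intro a ha
      simp only [Finset.mem_mk] at ha ⊢
      have := Multiset.single_le_sum (fun x _ => Nat.zero_le x) a ha
      rw [p.parts_sum] at this
      simpa [Finset.mem_range] using Nat.lt_succ_of_le this
    · show Multiset.sum (Multiset.map id p.parts) = k
      rw [Multiset.map_id, p.parts_sum]
  · intro p1 h1 p2 h2 h
    ext1
    exact congrArg Finset.val h
  · intro S hS
    simp only [D3set, Finset.mem_filter, Finset.mem_powerset] at hS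
    obtain ⟨hsub, h3, hsum⟩ := hS
    have hsum' : S.1.sum = k := by
      rw [← hsum]; show _ = Multiset.sum (Multiset.map id S.1); rw [Multiset.map_id]
    refine ⟨⟨S.1, fun hi => lt_of_lt_of_le (by norm_num) (h3 _ hi), hsum'⟩, ?_, ?_⟩
    · simp only [Finset.mem_filter, Finset.mem_univ, true_and]
      exact ⟨S.2, h3⟩
    · rfl

lemma subsets_card_eq (k n : ℕ) (hk : k ≤ n) :
    (((Finset.range (n+1)).powerset).filter fun t => ∑ m ∈ t, (m+3) = k).card
      = (D3set k).card := by
  apply Finset.card_bij (fun t _ => t.image (· + 3))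
  · intro t ht
    simp only [Finset.mem_filter, Finset.mem_powerset] at ht
    obtain ⟨hsub, hsum⟩ := ht
    have hsum' : (t.image (· + 3)).sum id = k := by
      rw [Finset.sum_image (by intro x _ y _ h; simp only [] at h; omega)]
      simpa using hsum
    simp only [D3set, Finset.mem_filter, Finset.mem_powerset]
    refine ⟨?_, ?_, hsum'⟩
    · intro a ha
      have : a ≤ (t.image (· + 3)).sum id :=
        Finset.single_le_sum (f := id) (fun x _ => Nat.zero_le x) ha
      rw [hsum'] at this
      simpa [Finset.mem_range] using Nat.lt_succ_of_le this
    · intro a ha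
      simp only [Finset.mem_image] at ha
      obtain ⟨x, -, rfl⟩ := ha
      omega
  · intro t1 h1 t2 h2 h
    exact Finset.image_injective (fun x y h => by omega) h
  · intro S hS
    simp only [D3set, Finset.mem_filter, Finset.mem_powerset] at hS
    obtain ⟨hsub, h3, hsum⟩ := hS
    refine ⟨S.image (· - 3), ?_, ?_⟩
    · simp only [Finset.mem_filter, Finset.mem_powerset]
      constructor
      · intro a ha
        simp only [Finset.mem_image] at ha
        obtain ⟨x, hx, rfl⟩ := ha
        have hx1 : x ≤ S.sum id := Finset.single_le_sum (f := id) (fun y _ => Nat.zero_le y) hx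
        rw [hsum] at hx1
        simp only [Finset.mem_range]
        omega
      · rw [Finset.sum_image (by intro x hx y hy h; have := h3 x hx; have := h3 y hy; simp only [] at h; omega)]
        rw [← hsum]
        apply Finset.sum_congr rfl
        intro x hx; have := h3 x hx; simp; omega
    · rw [Finset.image_image]
      calc S.image (fun x => x - 3 + 3) = S.image id := by
            apply Finset.image_congr
            intro x hx
            have := h3 x (by simpa using hx)
            simp; omega
        _ = S := Finset.image_id

lemma coeff_eq (k n : ℕ) (hk : k ≤ n) :
    (PowerSeries.coeff (R := ℤ) k) (∏ m ∈ Finset.range (n + 1), (1 + (X : ℤ⟦X⟧) ^ (m + 3)))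
      = (d3 k : ℤ) := by
  have h1 : ∀ m ∈ Finset.range (n+1), (1 + (X : ℤ⟦X⟧) ^ (m + 3)) = (X ^ (m+3) + 1) := by
    intro m _; ring
  rw [Finset.prod_congr rfl h1, Finset.prod_add]
  have h2 : ∀ t ∈ (Finset.range (n+1)).powerset,
      (∏ m ∈ t, (X : ℤ⟦X⟧) ^ (m+3)) * ∏ m ∈ Finset.range (n+1) \ t, (1 : ℤ⟦X⟧)
        = X ^ (∑ m ∈ t, (m+3)) := by
    intro t _; rw [Finset.prod_pow_eq_pow_sum]; simp
  rw [Finset.sum_congr rfl h2, map_sum]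
  simp only [PowerSeries.coeff_X_pow]
  have h3 : ∀ t ∈ (Finset.range (n+1)).powerset,
      (if k = ∑ m ∈ t, (m+3) then (1:ℤ) else 0) = if ∑ m ∈ t, (m+3) = k then 1 else 0 := by
    intro t _; simp [eq_comm]
  rw [Finset.sum_congr rfl h3, Finset.sum_boole, subsets_card_eq k n hk, d3_eq_s12]

lemma D3_mono (k : ℕ) (hk : 2 ≤ k) : (D3set (k-1)).card ≤ (D3set k).card := by
  classical
  apply Finset.card_le_card_of_injOn
    (fun S => if h : S.Nonempty then insert (S.max' h + 1) (S.erase (S.max' h)) else ∅)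
  · intro S hS
    simp only [D3set, Finset.mem_coe, Finset.mem_filter, Finset.mem_powerset] at hS
    obtain ⟨hsub, h3, hsum⟩ := hS
    have hne : S.Nonempty := by
      rcases S.eq_empty_or_nonempty with h | h
      · exfalso; rw [h] at hsum; simp at hsum; omega
      · exact h
    simp only [dif_pos hne]
    set M := S.max' hne with hM
    have hMmem : M ∈ S := S.max'_mem hne
    have hnotmem : M + 1 ∉ S.erase M := by
      intro h
      have := S.le_max' _ (Finset.mem_of_mem_erase h)
      omega
    have hsum2 : (insert (M+1) (S.erase M)).sum id = k := by
      rw [Finset.sum_insert hnotmem]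
      have h4 := Finset.add_sum_erase S id hMmem
      simp only [id_eq] at h4 hsum ⊢
      omega
    simp only [D3set, Finset.mem_coe, Finset.mem_filter, Finset.mem_powerset]
    refine ⟨?_, ?_, hsum2⟩
    · intro a ha
      have : a ≤ (insert (M+1) (S.erase M)).sum id :=
        Finset.single_le_sum (f := id) (fun x _ => Nat.zero_le x) ha
      rw [hsum2] at this
      simp only [Finset.mem_range]; omega
    · intro a ha
      rcases Finset.mem_insert.1 ha with rfl | h
      · have := h3 M hMmem; omega
      · exact h3 a (Finset.mem_of_mem_erase h)
  · intro S1 hS1 S2 hS2 heq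
    simp only [D3set, Finset.coe_filter, Set.mem_setOf_eq, Finset.mem_powerset] at hS1 hS2
    obtain ⟨hsub1, h31, hsum1⟩ := hS1
    obtain ⟨hsub2, h32, hsum2⟩ := hS2
    have hne1 : S1.Nonempty := by
      rcases S1.eq_empty_or_nonempty with h | h
      · exfalso; rw [h] at hsum1; simp at hsum1; omega
      · exact h
    have hne2 : S2.Nonempty := by
      rcases S2.eq_empty_or_nonempty with h | h
      · exfalso; rw [h] at hsum2; simp at hsum2; omega
      · exact h
    simp only [dif_pos hne1, dif_pos hne2] at heq
    set M1 := S1.max' hne1 with hM1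
    set M2 := S2.max' hne2 with hM2
    have key : ∀ (S : Finset ℕ) (hne : S.Nonempty),
        ∀ x ∈ insert (S.max' hne + 1) (S.erase (S.max' hne)), x ≤ S.max' hne + 1 := by
      intro S hne x hx
      rcases Finset.mem_insert.1 hx with rfl | h
      · exact le_refl _
      · have := S.le_max' x (Finset.mem_of_mem_erase h); omega
    have hMeq : M1 = M2 := by
      have h1 : M1 + 1 ≤ M2 + 1 := by
        have : M1 + 1 ∈ insert (M2 + 1) (S2.erase M2) := by
          rw [← heq]; exact Finset.mem_insert_self _ _
        exact key S2 hne2 _ this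
      have h2 : M2 + 1 ≤ M1 + 1 := by
        have : M2 + 1 ∈ insert (M1 + 1) (S1.erase M1) := by
          rw [heq]; exact Finset.mem_insert_self _ _
        exact key S1 hne1 _ this
      omega
    have hnm1 : M1 + 1 ∉ S1.erase M1 := by
      intro h; have := S1.le_max' _ (Finset.mem_of_mem_erase h); omega
    have hnm2 : M2 + 1 ∉ S2.erase M2 := by
      intro h; have := S2.le_max' _ (Finset.mem_of_mem_erase h); omega
    have herase : S1.erase M1 = S2.erase M2 :=
      calc S1.erase M1 = (insert (M1+1) (S1.erase M1)).erase (M1+1) :=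
            (Finset.erase_insert hnm1).symm
        _ = (insert (M2+1) (S2.erase M2)).erase (M2+1) := by rw [heq, hMeq]
        _ = S2.erase M2 := Finset.erase_insert hnm2
    calc S1 = insert M1 (S1.erase M1) := (Finset.insert_erase (S1.max'_mem hne1)).symm
      _ = insert M2 (S2.erase M2) := by rw [herase, hMeq]
      _ = S2 := Finset.insert_erase (S2.max'_mem hne2)

theorem stmt12 : ∀ n : ℕ, 2 ≤ n →
    (0 ≤ (PowerSeries.coeff (R := ℤ) n)
        ((1 - X) * ∏ m ∈ Finset.range (n + 1), (1 + (X : ℤ⟦X⟧) ^ (m + 3)))) ∧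
      d3 (n - 1) ≤ d3 n := by
  intro n hn
  have hd : d3 (n-1) ≤ d3 n := by
    rw [d3_eq_s12, d3_eq_s12]; exact D3_mono n hn
  refine ⟨?_, hd⟩
  set P := ∏ m ∈ Finset.range (n + 1), (1 + (X : ℤ⟦X⟧) ^ (m + 3)) with hP
  have h1 : (1 - (X : ℤ⟦X⟧)) * P = P - X * P := by ring
  have hn1 : n = (n - 1) + 1 := by omega
  have h2 : (PowerSeries.coeff (R := ℤ) n) (X * P) = (PowerSeries.coeff (R := ℤ) (n-1)) P := by
    rw [hn1]
    have := PowerSeries.coeff_X_pow_mul P 1 (n-1)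
    simpa using this
  rw [h1, map_sub, h2, coeff_eq n n le_rfl, coeff_eq (n-1) n (by omega)]
  have : (d3 (n-1) : ℤ) ≤ (d3 n : ℤ) := by exact_mod_cast hd
  omega
end
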